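/- arXiv:2602.06658 — 8 statements merged into one kernel-verified Lean document; each statement's English description precedes it below -/
import Mathlib

section
/- Let X and Y be compact Hausdorff topological spaces, let c_X : X × X → ℝ and c_Y : Y × Y → ℝ be continuous symmetric functions vanishing on the diagonal (c_X(x,x) = 0, c_Y(y,y) = 0) and definite (c_X(x,x') = 0 implies x = x', and c_Y(y,y') = 0 implies y = y'), and let α, β be Borel probability measures on X and Y. Then there exists a coupling π ∈ Π(α,β) with ∫∫ (c_X(x,x') − c_Y(y,y'))² dπ(x,y) dπ(x',y') = 0 if and only if there exists a measurable map I : X → Y such that the pushforward of α by I equals β and c_X(x,x') = c_Y(I(x), I(x')) for all x, x' in the support of α. -/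
open MeasureTheory Set

/-- The support of a measure: points all of whose neighborhoods have positive measure. -/
def measSupport {X : Type*} [TopologicalSpace X] [MeasurableSpace X] (α : Measure X) : Set X :=
  {x | ∀ U ∈ nhds x, α U ≠ 0}

section Aux

variable {Z : Type*} [TopologicalSpace Z]

lemma metrizable_of_cost [CompactSpace Z] [T2Space Z] (c : Z → Z → ℝ)
    (hc : Continuous fun p : Z × Z => c p.1 p.2)
    (hdiag : ∀ z, c z z = 0) (hdef : ∀ z z', c z z' = 0 → z = z') :
    TopologicalSpace.MetrizableSpace Z := by
  let F : C(Z × Z, ℝ) := ⟨_, hc⟩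
  let G : C(Z, C(Z, ℝ)) := F.curry
  have hinj : Function.Injective G := by
    intro z z' h
    have h1 : c z z' = c z' z' := by
      have h2 : (G z) z' = (G z') z' := by rw [h]
      simpa [G, F] using h2
    rw [hdiag] at h1
    exact hdef _ _ h1
  exact (G.continuous.isClosedEmbedding hinj).toIsEmbedding.metrizableSpace

lemma isClosed_measSupport [MeasurableSpace Z] (μ : Measure Z) :
    IsClosed (measSupport μ) := by
  rw [← isOpen_compl_iff, isOpen_iff_mem_nhds]
  intro x hx
  simp only [measSupport, mem_compl_iff, mem_setOf_eq, not_forall] at hx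
  obtain ⟨U, hU, hU0⟩ := hx
  obtain ⟨V, hVU, hVopen, hxV⟩ := mem_nhds_iff.mp hU
  refine Filter.mem_of_superset (hVopen.mem_nhds hxV) ?_
  intro z hz hz'
  exact hz' V (hVopen.mem_nhds hz) (measure_mono_null hVU (not_not.mp hU0))

lemma measSupport_compl_null [MeasurableSpace Z] [SecondCountableTopology Z]
    (μ : Measure Z) : μ (measSupport μ)ᶜ = 0 := by
  set T : Set (Set Z) := {U | IsOpen U ∧ μ U = 0} with hT
  obtain ⟨T', hT'c, hT'T, hTU⟩ :=
    TopologicalSpace.isOpen_sUnion_countable T (fun U hU => hU.1)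
  have h0 : μ (⋃₀ T) = 0 := by
    rw [← hTU]
    exact (measure_sUnion_null_iff hT'c).2 fun U hU => (hT'T hU).2
  refine measure_mono_null ?_ h0
  intro x hx
  simp only [measSupport, mem_compl_iff, mem_setOf_eq, not_forall] at hx
  obtain ⟨U, hU, hU0⟩ := hx
  obtain ⟨V, hVU, hVopen, hxV⟩ := mem_nhds_iff.mp hU
  exact ⟨V, ⟨hVopen, measure_mono_null hVU (not_not.mp hU0)⟩, hxV⟩

lemma measSupport_subset_of_null [MeasurableSpace Z] {μ : Measure Z} {C : Set Z}
    (hC : IsClosed C) (h0 : μ Cᶜ = 0) : measSupport μ ⊆ C := by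
  intro x hx
  by_contra hxC
  exact hx Cᶜ (hC.isOpen_compl.mem_nhds hxC) h0

lemma mem_measSupport_prod {A B : Type*} [TopologicalSpace A] [TopologicalSpace B]
    [MeasurableSpace A] [MeasurableSpace B]
    {μ : Measure A} {ν : Measure B} [SFinite μ] [SFinite ν] {a : A} {b : B}
    (ha : a ∈ measSupport μ) (hb : b ∈ measSupport ν) :
    (a, b) ∈ measSupport (μ.prod ν) := by
  intro U hU
  obtain ⟨U', hU'U, hU'open, hmem⟩ := mem_nhds_iff.mp hU
  obtain ⟨V, W, hV, hW, haV, hbW, hVW⟩ := isOpen_prod_iff.mp hU'open a b hmem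
  intro h0
  have hVW0 : μ.prod ν (V ×ˢ W) = 0 :=
    measure_mono_null (hVW.trans hU'U) h0
  rw [Measure.prod_prod] at hVW0
  rcases mul_eq_zero.mp hVW0 with h | h
  · exact ha V (hV.mem_nhds haV) h
  · exact hb W (hW.mem_nhds hbW) h

end Aux
/-- GW distance zero (existence of a coupling with zero quadratic loss)
is equivalent to the existence of a measure-preserving map matching the costs on supports. -/
theorem gw_isometry
    {X Y : Type*} [TopologicalSpace X] [TopologicalSpace Y]
    [CompactSpace X] [CompactSpace Y] [T2Space X] [T2Space Y]
    [MeasurableSpace X] [BorelSpace X] [MeasurableSpace Y] [BorelSpace Y]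
    (cX : X → X → ℝ) (cY : Y → Y → ℝ)
    (hcX : Continuous fun p : X × X => cX p.1 p.2)
    (hcY : Continuous fun p : Y × Y => cY p.1 p.2)
    (hXsymm : ∀ x x', cX x x' = cX x' x) (hYsymm : ∀ y y', cY y y' = cY y' y)
    (hXdiag : ∀ x, cX x x = 0) (hYdiag : ∀ y, cY y y = 0)
    (hXdef : ∀ x x', cX x x' = 0 → x = x') (hYdef : ∀ y y', cY y y' = 0 → y = y')
    (α : Measure X) (β : Measure Y) [IsProbabilityMeasure α] [IsProbabilityMeasure β] :
    (∃ π : Measure (X × Y), π.map Prod.fst = α ∧ π.map Prod.snd = β ∧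
        ∫ p, ∫ q, (cX p.1 q.1 - cY p.2 q.2) ^ 2 ∂π ∂π = 0) ↔
      (∃ I : X → Y, Measurable I ∧ α.map I = β ∧
        ∀ x ∈ measSupport α, ∀ x' ∈ measSupport α, cX x x' = cY (I x) (I x')) := by
  classical
  haveI hMX : TopologicalSpace.MetrizableSpace X := metrizable_of_cost cX hcX hXdiag hXdef
  haveI hMY : TopologicalSpace.MetrizableSpace Y := metrizable_of_cost cY hcY hYdiag hYdef
  haveI : SecondCountableTopology X := inferInstance
  haveI : SecondCountableTopology Y := inferInstance
  have hNY : Nonempty Y := by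
    by_contra h
    rw [not_nonempty_iff] at h
    have h1 : β univ = 1 := measure_univ
    rw [univ_eq_empty_iff.mpr h] at h1
    simp at h1
  obtain ⟨y₀⟩ := hNY
  constructor
  · rintro ⟨π, hfst, hsnd, hint⟩
    haveI : IsProbabilityMeasure π := by
      constructor
      have h2 := congrArg (fun μ : Measure X => μ univ) hfst
      rw [Measure.map_apply measurable_fst MeasurableSet.univ, preimage_univ] at h2
      rw [h2]; exact measure_univ
    set f : (X × Y) → (X × Y) → ℝ := fun p q => (cX p.1 q.1 - cY p.2 q.2) ^ 2 with hf
    have hfc : Continuous (Function.uncurry f) := by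
      apply Continuous.pow
      exact (hcX.comp (continuous_fst.fst.prodMk continuous_snd.fst)).sub
        (hcY.comp (continuous_fst.snd.prodMk continuous_snd.snd))
    have hInt : Integrable (Function.uncurry f) (π.prod π) :=
      hfc.integrable_of_hasCompactSupport (HasCompactSupport.of_compactSpace _)
    have hprod : ∫ z, Function.uncurry f z ∂(π.prod π) = 0 := by
      rw [show (fun z : (X × Y) × (X × Y) => Function.uncurry f z) =
        (fun z : (X × Y) × (X × Y) => f z.1 z.2) from rfl,
        ← MeasureTheory.integral_integral hInt]
      exact hint
    have hae : ∀ᵐ z ∂(π.prod π), Function.uncurry f z = 0 :=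
      (integral_eq_zero_iff_of_nonneg (fun z => sq_nonneg _) hInt).1 hprod
    have hN : (π.prod π) {z : (X × Y) × (X × Y) | Function.uncurry f z ≠ 0} = 0 := by
      rw [ae_iff] at hae
      exact hae
    have key : ∀ p ∈ measSupport π, ∀ q ∈ measSupport π, cX p.1 q.1 = cY p.2 q.2 := by
      intro p hp q hq
      have hmem := mem_measSupport_prod hp hq
      by_contra hne
      have hopen : IsOpen {z : (X × Y) × (X × Y) | Function.uncurry f z ≠ 0} :=
        (isClosed_singleton.isOpen_compl).preimage hfc
      refine hmem _ (hopen.mem_nhds ?_) hN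
      simp only [mem_setOf_eq, Function.uncurry, hf]
      intro h
      exact hne (sub_eq_zero.mp ((pow_eq_zero_iff (two_ne_zero)).mp h))
    set S := measSupport π with hS
    have hSclosed : IsClosed S := isClosed_measSupport π
    have hScompl : π Sᶜ = 0 := measSupport_compl_null π
    have huniq : ∀ {x : X} {y y' : Y}, (x, y) ∈ S → (x, y') ∈ S → y = y' := by
      intro x y y' h1 h2
      have h3 := key _ h1 _ h2
      rw [hXdiag] at h3
      exact hYdef _ _ h3.symm
    set D := Prod.fst '' S with hD
    have hDmem : ∀ x : X, x ∈ D ↔ ∃ y, (x, y) ∈ S := by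
      intro x; constructor
      · rintro ⟨p, hp, rfl⟩; exact ⟨p.2, hp⟩
      · rintro ⟨y, hy⟩; exact ⟨(x, y), hy, rfl⟩
    have hScompact : IsCompact S := hSclosed.isCompact
    have hDclosed : IsClosed D := (hScompact.image continuous_fst).isClosed
    have hTD : measSupport α ⊆ D := by
      apply measSupport_subset_of_null hDclosed
      rw [← hfst, Measure.map_apply measurable_fst hDclosed.measurableSet.compl]
      refine measure_mono_null ?_ hScompl
      intro p hp hpS
      exact hp ⟨p, hpS, rfl⟩
    set I : X → Y := fun x => if h : ∃ y, (x, y) ∈ S then h.choose else y₀ with hIdef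
    have hI1 : ∀ x ∈ D, (x, I x) ∈ S := by
      intro x hx
      obtain ⟨y, hy⟩ := (hDmem x).mp hx
      have hex : ∃ y, (x, y) ∈ S := ⟨y, hy⟩
      rw [hIdef]
      simp only [dif_pos hex]
      exact hex.choose_spec
    have hI2 : ∀ {x y}, (x, y) ∈ S → I x = y := by
      intro x y hxy
      exact huniq (hI1 x ((hDmem x).mpr ⟨y, hxy⟩)) hxy
    have hImeas : Measurable I := by
      apply measurable_of_isClosed
      intro C hC
      have heq : I ⁻¹' C =
          (Prod.fst '' (S ∩ (univ ×ˢ C))) ∪ (Dᶜ ∩ (if y₀ ∈ C then univ else ∅)) := by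
        ext x
        constructor
        · intro hx
          by_cases hxD : x ∈ D
          · exact Or.inl ⟨(x, I x), ⟨hI1 x hxD, mem_univ _, hx⟩, rfl⟩
          · right
            have hxy0 : I x = y₀ := by
              rw [hIdef]
              simp only [dif_neg (fun h => hxD ((hDmem x).mpr h))]
            refine ⟨hxD, ?_⟩
            rw [if_pos (hxy0 ▸ hx)]
            exact mem_univ _
        · rintro (⟨p, ⟨hpS, _, hpC⟩, rfl⟩ | ⟨hxD, hx⟩)
          · have hIp : I p.1 = p.2 := hI2 hpS
            rw [mem_preimage, hIp]; exact hpC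
          · split_ifs at hx with h
            · have hxy0 : I x = y₀ := by
                rw [hIdef]
                simp only [dif_neg (fun hh => hxD ((hDmem x).mpr hh))]
            
              rw [mem_preimage, hxy0]; exact h
            · exact absurd hx (notMem_empty x)
      rw [heq]
      refine MeasurableSet.union ?_ ?_
      · exact (((hScompact.inter_right (isClosed_univ.prod hC)).image
          continuous_fst).isClosed).measurableSet
      · refine (hDclosed.measurableSet.compl).inter ?_
        split_ifs
        · exact MeasurableSet.univ
        · exact MeasurableSet.empty
    have haeS : ∀ᵐ p ∂π, p ∈ S := by
      rw [ae_iff]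
      exact hScompl
    refine ⟨I, hImeas, ?_, ?_⟩
    · have h1 : π.map (I ∘ Prod.fst) = π.map (fun p : X × Y => p.2) := by
        apply Measure.map_congr
        filter_upwards [haeS] with p hp
        exact hI2 hp
      calc α.map I = (π.map Prod.fst).map I := by rw [hfst]
        _ = π.map (I ∘ Prod.fst) := Measure.map_map hImeas measurable_fst
        _ = π.map (fun p : X × Y => p.2) := h1
        _ = β := hsnd
    · intro x hx x' hx'
      exact key _ (hI1 x (hTD hx)) _ (hI1 x' (hTD hx'))
  · rintro ⟨I, hIm, hImap, hIc⟩
    set π : Measure (X × Y) := α.map (fun x => (x, I x)) with hπ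
    have hm : Measurable (fun x : X => (x, I x)) := measurable_id.prodMk hIm
    have hTnull : α (measSupport α)ᶜ = 0 := measSupport_compl_null α
    refine ⟨π, ?_, ?_, ?_⟩
    · rw [hπ, Measure.map_map measurable_fst hm]
      have : (Prod.fst ∘ fun x : X => (x, I x)) = id := rfl
      rw [this, Measure.map_id]
    · rw [hπ, Measure.map_map measurable_snd hm]
      have : (Prod.snd ∘ fun x : X => (x, I x)) = I := rfl
      rw [this]
      exact hImap
    · have hGmeas : MeasurableSet {p : X × Y | p.1 ∈ measSupport α ∧ p.2 = I p.1} := by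
        refine MeasurableSet.inter ?_ ?_
        · exact measurable_fst (isClosed_measSupport α).measurableSet
        · exact MeasureTheory.StronglyMeasurable.measurableSet_eq_fun
            measurable_snd.stronglyMeasurable
            ((hIm.comp measurable_fst)).stronglyMeasurable
      have hG : ∀ᵐ p ∂π, p.1 ∈ measSupport α ∧ p.2 = I p.1 := by
        rw [ae_iff,
          show {a : X × Y | ¬(a.1 ∈ measSupport α ∧ a.2 = I a.1)} =
            {p : X × Y | p.1 ∈ measSupport α ∧ p.2 = I p.1}ᶜ from rfl,
          Measure.map_apply hm hGmeas.compl]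
        refine measure_mono_null ?_ hTnull
        intro x hx
        simp only [mem_preimage, mem_compl_iff, mem_setOf_eq, not_and] at hx ⊢
        intro hxT
        exact hx hxT trivial
      have hinner : ∀ᵐ p ∂π, (∫ q, (cX p.1 q.1 - cY p.2 q.2) ^ 2 ∂π) = 0 := by
        filter_upwards [hG] with p hp
        have hz : ∀ᵐ q ∂π, (cX p.1 q.1 - cY p.2 q.2) ^ 2 = 0 := by
          filter_upwards [hG] with q hq
          rw [hp.2, hq.2, ← hIc p.1 hp.1 q.1 hq.1, sub_self]
          simp
        rw [integral_congr_ae hz, integral_zero]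
      rw [integral_congr_ae hinner, integral_zero]
end

section
/- Let H_X and H_Y be separable real Hilbert spaces, and let α and β be compactly supported Borel probability measures on H_X and H_Y that are centered, i.e. the Bochner integrals ∫ x dα(x) and ∫ y dβ(y) vanish. Then for every coupling π ∈ Π(α,β), the Gromov–Wasserstein loss satisfies L(π) = C(α,β) − 8 · ∫∫ ⟨x,x'⟩⟨y,y'⟩ dπ(x,y) dπ(x',y') − 4 · ∫ ‖x‖²‖y‖² dπ(x,y). -/
open MeasureTheory

private lemma int_of_bound {Z : Type*} {E : Type*} [MeasurableSpace Z] [NormedAddCommGroup E]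
    {μ : Measure Z} [IsFiniteMeasure μ] {f : Z → E} (hf : AEStronglyMeasurable f μ) (C : ℝ)
    (h : ∀ᵐ z ∂μ, ‖f z‖ ≤ C) : Integrable f μ :=
  (integrable_const C).mono' hf h

set_option maxHeartbeats 2000000 in
/-- decomposition of the Gromov–Wasserstein loss with squared-norm costs
for centered compactly supported probability measures on separable Hilbert spaces. -/
theorem gw_loss_decomposition
    {HX HY : Type*}
    [NormedAddCommGroup HX] [InnerProductSpace ℝ HX] [CompleteSpace HX]
    [SecondCountableTopology HX] [MeasurableSpace HX] [BorelSpace HX]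
    [NormedAddCommGroup HY] [InnerProductSpace ℝ HY] [CompleteSpace HY]
    [SecondCountableTopology HY] [MeasurableSpace HY] [BorelSpace HY]
    (α : Measure HX) (β : Measure HY)
    [IsProbabilityMeasure α] [IsProbabilityMeasure β]
    (KX : Set HX) (KY : Set HY) (hKX : IsCompact KX) (hKY : IsCompact KY)
    (hαK : α KXᶜ = 0) (hβK : β KYᶜ = 0)
    (hαcentered : ∫ x, x ∂α = 0) (hβcentered : ∫ y, y ∂β = 0)
    (π : Measure (HX × HY))
    (hπ1 : π.map Prod.fst = α) (hπ2 : π.map Prod.snd = β) :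
    ∫ p, ∫ q, (‖p.1 - q.1‖ ^ 2 - ‖p.2 - q.2‖ ^ 2) ^ 2 ∂π ∂π =
      ((∫ x, ∫ x', ‖x - x'‖ ^ 4 ∂α ∂α) + (∫ y, ∫ y', ‖y - y'‖ ^ 4 ∂β ∂β)
          - 4 * (∫ x, ‖x‖ ^ 2 ∂α) * (∫ y, ‖y‖ ^ 2 ∂β))
        - 8 * (∫ p, ∫ q, (inner ℝ p.1 q.1 : ℝ) * (inner ℝ p.2 q.2 : ℝ) ∂π ∂π)
        - 4 * ∫ p, ‖p.1‖ ^ 2 * ‖p.2‖ ^ 2 ∂π := by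
  -- π is a probability measure
  haveI hπprob : IsProbabilityMeasure π := by
    constructor
    have h : π Set.univ = α Set.univ := by
      rw [← hπ1, Measure.map_apply measurable_fst MeasurableSet.univ, Set.preimage_univ]
    rw [h]; exact measure_univ
  have hKXm : MeasurableSet KX := hKX.isClosed.measurableSet
  have hKYm : MeasurableSet KY := hKY.isClosed.measurableSet
  -- a.e. membership in the compact sets
  have hαae : ∀ᵐ x ∂α, x ∈ KX := by
    rw [ae_iff]
    simpa [Set.compl_def] using hαK
  have hβae : ∀ᵐ y ∂β, y ∈ KY := by
    rw [ae_iff]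
    simpa [Set.compl_def] using hβK
  have hπae : ∀ᵐ p ∂π, p.1 ∈ KX ∧ p.2 ∈ KY := by
    have h1 : π (Prod.fst ⁻¹' KXᶜ) = 0 := by
      rw [← Measure.map_apply measurable_fst hKXm.compl, hπ1]; exact hαK
    have h2 : π (Prod.snd ⁻¹' KYᶜ) = 0 := by
      rw [← Measure.map_apply measurable_snd hKYm.compl, hπ2]; exact hβK
    have hA : ∀ᵐ p ∂π, p.1 ∈ KX := by
      rw [ae_iff]; exact h1
    have hB : ∀ᵐ p ∂π, p.2 ∈ KY := by
      rw [ae_iff]; exact h2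
    exact hA.and hB
  -- uniform bound on the compacts
  obtain ⟨RX, hRX⟩ := isBounded_iff_forall_norm_le.mp hKX.isBounded
  obtain ⟨RY, hRY⟩ := isBounded_iff_forall_norm_le.mp hKY.isBounded
  set R : ℝ := max (max RX RY) 0 with hRdef
  have hR0 : (0 : ℝ) ≤ R := le_max_right _ _
  have hbX : ∀ x ∈ KX, ‖x‖ ≤ R := fun x hx =>
    (hRX x hx).trans ((le_max_left RX RY).trans (le_max_left _ _))
  have hbY : ∀ y ∈ KY, ‖y‖ ≤ R := fun y hy =>
    (hRY y hy).trans ((le_max_right RX RY).trans (le_max_left _ _))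
  -- marginal transfer lemmas
  have hMx : (∫ q : HX × HY, ‖q.1‖ ^ 2 ∂π) = ∫ x, ‖x‖ ^ 2 ∂α := by
    have := integral_map (μ := π) measurable_fst.aemeasurable
      (f := fun x : HX => ‖x‖ ^ 2) (continuous_norm.pow 2).aestronglyMeasurable
    rw [hπ1] at this; exact this.symm
  have hMy : (∫ q : HX × HY, ‖q.2‖ ^ 2 ∂π) = ∫ y, ‖y‖ ^ 2 ∂β := by
    have := integral_map (μ := π) measurable_snd.aemeasurable
      (f := fun y : HY => ‖y‖ ^ 2) (continuous_norm.pow 2).aestronglyMeasurable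
    rw [hπ2] at this; exact this.symm
  have hq1 : (∫ q : HX × HY, q.1 ∂π) = 0 := by
    have := integral_map (μ := π) measurable_fst.aemeasurable
      (f := fun x : HX => x) continuous_id.aestronglyMeasurable
    rw [hπ1] at this
    rw [← this]; exact hαcentered
  have hq2 : (∫ q : HX × HY, q.2 ∂π) = 0 := by
    have := integral_map (μ := π) measurable_snd.aemeasurable
      (f := fun y : HY => y) continuous_id.aestronglyMeasurable
    rw [hπ2] at this
    rw [← this]; exact hβcentered
  have h4X : ∀ x : HX, (∫ q : HX × HY, ‖x - q.1‖ ^ 4 ∂π) = ∫ x', ‖x - x'‖ ^ 4 ∂α := by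
    intro x
    have := integral_map (μ := π) measurable_fst.aemeasurable
      (f := fun x' : HX => ‖x - x'‖ ^ 4)
      (((continuous_const.sub continuous_id).norm.pow 4).aestronglyMeasurable)
    rw [hπ1] at this; exact this.symm
  have h4Y : ∀ y : HY, (∫ q : HX × HY, ‖y - q.2‖ ^ 4 ∂π) = ∫ y', ‖y - y'‖ ^ 4 ∂β := by
    intro y
    have := integral_map (μ := π) measurable_snd.aemeasurable
      (f := fun y' : HY => ‖y - y'‖ ^ 4)
      (((continuous_const.sub continuous_id).norm.pow 4).aestronglyMeasurable)
    rw [hπ2] at this; exact this.symm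
  -- basic integrable functions over π
  have iu : Integrable (fun q : HX × HY => ‖q.1‖ ^ 2) π := by
    refine int_of_bound (continuous_fst.norm.pow 2).aestronglyMeasurable (R ^ 2) ?_
    filter_upwards [hπae] with q hq
    rw [Real.norm_eq_abs, abs_of_nonneg (by positivity)]
    exact pow_le_pow_left₀ (norm_nonneg _) (hbX _ hq.1) 2
  have iv : Integrable (fun q : HX × HY => ‖q.2‖ ^ 2) π := by
    refine int_of_bound (continuous_snd.norm.pow 2).aestronglyMeasurable (R ^ 2) ?_
    filter_upwards [hπae] with q hq
    rw [Real.norm_eq_abs, abs_of_nonneg (by positivity)]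
    exact pow_le_pow_left₀ (norm_nonneg _) (hbY _ hq.2) 2
  have iuv : Integrable (fun q : HX × HY => ‖q.1‖ ^ 2 * ‖q.2‖ ^ 2) π := by
    refine int_of_bound ((continuous_fst.norm.pow 2).mul
      (continuous_snd.norm.pow 2)).aestronglyMeasurable (R ^ 2 * R ^ 2) ?_
    filter_upwards [hπae] with q hq
    rw [Real.norm_eq_abs, abs_of_nonneg (by positivity)]
    exact mul_le_mul (pow_le_pow_left₀ (norm_nonneg _) (hbX _ hq.1) 2)
      (pow_le_pow_left₀ (norm_nonneg _) (hbY _ hq.2) 2) (by positivity) (by positivity)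
  have ifst : Integrable (fun q : HX × HY => q.1) π := by
    refine int_of_bound continuous_fst.aestronglyMeasurable R ?_
    filter_upwards [hπae] with q hq using hbX _ hq.1
  have isnd : Integrable (fun q : HX × HY => q.2) π := by
    refine int_of_bound continuous_snd.aestronglyMeasurable R ?_
    filter_upwards [hπae] with q hq using hbY _ hq.2
  have ivv : Integrable (fun q : HX × HY => ‖q.1‖ ^ 2 • q.2) π := by
    refine int_of_bound ((continuous_fst.norm.pow 2).smul
      continuous_snd).aestronglyMeasurable (R ^ 2 * R) ?_
    filter_upwards [hπae] with q hq
    rw [norm_smul, Real.norm_eq_abs, abs_of_nonneg (by positivity)]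
    exact mul_le_mul (pow_le_pow_left₀ (norm_nonneg _) (hbX _ hq.1) 2)
      (hbY _ hq.2) (norm_nonneg _) (by positivity)
  have iww : Integrable (fun q : HX × HY => ‖q.2‖ ^ 2 • q.1) π := by
    refine int_of_bound ((continuous_snd.norm.pow 2).smul
      continuous_fst).aestronglyMeasurable (R ^ 2 * R) ?_
    filter_upwards [hπae] with q hq
    rw [norm_smul, Real.norm_eq_abs, abs_of_nonneg (by positivity)]
    exact mul_le_mul (pow_le_pow_left₀ (norm_nonneg _) (hbY _ hq.2) 2)
      (hbX _ hq.1) (norm_nonneg _) (by positivity)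
  -- the inner integral identity
  have inner_eq : ∀ p : HX × HY,
      (∫ q, (‖p.1 - q.1‖ ^ 2 - ‖p.2 - q.2‖ ^ 2) ^ 2 ∂π) =
        (∫ x', ‖p.1 - x'‖ ^ 4 ∂α) + (∫ y', ‖p.2 - y'‖ ^ 4 ∂β)
        - 2 * (‖p.1‖ ^ 2 * ‖p.2‖ ^ 2
            + ‖p.1‖ ^ 2 * (∫ y, ‖y‖ ^ 2 ∂β)
            + ‖p.2‖ ^ 2 * (∫ x, ‖x‖ ^ 2 ∂α)
            + (∫ q : HX × HY, ‖q.1‖ ^ 2 * ‖q.2‖ ^ 2 ∂π)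
            - 2 * (inner ℝ (∫ q : HX × HY, ‖q.1‖ ^ 2 • q.2 ∂π) p.2 : ℝ)
            - 2 * (inner ℝ (∫ q : HX × HY, ‖q.2‖ ^ 2 • q.1 ∂π) p.1 : ℝ)
            + 4 * ∫ q, (inner ℝ p.1 q.1 : ℝ) * (inner ℝ p.2 q.2 : ℝ) ∂π) := by
    intro p
    have expand : ∀ q : HX × HY,
        (‖p.1 - q.1‖ ^ 2 - ‖p.2 - q.2‖ ^ 2) ^ 2 =
          ‖p.1 - q.1‖ ^ 4 + ‖p.2 - q.2‖ ^ 4 -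
            2 * (‖p.1‖ ^ 2 * ‖p.2‖ ^ 2 + ‖p.1‖ ^ 2 * ‖q.2‖ ^ 2
              + ‖p.2‖ ^ 2 * ‖q.1‖ ^ 2 + ‖q.1‖ ^ 2 * ‖q.2‖ ^ 2
              - 2 * (‖p.1‖ ^ 2 * (inner ℝ p.2 q.2 : ℝ))
              - 2 * (‖p.2‖ ^ 2 * (inner ℝ p.1 q.1 : ℝ))
              - 2 * (‖q.1‖ ^ 2 * (inner ℝ p.2 q.2 : ℝ))
              - 2 * ((inner ℝ p.1 q.1 : ℝ) * ‖q.2‖ ^ 2)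
              + 4 * ((inner ℝ p.1 q.1 : ℝ) * (inner ℝ p.2 q.2 : ℝ))) := by
      intro q
      have h1 := norm_sub_sq_real p.1 q.1
      have h2 := norm_sub_sq_real p.2 q.2
      calc (‖p.1 - q.1‖ ^ 2 - ‖p.2 - q.2‖ ^ 2) ^ 2
          = ‖p.1 - q.1‖ ^ 4 + ‖p.2 - q.2‖ ^ 4
            - 2 * (‖p.1 - q.1‖ ^ 2 * ‖p.2 - q.2‖ ^ 2) := by ring
        _ = _ := by rw [h1, h2]; ring
    -- integrability of all the pieces (for this fixed p)
    have hA4 : Integrable (fun q : HX × HY => ‖p.1 - q.1‖ ^ 4) π := by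
      refine int_of_bound ((continuous_const.sub
        continuous_fst).norm.pow 4).aestronglyMeasurable ((‖p.1‖ + R) ^ 4) ?_
      filter_upwards [hπae] with q hq
      rw [Real.norm_eq_abs, abs_of_nonneg (by positivity)]
      exact pow_le_pow_left₀ (norm_nonneg _)
        ((norm_sub_le _ _).trans (add_le_add le_rfl (hbX _ hq.1))) 4
    have hB4 : Integrable (fun q : HX × HY => ‖p.2 - q.2‖ ^ 4) π := by
      refine int_of_bound ((continuous_const.sub
        continuous_snd).norm.pow 4).aestronglyMeasurable ((‖p.2‖ + R) ^ 4) ?_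
      filter_upwards [hπae] with q hq
      rw [Real.norm_eq_abs, abs_of_nonneg (by positivity)]
      exact pow_le_pow_left₀ (norm_nonneg _)
        ((norm_sub_le _ _).trans (add_le_add le_rfl (hbY _ hq.2))) 4
    have is_ : Integrable (fun q : HX × HY => (inner ℝ p.1 q.1 : ℝ)) π := by
      refine int_of_bound (Continuous.aestronglyMeasurable
        (Continuous.inner continuous_const continuous_fst)) (‖p.1‖ * R) ?_
      filter_upwards [hπae] with q hq
      rw [Real.norm_eq_abs]
      exact (abs_real_inner_le_norm _ _).trans
        (mul_le_mul_of_nonneg_left (hbX _ hq.1) (norm_nonneg _))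
    have it_ : Integrable (fun q : HX × HY => (inner ℝ p.2 q.2 : ℝ)) π := by
      refine int_of_bound (Continuous.aestronglyMeasurable
        (Continuous.inner continuous_const continuous_snd)) (‖p.2‖ * R) ?_
      filter_upwards [hπae] with q hq
      rw [Real.norm_eq_abs]
      exact (abs_real_inner_le_norm _ _).trans
        (mul_le_mul_of_nonneg_left (hbY _ hq.2) (norm_nonneg _))
    have ist : Integrable (fun q : HX × HY =>
        (inner ℝ p.1 q.1 : ℝ) * (inner ℝ p.2 q.2 : ℝ)) π := by
      refine int_of_bound (Continuous.aestronglyMeasurable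
        ((Continuous.inner continuous_const continuous_fst).mul
          (Continuous.inner continuous_const continuous_snd)))
        ((‖p.1‖ * R) * (‖p.2‖ * R)) ?_
      filter_upwards [hπae] with q hq
      rw [Real.norm_eq_abs, abs_mul]
      exact mul_le_mul
        ((abs_real_inner_le_norm _ _).trans
          (mul_le_mul_of_nonneg_left (hbX _ hq.1) (norm_nonneg _)))
        ((abs_real_inner_le_norm _ _).trans
          (mul_le_mul_of_nonneg_left (hbY _ hq.2) (norm_nonneg _)))
        (abs_nonneg _) (by positivity)
    have iut : Integrable (fun q : HX × HY => ‖q.1‖ ^ 2 * (inner ℝ p.2 q.2 : ℝ)) π := by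
      refine int_of_bound (Continuous.aestronglyMeasurable
        ((continuous_fst.norm.pow 2).mul
          (Continuous.inner continuous_const continuous_snd))) (R ^ 2 * (‖p.2‖ * R)) ?_
      filter_upwards [hπae] with q hq
      rw [Real.norm_eq_abs, abs_mul, abs_of_nonneg (a := ‖q.1‖ ^ 2) (by positivity)]
      exact mul_le_mul (pow_le_pow_left₀ (norm_nonneg _) (hbX _ hq.1) 2)
        ((abs_real_inner_le_norm _ _).trans
          (mul_le_mul_of_nonneg_left (hbY _ hq.2) (norm_nonneg _)))
        (abs_nonneg _) (by positivity)
    have isv : Integrable (fun q : HX × HY => (inner ℝ p.1 q.1 : ℝ) * ‖q.2‖ ^ 2) π := by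
      refine int_of_bound (Continuous.aestronglyMeasurable
        ((Continuous.inner continuous_const continuous_fst).mul
          (continuous_snd.norm.pow 2))) ((‖p.1‖ * R) * R ^ 2) ?_
      filter_upwards [hπae] with q hq
      rw [Real.norm_eq_abs, abs_mul, abs_of_nonneg (a := ‖q.2‖ ^ 2) (by positivity)]
      exact mul_le_mul
        ((abs_real_inner_le_norm _ _).trans
          (mul_le_mul_of_nonneg_left (hbX _ hq.1) (norm_nonneg _)))
        (pow_le_pow_left₀ (norm_nonneg _) (hbY _ hq.2) 2)
        (by positivity) (by positivity)
    have it1 : Integrable (fun _ : HX × HY => ‖p.1‖ ^ 2 * ‖p.2‖ ^ 2) π := integrable_const _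
    have it2 : Integrable (fun q : HX × HY => ‖p.1‖ ^ 2 * ‖q.2‖ ^ 2) π :=
      iv.const_mul _
    have it3 : Integrable (fun q : HX × HY => ‖p.2‖ ^ 2 * ‖q.1‖ ^ 2) π :=
      iu.const_mul _
    have i2t5 : Integrable (fun q : HX × HY =>
        2 * (‖p.1‖ ^ 2 * (inner ℝ p.2 q.2 : ℝ))) π := (it_.const_mul _).const_mul 2
    have i2t6 : Integrable (fun q : HX × HY =>
        2 * (‖p.2‖ ^ 2 * (inner ℝ p.1 q.1 : ℝ))) π := (is_.const_mul _).const_mul 2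
    have i2t7 : Integrable (fun q : HX × HY =>
        2 * (‖q.1‖ ^ 2 * (inner ℝ p.2 q.2 : ℝ))) π := iut.const_mul 2
    have i2t8 : Integrable (fun q : HX × HY =>
        2 * ((inner ℝ p.1 q.1 : ℝ) * ‖q.2‖ ^ 2)) π := isv.const_mul 2
    have i4t9 : Integrable (fun q : HX × HY =>
        4 * ((inner ℝ p.1 q.1 : ℝ) * (inner ℝ p.2 q.2 : ℝ))) π := ist.const_mul 4
    have hL2 : Integrable (fun q : HX × HY =>
        ‖p.1‖ ^ 2 * ‖p.2‖ ^ 2 + ‖p.1‖ ^ 2 * ‖q.2‖ ^ 2) π := it1.add it2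
    have hL3 : Integrable (fun q : HX × HY =>
        ‖p.1‖ ^ 2 * ‖p.2‖ ^ 2 + ‖p.1‖ ^ 2 * ‖q.2‖ ^ 2 + ‖p.2‖ ^ 2 * ‖q.1‖ ^ 2) π :=
      hL2.add it3
    have hL4 : Integrable (fun q : HX × HY =>
        ‖p.1‖ ^ 2 * ‖p.2‖ ^ 2 + ‖p.1‖ ^ 2 * ‖q.2‖ ^ 2 + ‖p.2‖ ^ 2 * ‖q.1‖ ^ 2
          + ‖q.1‖ ^ 2 * ‖q.2‖ ^ 2) π := hL3.add iuv
    have hL5 : Integrable (fun q : HX × HY =>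
        ‖p.1‖ ^ 2 * ‖p.2‖ ^ 2 + ‖p.1‖ ^ 2 * ‖q.2‖ ^ 2 + ‖p.2‖ ^ 2 * ‖q.1‖ ^ 2
          + ‖q.1‖ ^ 2 * ‖q.2‖ ^ 2
          - 2 * (‖p.1‖ ^ 2 * (inner ℝ p.2 q.2 : ℝ))) π := hL4.sub i2t5
    have hL6 : Integrable (fun q : HX × HY =>
        ‖p.1‖ ^ 2 * ‖p.2‖ ^ 2 + ‖p.1‖ ^ 2 * ‖q.2‖ ^ 2 + ‖p.2‖ ^ 2 * ‖q.1‖ ^ 2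
          + ‖q.1‖ ^ 2 * ‖q.2‖ ^ 2
          - 2 * (‖p.1‖ ^ 2 * (inner ℝ p.2 q.2 : ℝ))
          - 2 * (‖p.2‖ ^ 2 * (inner ℝ p.1 q.1 : ℝ))) π := hL5.sub i2t6
    have hL7 : Integrable (fun q : HX × HY =>
        ‖p.1‖ ^ 2 * ‖p.2‖ ^ 2 + ‖p.1‖ ^ 2 * ‖q.2‖ ^ 2 + ‖p.2‖ ^ 2 * ‖q.1‖ ^ 2
          + ‖q.1‖ ^ 2 * ‖q.2‖ ^ 2
          - 2 * (‖p.1‖ ^ 2 * (inner ℝ p.2 q.2 : ℝ))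
          - 2 * (‖p.2‖ ^ 2 * (inner ℝ p.1 q.1 : ℝ))
          - 2 * (‖q.1‖ ^ 2 * (inner ℝ p.2 q.2 : ℝ))) π := hL6.sub i2t7
    have hL8 : Integrable (fun q : HX × HY =>
        ‖p.1‖ ^ 2 * ‖p.2‖ ^ 2 + ‖p.1‖ ^ 2 * ‖q.2‖ ^ 2 + ‖p.2‖ ^ 2 * ‖q.1‖ ^ 2
          + ‖q.1‖ ^ 2 * ‖q.2‖ ^ 2
          - 2 * (‖p.1‖ ^ 2 * (inner ℝ p.2 q.2 : ℝ))
          - 2 * (‖p.2‖ ^ 2 * (inner ℝ p.1 q.1 : ℝ))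
          - 2 * (‖q.1‖ ^ 2 * (inner ℝ p.2 q.2 : ℝ))
          - 2 * ((inner ℝ p.1 q.1 : ℝ) * ‖q.2‖ ^ 2)) π := hL7.sub i2t8
    have hC : Integrable (fun q : HX × HY =>
        ‖p.1‖ ^ 2 * ‖p.2‖ ^ 2 + ‖p.1‖ ^ 2 * ‖q.2‖ ^ 2 + ‖p.2‖ ^ 2 * ‖q.1‖ ^ 2
          + ‖q.1‖ ^ 2 * ‖q.2‖ ^ 2
          - 2 * (‖p.1‖ ^ 2 * (inner ℝ p.2 q.2 : ℝ))
          - 2 * (‖p.2‖ ^ 2 * (inner ℝ p.1 q.1 : ℝ))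
          - 2 * (‖q.1‖ ^ 2 * (inner ℝ p.2 q.2 : ℝ))
          - 2 * ((inner ℝ p.1 q.1 : ℝ) * ‖q.2‖ ^ 2)
          + 4 * ((inner ℝ p.1 q.1 : ℝ) * (inner ℝ p.2 q.2 : ℝ))) π := hL8.add i4t9
    have hAB : Integrable (fun q : HX × HY =>
        ‖p.1 - q.1‖ ^ 4 + ‖p.2 - q.2‖ ^ 4) π := hA4.add hB4
    simp only [expand]
    rw [integral_sub hAB (hC.const_mul 2), integral_add hA4 hB4,
      integral_const_mul 2, integral_add hL8 i4t9, integral_sub hL7 i2t8,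
      integral_sub hL6 i2t7, integral_sub hL5 i2t6, integral_sub hL4 i2t5,
      integral_add hL3 iuv, integral_add hL2 it3, integral_add it1 it2]
    -- evaluate the atomic integrals
    have E1 : (∫ _ : HX × HY, ‖p.1‖ ^ 2 * ‖p.2‖ ^ 2 ∂π) = ‖p.1‖ ^ 2 * ‖p.2‖ ^ 2 := by
      rw [integral_const, probReal_univ, one_smul]
    have Et : (∫ q : HX × HY, (inner ℝ p.2 q.2 : ℝ) ∂π) = 0 := by
      rw [integral_inner isnd, hq2, inner_zero_right]
    have Es : (∫ q : HX × HY, (inner ℝ p.1 q.1 : ℝ) ∂π) = 0 := by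
      rw [integral_inner ifst, hq1, inner_zero_right]
    have E2 : (∫ q : HX × HY, ‖p.1‖ ^ 2 * ‖q.2‖ ^ 2 ∂π)
        = ‖p.1‖ ^ 2 * (∫ y, ‖y‖ ^ 2 ∂β) := by
      rw [integral_const_mul, hMy]
    have E3 : (∫ q : HX × HY, ‖p.2‖ ^ 2 * ‖q.1‖ ^ 2 ∂π)
        = ‖p.2‖ ^ 2 * (∫ x, ‖x‖ ^ 2 ∂α) := by
      rw [integral_const_mul, hMx]
    have E5 : (∫ q : HX × HY, 2 * (‖p.1‖ ^ 2 * (inner ℝ p.2 q.2 : ℝ)) ∂π) = 0 := by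
      rw [integral_const_mul, integral_const_mul, Et, mul_zero, mul_zero]
    have E6 : (∫ q : HX × HY, 2 * (‖p.2‖ ^ 2 * (inner ℝ p.1 q.1 : ℝ)) ∂π) = 0 := by
      rw [integral_const_mul, integral_const_mul, Es, mul_zero, mul_zero]
    have E7 : (∫ q : HX × HY, 2 * (‖q.1‖ ^ 2 * (inner ℝ p.2 q.2 : ℝ)) ∂π)
        = 2 * (inner ℝ (∫ q : HX × HY, ‖q.1‖ ^ 2 • q.2 ∂π) p.2 : ℝ) := by
      rw [integral_const_mul]
      have hpt : ∀ q : HX × HY, ‖q.1‖ ^ 2 * (inner ℝ p.2 q.2 : ℝ)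
          = (inner ℝ p.2 (‖q.1‖ ^ 2 • q.2) : ℝ) := fun q =>
        (real_inner_smul_right _ _ _).symm
      simp only [hpt]
      rw [integral_inner ivv, real_inner_comm]
    have E8 : (∫ q : HX × HY, 2 * ((inner ℝ p.1 q.1 : ℝ) * ‖q.2‖ ^ 2) ∂π)
        = 2 * (inner ℝ (∫ q : HX × HY, ‖q.2‖ ^ 2 • q.1 ∂π) p.1 : ℝ) := by
      rw [integral_const_mul]
      have hpt : ∀ q : HX × HY, (inner ℝ p.1 q.1 : ℝ) * ‖q.2‖ ^ 2
          = (inner ℝ p.1 (‖q.2‖ ^ 2 • q.1) : ℝ) := fun q => by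
        rw [real_inner_smul_right]; ring
      simp only [hpt]
      rw [integral_inner iww, real_inner_comm]
    rw [E1, E2, E3, E5, E6, E7, E8, integral_const_mul 4, h4X, h4Y]
    ring
  -- now the outer integral
  simp only [inner_eq]
  -- strong measurability of the parametric integrals
  have hgX : StronglyMeasurable (fun x : HX => ∫ x', ‖x - x'‖ ^ 4 ∂α) :=
    StronglyMeasurable.integral_prod_right'
      (f := fun z : HX × HX => ‖z.1 - z.2‖ ^ 4)
      ((continuous_fst.sub continuous_snd).norm.pow 4).stronglyMeasurable
  have hgY : StronglyMeasurable (fun y : HY => ∫ y', ‖y - y'‖ ^ 4 ∂β) :=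
    StronglyMeasurable.integral_prod_right'
      (f := fun z : HY × HY => ‖z.1 - z.2‖ ^ 4)
      ((continuous_fst.sub continuous_snd).norm.pow 4).stronglyMeasurable
  have hJsm : StronglyMeasurable (fun p : HX × HY =>
      ∫ q, (inner ℝ p.1 q.1 : ℝ) * (inner ℝ p.2 q.2 : ℝ) ∂π) :=
    StronglyMeasurable.integral_prod_right'
      (f := fun z : (HX × HY) × (HX × HY) =>
        (inner ℝ z.1.1 z.2.1 : ℝ) * (inner ℝ z.1.2 z.2.2 : ℝ))
      (((Continuous.inner (continuous_fst.fst) (continuous_snd.fst)).mul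
        (Continuous.inner (continuous_fst.snd) (continuous_snd.snd))).stronglyMeasurable)
  -- integrability of the outer pieces
  have oA : Integrable (fun p : HX × HY => ∫ x', ‖p.1 - x'‖ ^ 4 ∂α) π := by
    refine int_of_bound (hgX.comp_measurable measurable_fst).aestronglyMeasurable
      ((R + R) ^ 4) ?_
    filter_upwards [hπae] with p hp
    have hb : ∀ᵐ x' ∂α, ‖‖p.1 - x'‖ ^ 4‖ ≤ (R + R) ^ 4 := by
      filter_upwards [hαae] with x' hx'
      rw [Real.norm_eq_abs, abs_of_nonneg (by positivity)]
      exact pow_le_pow_left₀ (norm_nonneg _)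
        ((norm_sub_le _ _).trans (add_le_add (hbX _ hp.1) (hbX _ hx'))) 4
    calc ‖∫ x', ‖p.1 - x'‖ ^ 4 ∂α‖ ≤ (R + R) ^ 4 * (α Set.univ).toReal :=
          norm_integral_le_of_norm_le_const hb
      _ = (R + R) ^ 4 := by rw [measure_univ, ENNReal.toReal_one, mul_one]
  have oB : Integrable (fun p : HX × HY => ∫ y', ‖p.2 - y'‖ ^ 4 ∂β) π := by
    refine int_of_bound (hgY.comp_measurable measurable_snd).aestronglyMeasurable
      ((R + R) ^ 4) ?_
    filter_upwards [hπae] with p hp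
    have hb : ∀ᵐ y' ∂β, ‖‖p.2 - y'‖ ^ 4‖ ≤ (R + R) ^ 4 := by
      filter_upwards [hβae] with y' hy'
      rw [Real.norm_eq_abs, abs_of_nonneg (by positivity)]
      exact pow_le_pow_left₀ (norm_nonneg _)
        ((norm_sub_le _ _).trans (add_le_add (hbY _ hp.2) (hbY _ hy'))) 4
    calc ‖∫ y', ‖p.2 - y'‖ ^ 4 ∂β‖ ≤ (R + R) ^ 4 * (β Set.univ).toReal :=
          norm_integral_le_of_norm_le_const hb
      _ = (R + R) ^ 4 := by rw [measure_univ, ENNReal.toReal_one, mul_one]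
  have oJ : Integrable (fun p : HX × HY =>
      ∫ q, (inner ℝ p.1 q.1 : ℝ) * (inner ℝ p.2 q.2 : ℝ) ∂π) π := by
    refine int_of_bound hJsm.aestronglyMeasurable ((R * R) * (R * R)) ?_
    filter_upwards [hπae] with p hp
    have hb : ∀ᵐ q ∂π, ‖(inner ℝ p.1 q.1 : ℝ) * (inner ℝ p.2 q.2 : ℝ)‖
        ≤ (R * R) * (R * R) := by
      filter_upwards [hπae] with q hq
      rw [Real.norm_eq_abs, abs_mul]
      exact mul_le_mul
        ((abs_real_inner_le_norm _ _).trans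
          (mul_le_mul (hbX _ hp.1) (hbX _ hq.1) (norm_nonneg _) hR0))
        ((abs_real_inner_le_norm _ _).trans
          (mul_le_mul (hbY _ hp.2) (hbY _ hq.2) (norm_nonneg _) hR0))
        (abs_nonneg _) (by positivity)
    calc ‖∫ q, (inner ℝ p.1 q.1 : ℝ) * (inner ℝ p.2 q.2 : ℝ) ∂π‖
        ≤ (R * R) * (R * R) * (π Set.univ).toReal := norm_integral_le_of_norm_le_const hb
      _ = (R * R) * (R * R) := by rw [measure_univ, ENNReal.toReal_one, mul_one]
  have ovv : Integrable (fun p : HX × HY =>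
      (inner ℝ (∫ q : HX × HY, ‖q.1‖ ^ 2 • q.2 ∂π) p.2 : ℝ)) π := by
    refine int_of_bound (Continuous.aestronglyMeasurable
      (Continuous.inner continuous_const continuous_snd))
      (‖∫ q : HX × HY, ‖q.1‖ ^ 2 • q.2 ∂π‖ * R) ?_
    filter_upwards [hπae] with p hp
    rw [Real.norm_eq_abs]
    exact (abs_real_inner_le_norm _ _).trans
      (mul_le_mul_of_nonneg_left (hbY _ hp.2) (norm_nonneg _))
  have oww : Integrable (fun p : HX × HY =>
      (inner ℝ (∫ q : HX × HY, ‖q.2‖ ^ 2 • q.1 ∂π) p.1 : ℝ)) π := by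
    refine int_of_bound (Continuous.aestronglyMeasurable
      (Continuous.inner continuous_const continuous_fst))
      (‖∫ q : HX × HY, ‖q.2‖ ^ 2 • q.1 ∂π‖ * R) ?_
    filter_upwards [hπae] with p hp
    rw [Real.norm_eq_abs]
    exact (abs_real_inner_le_norm _ _).trans
      (mul_le_mul_of_nonneg_left (hbX _ hp.1) (norm_nonneg _))
  have ou1 : Integrable (fun p : HX × HY => ‖p.1‖ ^ 2 * ‖p.2‖ ^ 2) π := iuv
  have ou2 : Integrable (fun p : HX × HY => ‖p.1‖ ^ 2 * (∫ y, ‖y‖ ^ 2 ∂β)) π :=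
    iu.mul_const _
  have ou3 : Integrable (fun p : HX × HY => ‖p.2‖ ^ 2 * (∫ x, ‖x‖ ^ 2 ∂α)) π :=
    iv.mul_const _
  have ou4 : Integrable (fun _ : HX × HY =>
      ∫ q : HX × HY, ‖q.1‖ ^ 2 * ‖q.2‖ ^ 2 ∂π) π := integrable_const _
  have ow5 := ovv.const_mul 2
  have ow6 := oww.const_mul 2
  have ow9 := oJ.const_mul 4
  have oL2 : Integrable (fun p : HX × HY =>
      ‖p.1‖ ^ 2 * ‖p.2‖ ^ 2 + ‖p.1‖ ^ 2 * (∫ y, ‖y‖ ^ 2 ∂β)) π := ou1.add ou2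
  have oL3 : Integrable (fun p : HX × HY =>
      ‖p.1‖ ^ 2 * ‖p.2‖ ^ 2 + ‖p.1‖ ^ 2 * (∫ y, ‖y‖ ^ 2 ∂β)
        + ‖p.2‖ ^ 2 * (∫ x, ‖x‖ ^ 2 ∂α)) π := oL2.add ou3
  have oL4 : Integrable (fun p : HX × HY =>
      ‖p.1‖ ^ 2 * ‖p.2‖ ^ 2 + ‖p.1‖ ^ 2 * (∫ y, ‖y‖ ^ 2 ∂β)
        + ‖p.2‖ ^ 2 * (∫ x, ‖x‖ ^ 2 ∂α)
        + (∫ q : HX × HY, ‖q.1‖ ^ 2 * ‖q.2‖ ^ 2 ∂π)) π := oL3.add ou4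
  have oL5 : Integrable (fun p : HX × HY =>
      ‖p.1‖ ^ 2 * ‖p.2‖ ^ 2 + ‖p.1‖ ^ 2 * (∫ y, ‖y‖ ^ 2 ∂β)
        + ‖p.2‖ ^ 2 * (∫ x, ‖x‖ ^ 2 ∂α)
        + (∫ q : HX × HY, ‖q.1‖ ^ 2 * ‖q.2‖ ^ 2 ∂π)
        - 2 * (inner ℝ (∫ q : HX × HY, ‖q.1‖ ^ 2 • q.2 ∂π) p.2 : ℝ)) π := oL4.sub ow5
  have oL6 : Integrable (fun p : HX × HY =>
      ‖p.1‖ ^ 2 * ‖p.2‖ ^ 2 + ‖p.1‖ ^ 2 * (∫ y, ‖y‖ ^ 2 ∂β)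
        + ‖p.2‖ ^ 2 * (∫ x, ‖x‖ ^ 2 ∂α)
        + (∫ q : HX × HY, ‖q.1‖ ^ 2 * ‖q.2‖ ^ 2 ∂π)
        - 2 * (inner ℝ (∫ q : HX × HY, ‖q.1‖ ^ 2 • q.2 ∂π) p.2 : ℝ)
        - 2 * (inner ℝ (∫ q : HX × HY, ‖q.2‖ ^ 2 • q.1 ∂π) p.1 : ℝ)) π := oL5.sub ow6
  have oC : Integrable (fun p : HX × HY =>
      ‖p.1‖ ^ 2 * ‖p.2‖ ^ 2 + ‖p.1‖ ^ 2 * (∫ y, ‖y‖ ^ 2 ∂β)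
        + ‖p.2‖ ^ 2 * (∫ x, ‖x‖ ^ 2 ∂α)
        + (∫ q : HX × HY, ‖q.1‖ ^ 2 * ‖q.2‖ ^ 2 ∂π)
        - 2 * (inner ℝ (∫ q : HX × HY, ‖q.1‖ ^ 2 • q.2 ∂π) p.2 : ℝ)
        - 2 * (inner ℝ (∫ q : HX × HY, ‖q.2‖ ^ 2 • q.1 ∂π) p.1 : ℝ)
        + 4 * ∫ q, (inner ℝ p.1 q.1 : ℝ) * (inner ℝ p.2 q.2 : ℝ) ∂π) π := oL6.add ow9
  have oAB : Integrable (fun p : HX × HY =>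
      (∫ x', ‖p.1 - x'‖ ^ 4 ∂α) + (∫ y', ‖p.2 - y'‖ ^ 4 ∂β)) π := oA.add oB
  rw [integral_sub oAB (oC.const_mul 2), integral_add oA oB,
    integral_const_mul 2, integral_add oL6 ow9, integral_sub oL5 ow6,
    integral_sub oL4 ow5, integral_add oL3 ou4, integral_add oL2 ou3,
    integral_add ou1 ou2]
  -- evaluate the outer atomic integrals
  have FA : (∫ p : HX × HY, ∫ x', ‖p.1 - x'‖ ^ 4 ∂α ∂π)
      = ∫ x, ∫ x', ‖x - x'‖ ^ 4 ∂α ∂α := by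
    have := integral_map (μ := π) measurable_fst.aemeasurable
      (f := fun x : HX => ∫ x', ‖x - x'‖ ^ 4 ∂α) hgX.aestronglyMeasurable
    rw [hπ1] at this; exact this.symm
  have FB : (∫ p : HX × HY, ∫ y', ‖p.2 - y'‖ ^ 4 ∂β ∂π)
      = ∫ y, ∫ y', ‖y - y'‖ ^ 4 ∂β ∂β := by
    have := integral_map (μ := π) measurable_snd.aemeasurable
      (f := fun y : HY => ∫ y', ‖y - y'‖ ^ 4 ∂β) hgY.aestronglyMeasurable
    rw [hπ2] at this; exact this.symm
  have Fu2 : (∫ p : HX × HY, ‖p.1‖ ^ 2 * (∫ y, ‖y‖ ^ 2 ∂β) ∂π)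
      = (∫ x, ‖x‖ ^ 2 ∂α) * (∫ y, ‖y‖ ^ 2 ∂β) := by
    rw [integral_mul_const, hMx]
  have Fu3 : (∫ p : HX × HY, ‖p.2‖ ^ 2 * (∫ x, ‖x‖ ^ 2 ∂α) ∂π)
      = (∫ y, ‖y‖ ^ 2 ∂β) * (∫ x, ‖x‖ ^ 2 ∂α) := by
    rw [integral_mul_const, hMy]
  have Fu4 : (∫ _ : HX × HY, (∫ q : HX × HY, ‖q.1‖ ^ 2 * ‖q.2‖ ^ 2 ∂π) ∂π)
      = ∫ q : HX × HY, ‖q.1‖ ^ 2 * ‖q.2‖ ^ 2 ∂π := by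
    rw [integral_const, probReal_univ, one_smul]
  have Fw5 : (∫ p : HX × HY,
      2 * (inner ℝ (∫ q : HX × HY, ‖q.1‖ ^ 2 • q.2 ∂π) p.2 : ℝ) ∂π) = 0 := by
    rw [integral_const_mul, integral_inner isnd, hq2, inner_zero_right, mul_zero]
  have Fw6 : (∫ p : HX × HY,
      2 * (inner ℝ (∫ q : HX × HY, ‖q.2‖ ^ 2 • q.1 ∂π) p.1 : ℝ) ∂π) = 0 := by
    rw [integral_const_mul, integral_inner ifst, hq1, inner_zero_right, mul_zero]
  rw [FA, FB, Fu2, Fu3, Fu4, Fw5, Fw6, integral_const_mul 4]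
  ring
end

section
/- Let α be a compactly supported centered Borel probability measure on ℝ^D and β a compactly supported centered Borel probability measure on ℝ^E (centered meaning ∫ x dα = 0 and ∫ y dβ = 0), each space being endowed with the squared Euclidean cost. Then for every ε ≥ 0, the entropic Gromov–Wasserstein cost satisfies GW_ε(α,β) = C(α,β) + inf over Γ ∈ ℝ^{D×E} of ( 8‖Γ‖_F² + OT_ε^Γ(α,β) ), where ‖·‖_F is the Frobenius norm. -/
open MeasureTheory Classical

/-- Kullback–Leibler divergence, with value `⊤` when `π` is not absolutely continuous
with respect to `μ` or the log-likelihood ratio is not integrable. -/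
noncomputable def klE {Z : Type*} [MeasurableSpace Z] (π μ : Measure Z) : EReal :=
  if π ≪ μ ∧ Integrable (llr π μ) π then ((∫ z, llr π μ z ∂π : ℝ) : EReal) else ⊤

/-- The set of couplings between `α` and `β`. -/
def couplings {X Y : Type*} [MeasurableSpace X] [MeasurableSpace Y]
    (α : Measure X) (β : Measure Y) : Set (Measure (X × Y)) :=
  {π | π.map Prod.fst = α ∧ π.map Prod.snd = β}

section EgwAux

private lemma ereal_cancel (a : ℝ) (x : EReal) : (a : EReal) + (((-a : ℝ) : EReal) + x) = x := by
  induction x using EReal.rec with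
  | bot => simp
  | coe r => norm_cast; ring
  | top => rw [EReal.add_top_of_ne_bot (by simp), EReal.add_top_of_ne_bot (by simp)]

private lemma ereal_cancel' (a : ℝ) (x : EReal) : ((-a : ℝ) : EReal) + ((a : EReal) + x) = x := by
  have := ereal_cancel (-a) x; rwa [neg_neg] at this

private lemma ereal_add_iInf {ι : Sort*} (a : ℝ) (f : ι → EReal) :
    (a : EReal) + ⨅ i, f i = ⨅ i, ((a : EReal) + f i) := by
  refine le_antisymm (le_iInf fun i => add_le_add_right (iInf_le f i) _) ?_
  have h1 : ((-a : ℝ) : EReal) + ⨅ i, ((a : EReal) + f i) ≤ ⨅ i, f i :=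
    le_iInf fun i => le_of_le_of_eq (add_le_add_right (iInf_le _ i) _) (ereal_cancel' a (f i))
  calc ⨅ i, ((a : EReal) + f i)
      = (a : EReal) + (((-a : ℝ) : EReal) + ⨅ i, ((a : EReal) + f i)) := (ereal_cancel a _).symm
    _ ≤ (a : EReal) + ⨅ i, f i := add_le_add_right h1 _

private lemma normsq_expand {D : ℕ} (x y : EuclideanSpace ℝ (Fin D)) :
    ‖x - y‖ ^ 2 = ‖x‖ ^ 2 - 2 * ∑ i, x i * y i + ‖y‖ ^ 2 := by
  have h := @norm_sub_sq_real (EuclideanSpace ℝ (Fin D)) _ _ x y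
  rw [h]; congr 1
  simp [PiLp.inner_apply, mul_comm]


private lemma integrable_of_compact {Z F : Type*} [MeasurableSpace Z] [TopologicalSpace Z]
    [OpensMeasurableSpace Z] [T2Space Z] [NormedAddCommGroup F]
    (ν : Measure Z) [IsFiniteMeasure ν] {S : Set Z} (hS : IsCompact S) (hν : ν Sᶜ = 0)
    {f : Z → F} (hf : Continuous f) : Integrable f ν := by
  have h : ν.restrict S = ν := Measure.restrict_eq_self_of_ae_mem (by
    rw [Filter.eventually_iff, mem_ae_iff]; simpa using hν)
  rw [← h]
  exact hf.continuousOn.integrableOn_compact hS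

private lemma sm_F {n : ℕ} (α : Measure (EuclideanSpace ℝ (Fin n))) [SFinite α] :
    StronglyMeasurable (fun x : EuclideanSpace ℝ (Fin n) => ∫ x', ‖x - x'‖ ^ 4 ∂α) := by
  apply StronglyMeasurable.integral_prod_right'
    (f := fun z : EuclideanSpace ℝ (Fin n) × EuclideanSpace ℝ (Fin n) => ‖z.1 - z.2‖ ^ 4)
  exact Continuous.stronglyMeasurable (by fun_prop)

private lemma integrable_F {Z : Type*} [MeasurableSpace Z] {n : ℕ}
    (π : Measure Z) [IsProbabilityMeasure π]
    (α : Measure (EuclideanSpace ℝ (Fin n))) [IsProbabilityMeasure α]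
    {K : Set (EuclideanSpace ℝ (Fin n))} (hK : IsCompact K) (hαK : α Kᶜ = 0)
    {φ : Z → EuclideanSpace ℝ (Fin n)} (hφ : Measurable φ)
    (hπφ : ∀ᵐ p ∂π, φ p ∈ K) :
    Integrable (fun p => ∫ x', ‖φ p - x'‖ ^ 4 ∂α) π := by
  obtain ⟨R, hR⟩ := hK.isBounded.exists_norm_le
  have hR0 : ∀ x ∈ K, ‖x‖ ≤ max R 0 := fun x hx => (hR x hx).trans (le_max_left _ _)
  have haeK : ∀ᵐ x' ∂α, x' ∈ K := by
    rw [Filter.eventually_iff, mem_ae_iff]; simpa using hαK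
  refine Integrable.mono' (integrable_const ((2 * max R 0) ^ 4))
    (((sm_F α).comp_measurable hφ).aestronglyMeasurable) ?_
  filter_upwards [hπφ] with p hp
  rw [Real.norm_eq_abs, abs_of_nonneg (integral_nonneg fun x' => by positivity)]
  have hint : Integrable (fun x' => ‖φ p - x'‖ ^ 4) α :=
    integrable_of_compact α hK hαK (by fun_prop)
  calc ∫ x', ‖φ p - x'‖ ^ 4 ∂α ≤ ∫ _x', (2 * max R 0) ^ 4 ∂α := by
        apply integral_mono_ae hint (integrable_const _)
        filter_upwards [haeK] with x' hx'
        have h1 : ‖φ p - x'‖ ≤ 2 * max R 0 := by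
          calc ‖φ p - x'‖ ≤ ‖φ p‖ + ‖x'‖ := norm_sub_le _ _
            _ ≤ max R 0 + max R 0 := add_le_add (hR0 _ hp) (hR0 _ hx')
            _ = 2 * max R 0 := by ring
        exact pow_le_pow_left₀ (norm_nonneg _) h1 4
    _ = (2 * max R 0) ^ 4 := by simp

private lemma quad_sum {D E : ℕ} (A B : Matrix (Fin D) (Fin E) ℝ) :
    ∑ i, ∑ j, (A i j - B i j) ^ 2
      = ∑ i, ∑ j, (A i j) ^ 2 - 2 * ∑ i, ∑ j, A i j * B i j + ∑ i, ∑ j, (B i j) ^ 2 := by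
  simp only [Finset.mul_sum, ← Finset.sum_sub_distrib, ← Finset.sum_add_distrib]
  exact Finset.sum_congr rfl fun i _ => Finset.sum_congr rfl fun j _ => by ring

private lemma main_I {D E : ℕ}
    (π : Measure (EuclideanSpace ℝ (Fin D) × EuclideanSpace ℝ (Fin E)))
    (intπ : ∀ f : (EuclideanSpace ℝ (Fin D) × EuclideanSpace ℝ (Fin E)) → ℝ,
      Continuous f → Integrable f π)
    (Γ : Matrix (Fin D) (Fin E) ℝ) :
    ∫ p, (-16 * ∑ i, ∑ j, Γ i j * (p.1 i * p.2 j)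
        - 4 * ‖p.1‖ ^ 2 * ‖p.2‖ ^ 2) ∂π
      = -16 * ∑ i, ∑ j, Γ i j * ∫ p, p.1 i * p.2 j ∂π
        - 4 * ∫ p, ‖p.1‖ ^ 2 * ‖p.2‖ ^ 2 ∂π := by
  rw [integral_sub (intπ _ (by fun_prop)) (by
    have := intπ (fun p => 4 * (‖p.1‖ ^ 2 * ‖p.2‖ ^ 2)) (by fun_prop)
    simpa [mul_assoc] using this)]
  congr 1
  · rw [integral_const_mul, integral_finset_sum _ (fun i _ => by
      apply integrable_finset_sum
      intro j _
      exact intπ _ (by fun_prop))]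
    congr 1
    refine Finset.sum_congr rfl fun i _ => ?_
    rw [integral_finset_sum _ (fun j _ => intπ _ (by fun_prop))]
    exact Finset.sum_congr rfl fun j _ => integral_const_mul _ _
  · simp_rw [mul_assoc]; rw [integral_const_mul]

private lemma main_L {D E : ℕ}
    (α : Measure (EuclideanSpace ℝ (Fin D))) (β : Measure (EuclideanSpace ℝ (Fin E)))
    (π : Measure (EuclideanSpace ℝ (Fin D) × EuclideanSpace ℝ (Fin E)))
    [IsProbabilityMeasure π]
    (h1 : π.map Prod.fst = α) (h2 : π.map Prod.snd = β)
    (intπ : ∀ f : (EuclideanSpace ℝ (Fin D) × EuclideanSpace ℝ (Fin E)) → ℝ,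
      Continuous f → Integrable f π)
    (intF1 : Integrable (fun p : EuclideanSpace ℝ (Fin D) × EuclideanSpace ℝ (Fin E) =>
      ∫ x', ‖p.1 - x'‖ ^ 4 ∂α) π)
    (intF2 : Integrable (fun p : EuclideanSpace ℝ (Fin D) × EuclideanSpace ℝ (Fin E) =>
      ∫ y', ‖p.2 - y'‖ ^ 4 ∂β) π)
    (mF1 : ∫ p, (∫ x', ‖p.1 - x'‖ ^ 4 ∂α) ∂π = ∫ x, ∫ x', ‖x - x'‖ ^ 4 ∂α ∂α)
    (mF2 : ∫ p, (∫ y', ‖p.2 - y'‖ ^ 4 ∂β) ∂π = ∫ y, ∫ y', ‖y - y'‖ ^ 4 ∂β ∂β)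
    (hαc : ∀ i, ∫ p, p.1 i ∂π = 0) (hβc : ∀ j, ∫ p, p.2 j ∂π = 0) :
    ∫ p, ∫ q, (‖p.1 - q.1‖ ^ 2 - ‖p.2 - q.2‖ ^ 2) ^ 2 ∂π ∂π
      = (∫ x, ∫ x', ‖x - x'‖ ^ 4 ∂α ∂α) + (∫ y, ∫ y', ‖y - y'‖ ^ 4 ∂β ∂β)
        - 4 * (∫ x, ‖x‖ ^ 2 ∂α) * (∫ y, ‖y‖ ^ 2 ∂β)
        - 4 * (∫ p, ‖p.1‖ ^ 2 * ‖p.2‖ ^ 2 ∂π)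
        - 8 * ∑ i, ∑ j, (∫ p, p.1 i * p.2 j ∂π) ^ 2 := by
  have mfst : ∀ g : EuclideanSpace ℝ (Fin D) → ℝ, Continuous g →
      ∫ p, g p.1 ∂π = ∫ x, g x ∂α := by
    intro g hg
    rw [← h1, integral_map measurable_fst.aemeasurable hg.aestronglyMeasurable]
  have msnd : ∀ g : EuclideanSpace ℝ (Fin E) → ℝ, Continuous g →
      ∫ p, g p.2 ∂π = ∫ y, g y ∂β := by
    intro g hg
    rw [← h2, integral_map measurable_snd.aemeasurable hg.aestronglyMeasurable]
  have mα : ∫ p, ‖p.1‖ ^ 2 ∂π = ∫ x, ‖x‖ ^ 2 ∂α :=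
    mfst (fun x => ‖x‖ ^ 2) (by fun_prop)
  have mβ : ∫ p, ‖p.2‖ ^ 2 ∂π = ∫ y, ‖y‖ ^ 2 ∂β :=
    msnd (fun y => ‖y‖ ^ 2) (by fun_prop)
  -- the inner integral
  have inner_eq : ∀ p : EuclideanSpace ℝ (Fin D) × EuclideanSpace ℝ (Fin E),
      ∫ q, (‖p.1 - q.1‖ ^ 2 - ‖p.2 - q.2‖ ^ 2) ^ 2 ∂π
        = (∫ x', ‖p.1 - x'‖ ^ 4 ∂α) + (∫ y', ‖p.2 - y'‖ ^ 4 ∂β)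
          - 2 * (‖p.1‖ ^ 2 * ‖p.2‖ ^ 2 + ‖p.1‖ ^ 2 * (∫ q, ‖q.2‖ ^ 2 ∂π)
            + (∫ q, ‖q.1‖ ^ 2 ∂π) * ‖p.2‖ ^ 2 + (∫ q, ‖q.1‖ ^ 2 * ‖q.2‖ ^ 2 ∂π)
            - 2 * ∑ j, p.2 j * (∫ q, ‖q.1‖ ^ 2 * q.2 j ∂π)
            - 2 * ∑ i, p.1 i * (∫ q, q.1 i * ‖q.2‖ ^ 2 ∂π)
            + 4 * ∑ i, ∑ j, (p.1 i * p.2 j) * (∫ q, q.1 i * q.2 j ∂π)) := by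
    intro p
    have pt : ∀ q : EuclideanSpace ℝ (Fin D) × EuclideanSpace ℝ (Fin E),
        (‖p.1 - q.1‖ ^ 2 - ‖p.2 - q.2‖ ^ 2) ^ 2
          = ‖p.1 - q.1‖ ^ 4 + ‖p.2 - q.2‖ ^ 4
            - 2 * (‖p.1‖ ^ 2 * ‖p.2‖ ^ 2 + ‖p.1‖ ^ 2 * ‖q.2‖ ^ 2 + ‖q.1‖ ^ 2 * ‖p.2‖ ^ 2
              + ‖q.1‖ ^ 2 * ‖q.2‖ ^ 2
              - 2 * ‖p.1‖ ^ 2 * (∑ j, p.2 j * q.2 j)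
              - 2 * ‖q.1‖ ^ 2 * (∑ j, p.2 j * q.2 j)
              - 2 * (∑ i, p.1 i * q.1 i) * ‖p.2‖ ^ 2
              - 2 * (∑ i, p.1 i * q.1 i) * ‖q.2‖ ^ 2
              + 4 * ∑ i, ∑ j, (p.1 i * q.1 i) * (p.2 j * q.2 j)) := by
      intro q
      have key : ‖p.1 - q.1‖ ^ 2 * ‖p.2 - q.2‖ ^ 2
          = ‖p.1‖ ^ 2 * ‖p.2‖ ^ 2 + ‖p.1‖ ^ 2 * ‖q.2‖ ^ 2 + ‖q.1‖ ^ 2 * ‖p.2‖ ^ 2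
              + ‖q.1‖ ^ 2 * ‖q.2‖ ^ 2
              - 2 * ‖p.1‖ ^ 2 * (∑ j, p.2 j * q.2 j)
              - 2 * ‖q.1‖ ^ 2 * (∑ j, p.2 j * q.2 j)
              - 2 * (∑ i, p.1 i * q.1 i) * ‖p.2‖ ^ 2
              - 2 * (∑ i, p.1 i * q.1 i) * ‖q.2‖ ^ 2
              + 4 * ∑ i, ∑ j, (p.1 i * q.1 i) * (p.2 j * q.2 j) := by
        rw [normsq_expand p.1 q.1, normsq_expand p.2 q.2, ← Finset.sum_mul_sum]
        ring
      have expand : (‖p.1 - q.1‖ ^ 2 - ‖p.2 - q.2‖ ^ 2) ^ 2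
          = ‖p.1 - q.1‖ ^ 4 + ‖p.2 - q.2‖ ^ 4
            - 2 * (‖p.1 - q.1‖ ^ 2 * ‖p.2 - q.2‖ ^ 2) := by ring
      rw [expand, key]
    rw [integral_congr_ae (Filter.Eventually.of_forall pt)]
    rw [integral_sub (intπ _ (by fun_prop)) (intπ _ (by fun_prop)),
        integral_add (intπ _ (by fun_prop)) (intπ _ (by fun_prop)),
        integral_const_mul]
    have q1 : ∫ q, ‖p.1 - q.1‖ ^ 4 ∂π = ∫ x', ‖p.1 - x'‖ ^ 4 ∂α :=
      mfst (fun x' => ‖p.1 - x'‖ ^ 4) (by fun_prop)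
    have q2 : ∫ q, ‖p.2 - q.2‖ ^ 4 ∂π = ∫ y', ‖p.2 - y'‖ ^ 4 ∂β :=
      msnd (fun y' => ‖p.2 - y'‖ ^ 4) (by fun_prop)
    rw [q1, q2]
    congr 1
    -- now the cross-term integral
    rw [integral_add (intπ _ (by fun_prop)) (intπ _ (by fun_prop)),
        integral_sub (intπ _ (by fun_prop)) (intπ _ (by fun_prop)),
        integral_sub (intπ _ (by fun_prop)) (intπ _ (by fun_prop)),
        integral_sub (intπ _ (by fun_prop)) (intπ _ (by fun_prop)),
        integral_sub (intπ _ (by fun_prop)) (intπ _ (by fun_prop)),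
        integral_add (intπ _ (by fun_prop)) (intπ _ (by fun_prop)),
        integral_add (intπ _ (by fun_prop)) (intπ _ (by fun_prop)),
        integral_add (intπ _ (by fun_prop)) (intπ _ (by fun_prop))]
    have e1 : ∫ _q, ‖p.1‖ ^ 2 * ‖p.2‖ ^ 2 ∂π = ‖p.1‖ ^ 2 * ‖p.2‖ ^ 2 := by
      rw [integral_const]; simp
    have e2 : ∫ q, ‖p.1‖ ^ 2 * ‖q.2‖ ^ 2 ∂π = ‖p.1‖ ^ 2 * ∫ q, ‖q.2‖ ^ 2 ∂π :=
      integral_const_mul _ _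
    have e3 : ∫ q, ‖q.1‖ ^ 2 * ‖p.2‖ ^ 2 ∂π = (∫ q, ‖q.1‖ ^ 2 ∂π) * ‖p.2‖ ^ 2 :=
      integral_mul_const _ _
    have e5 : ∫ q, 2 * ‖p.1‖ ^ 2 * (∑ j, p.2 j * q.2 j) ∂π = 0 := by
      rw [integral_const_mul, integral_finset_sum _ (fun j _ => intπ _ (by fun_prop))]
      rw [Finset.sum_eq_zero (fun j _ => by rw [integral_const_mul, hβc j, mul_zero])]
      rw [mul_zero]
    have e6 : ∫ q, 2 * ‖q.1‖ ^ 2 * (∑ j, p.2 j * q.2 j) ∂π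
        = 2 * ∑ j, p.2 j * (∫ q, ‖q.1‖ ^ 2 * q.2 j ∂π) := by
      have rearr : ∀ q : EuclideanSpace ℝ (Fin D) × EuclideanSpace ℝ (Fin E),
          2 * ‖q.1‖ ^ 2 * (∑ j, p.2 j * q.2 j)
            = 2 * ∑ j, p.2 j * (‖q.1‖ ^ 2 * q.2 j) := by
        intro q
        rw [mul_assoc, Finset.mul_sum]
        congr 1
        exact Finset.sum_congr rfl (fun j _ => by ring)
      rw [integral_congr_ae (Filter.Eventually.of_forall rearr), integral_const_mul,
          integral_finset_sum _ (fun j _ => intπ _ (by fun_prop))]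
      congr 1
      exact Finset.sum_congr rfl (fun j _ => integral_const_mul _ _)
    have e7 : ∫ q, 2 * (∑ i, p.1 i * q.1 i) * ‖p.2‖ ^ 2 ∂π = 0 := by
      have rearr : ∀ q : EuclideanSpace ℝ (Fin D) × EuclideanSpace ℝ (Fin E),
          2 * (∑ i, p.1 i * q.1 i) * ‖p.2‖ ^ 2
            = (2 * ‖p.2‖ ^ 2) * ∑ i, p.1 i * q.1 i := by intro q; ring
      rw [integral_congr_ae (Filter.Eventually.of_forall rearr), integral_const_mul,
          integral_finset_sum _ (fun i _ => intπ _ (by fun_prop))]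
      rw [Finset.sum_eq_zero (fun i _ => by rw [integral_const_mul, hαc i, mul_zero])]
      rw [mul_zero]
    have e8 : ∫ q, 2 * (∑ i, p.1 i * q.1 i) * ‖q.2‖ ^ 2 ∂π
        = 2 * ∑ i, p.1 i * (∫ q, q.1 i * ‖q.2‖ ^ 2 ∂π) := by
      have rearr : ∀ q : EuclideanSpace ℝ (Fin D) × EuclideanSpace ℝ (Fin E),
          2 * (∑ i, p.1 i * q.1 i) * ‖q.2‖ ^ 2
            = 2 * ∑ i, p.1 i * (q.1 i * ‖q.2‖ ^ 2) := by
        intro q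
        rw [mul_assoc, Finset.sum_mul]
        congr 1
        exact Finset.sum_congr rfl (fun i _ => by ring)
      rw [integral_congr_ae (Filter.Eventually.of_forall rearr), integral_const_mul,
          integral_finset_sum _ (fun i _ => intπ _ (by fun_prop))]
      congr 1
      exact Finset.sum_congr rfl (fun i _ => integral_const_mul _ _)
    have e9 : ∫ q, 4 * ∑ i, ∑ j, (p.1 i * q.1 i) * (p.2 j * q.2 j) ∂π
        = 4 * ∑ i, ∑ j, (p.1 i * p.2 j) * (∫ q, q.1 i * q.2 j ∂π) := by
      have rearr : ∀ q : EuclideanSpace ℝ (Fin D) × EuclideanSpace ℝ (Fin E),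
          4 * ∑ i, ∑ j, (p.1 i * q.1 i) * (p.2 j * q.2 j)
            = 4 * ∑ i, ∑ j, (p.1 i * p.2 j) * (q.1 i * q.2 j) := by
        intro q
        congr 1
        exact Finset.sum_congr rfl (fun i _ => Finset.sum_congr rfl (fun j _ => by ring))
      rw [integral_congr_ae (Filter.Eventually.of_forall rearr), integral_const_mul,
          integral_finset_sum _ (fun i _ => integrable_finset_sum _
            (fun j _ => intπ _ (by fun_prop)))]
      congr 1
      refine Finset.sum_congr rfl (fun i _ => ?_)
      rw [integral_finset_sum _ (fun j _ => intπ _ (by fun_prop))]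
      exact Finset.sum_congr rfl (fun j _ => integral_const_mul _ _)
    rw [e1, e2, e3, e5, e6, e7, e8, e9]
    ring
  -- outer integral
  rw [integral_congr_ae (Filter.Eventually.of_forall inner_eq)]
  have intF12 : Integrable (fun p : EuclideanSpace ℝ (Fin D) × EuclideanSpace ℝ (Fin E) =>
      (∫ x', ‖p.1 - x'‖ ^ 4 ∂α) + (∫ y', ‖p.2 - y'‖ ^ 4 ∂β)) π := intF1.add intF2
  rw [integral_sub intF12 (intπ _ (by fun_prop)),
      integral_add intF1 intF2, integral_const_mul, mF1, mF2]
  rw [integral_add (intπ _ (by fun_prop)) (intπ _ (by fun_prop)),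
      integral_sub (intπ _ (by fun_prop)) (intπ _ (by fun_prop)),
      integral_sub (intπ _ (by fun_prop)) (intπ _ (by fun_prop)),
      integral_add (intπ _ (by fun_prop)) (intπ _ (by fun_prop)),
      integral_add (intπ _ (by fun_prop)) (intπ _ (by fun_prop)),
      integral_add (intπ _ (by fun_prop)) (intπ _ (by fun_prop))]
  have w2 : ∫ p, ‖p.1‖ ^ 2 * (∫ q, ‖q.2‖ ^ 2 ∂π) ∂π
      = (∫ x, ‖x‖ ^ 2 ∂α) * (∫ y, ‖y‖ ^ 2 ∂β) := by
    rw [integral_mul_const, mα, mβ]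
  have w3 : ∫ p, (∫ q, ‖q.1‖ ^ 2 ∂π) * ‖p.2‖ ^ 2 ∂π
      = (∫ x, ‖x‖ ^ 2 ∂α) * (∫ y, ‖y‖ ^ 2 ∂β) := by
    rw [integral_const_mul, mα, mβ]
  have w4 : ∫ _p, (∫ q, ‖q.1‖ ^ 2 * ‖q.2‖ ^ 2 ∂π) ∂π = ∫ q, ‖q.1‖ ^ 2 * ‖q.2‖ ^ 2 ∂π := by
    rw [integral_const]; simp
  have w5 : ∫ p, 2 * ∑ j, p.2 j * (∫ q, ‖q.1‖ ^ 2 * q.2 j ∂π) ∂π = 0 := by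
    rw [integral_const_mul, integral_finset_sum _ (fun j _ => intπ _ (by fun_prop))]
    rw [Finset.sum_eq_zero (fun j _ => by rw [integral_mul_const, hβc j, zero_mul])]
    rw [mul_zero]
  have w6 : ∫ p, 2 * ∑ i, p.1 i * (∫ q, q.1 i * ‖q.2‖ ^ 2 ∂π) ∂π = 0 := by
    rw [integral_const_mul, integral_finset_sum _ (fun i _ => intπ _ (by fun_prop))]
    rw [Finset.sum_eq_zero (fun i _ => by rw [integral_mul_const, hαc i, zero_mul])]
    rw [mul_zero]
  have w9 : ∫ p, 4 * ∑ i, ∑ j, (p.1 i * p.2 j) * (∫ q, q.1 i * q.2 j ∂π) ∂π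
      = 4 * ∑ i, ∑ j, (∫ p, p.1 i * p.2 j ∂π) ^ 2 := by
    rw [integral_const_mul, integral_finset_sum _ (fun i _ => integrable_finset_sum _
      (fun j _ => intπ _ (by fun_prop)))]
    congr 1
    refine Finset.sum_congr rfl (fun i _ => ?_)
    rw [integral_finset_sum _ (fun j _ => intπ _ (by fun_prop))]
    refine Finset.sum_congr rfl (fun j _ => ?_)
    rw [integral_mul_const, sq]
  rw [w2, w3, w4, w5, w6, w9]
  ring

end EgwAux

/-- dual decomposition of the entropic Gromov–Wasserstein cost
with squared Euclidean costs. -/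
theorem egw_dual_decomposition {D E : ℕ}
    (α : Measure (EuclideanSpace ℝ (Fin D))) (β : Measure (EuclideanSpace ℝ (Fin E)))
    [IsProbabilityMeasure α] [IsProbabilityMeasure β]
    (KX : Set (EuclideanSpace ℝ (Fin D))) (KY : Set (EuclideanSpace ℝ (Fin E)))
    (hKX : IsCompact KX) (hKY : IsCompact KY) (hαK : α KXᶜ = 0) (hβK : β KYᶜ = 0)
    (hαcentered : ∫ x, x ∂α = 0) (hβcentered : ∫ y, y ∂β = 0)
    (ε : ℝ) (hε : 0 ≤ ε) :
    (⨅ π ∈ couplings α β,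
        (((∫ p, ∫ q, (‖p.1 - q.1‖ ^ 2 - ‖p.2 - q.2‖ ^ 2) ^ 2 ∂π ∂π : ℝ)) : EReal)
          + (ε : EReal) * klE π (α.prod β)) =
      ((((∫ x, ∫ x', ‖x - x'‖ ^ 4 ∂α ∂α) + (∫ y, ∫ y', ‖y - y'‖ ^ 4 ∂β ∂β)
          - 4 * (∫ x, ‖x‖ ^ 2 ∂α) * (∫ y, ‖y‖ ^ 2 ∂β) : ℝ)) : EReal)
        + ⨅ Γ : Matrix (Fin D) (Fin E) ℝ,
            (((8 * ∑ i, ∑ j, (Γ i j) ^ 2 : ℝ)) : EReal)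
              + ⨅ π ∈ couplings α β,
                  (((∫ p, (-16 * ∑ i, ∑ j, Γ i j * (p.1 i * p.2 j)
                      - 4 * ‖p.1‖ ^ 2 * ‖p.2‖ ^ 2) ∂π : ℝ)) : EReal)
                    + (ε : EReal) * klE π (α.prod β) := by
  classical
  -- abbreviations
  set k : Measure (EuclideanSpace ℝ (Fin D) × EuclideanSpace ℝ (Fin E)) → EReal :=
    fun π => (ε : EReal) * klE π (α.prod β) with hk
  set Cr : ℝ := (∫ x, ∫ x', ‖x - x'‖ ^ 4 ∂α ∂α) + (∫ y, ∫ y', ‖y - y'‖ ^ 4 ∂β ∂β)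
      - 4 * (∫ x, ‖x‖ ^ 2 ∂α) * (∫ y, ‖y‖ ^ 2 ∂β) with hCr
  -- the key real identity, per coupling and matrix
  have key : ∀ π ∈ couplings α β, ∀ Γ : Matrix (Fin D) (Fin E) ℝ,
      Cr + 8 * (∑ i, ∑ j, (Γ i j) ^ 2)
          + (∫ p, (-16 * ∑ i, ∑ j, Γ i j * (p.1 i * p.2 j)
              - 4 * ‖p.1‖ ^ 2 * ‖p.2‖ ^ 2) ∂π)
        = (∫ p, ∫ q, (‖p.1 - q.1‖ ^ 2 - ‖p.2 - q.2‖ ^ 2) ^ 2 ∂π ∂π)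
          + 8 * ∑ i, ∑ j, (Γ i j - ∫ p, p.1 i * p.2 j ∂π) ^ 2 := by
    rintro π ⟨h1, h2⟩ Γ
    haveI hprob : IsProbabilityMeasure π := by
      constructor
      have := congrArg (fun m : Measure (EuclideanSpace ℝ (Fin D)) => m Set.univ) h1
      simpa [Measure.map_apply measurable_fst MeasurableSet.univ] using this
    have hfst0 : π (Prod.fst ⁻¹' KXᶜ) = 0 := by
      have h := h1 ▸ hαK
      rwa [Measure.map_apply measurable_fst hKX.isClosed.measurableSet.compl] at h
    have hsnd0 : π (Prod.snd ⁻¹' KYᶜ) = 0 := by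
      have h := h2 ▸ hβK
      rwa [Measure.map_apply measurable_snd hKY.isClosed.measurableSet.compl] at h
    have hπK : π ((KX ×ˢ KY)ᶜ) = 0 := by
      refine measure_mono_null ?_
        ((measure_union_null hfst0 hsnd0) :
          π ((Prod.fst ⁻¹' KXᶜ) ∪ (Prod.snd ⁻¹' KYᶜ)) = 0)
      intro p hp
      simp only [Set.mem_compl_iff, Set.mem_prod, not_and_or] at hp
      simpa using hp
    have intπ : ∀ f : (EuclideanSpace ℝ (Fin D) × EuclideanSpace ℝ (Fin E)) → ℝ,
        Continuous f → Integrable f π :=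
      fun f hf => integrable_of_compact π (hKX.prod hKY) hπK hf
    have haefst : ∀ᵐ p ∂π, p.1 ∈ KX := by
      rw [Filter.eventually_iff, mem_ae_iff]
      exact hfst0
    have haesnd : ∀ᵐ p ∂π, p.2 ∈ KY := by
      rw [Filter.eventually_iff, mem_ae_iff]
      exact hsnd0
    have intF1 := integrable_F π α hKX hαK measurable_fst haefst
    have intF2 := integrable_F π β hKY hβK measurable_snd haesnd
    have mF1 : ∫ p, (∫ x', ‖p.1 - x'‖ ^ 4 ∂α) ∂π = ∫ x, ∫ x', ‖x - x'‖ ^ 4 ∂α ∂α := by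
      have := integral_map (μ := π) (φ := Prod.fst) measurable_fst.aemeasurable
        (sm_F α).aestronglyMeasurable
      rw [h1] at this
      exact this.symm
    have mF2 : ∫ p, (∫ y', ‖p.2 - y'‖ ^ 4 ∂β) ∂π = ∫ y, ∫ y', ‖y - y'‖ ^ 4 ∂β ∂β := by
      have := integral_map (μ := π) (φ := Prod.snd) measurable_snd.aemeasurable
        (sm_F β).aestronglyMeasurable
      rw [h2] at this
      exact this.symm
    have intidα : Integrable (fun x : EuclideanSpace ℝ (Fin D) => x) α :=
      integrable_of_compact α hKX hαK continuous_id
    have intidβ : Integrable (fun y : EuclideanSpace ℝ (Fin E) => y) β :=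
      integrable_of_compact β hKY hβK continuous_id
    have hαc : ∀ i, ∫ p, p.1 i ∂π = 0 := by
      intro i
      have t1 : ∫ p, p.1 i ∂π = ∫ x, x i ∂α := by
        have := integral_map (μ := π) (φ := Prod.fst) measurable_fst.aemeasurable
          (Continuous.aestronglyMeasurable
            (by fun_prop : Continuous fun x : EuclideanSpace ℝ (Fin D) => x i))
        rw [h1] at this
        exact this.symm
      have t2 : ∫ x, x i ∂α = (∫ x, x ∂α) i := by
        have := (EuclideanSpace.proj (𝕜 := ℝ) i).integral_comp_comm intidα
        simpa using this
      rw [t1, t2, hαcentered]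
      rfl
    have hβc : ∀ j, ∫ p, p.2 j ∂π = 0 := by
      intro j
      have t1 : ∫ p, p.2 j ∂π = ∫ y, y j ∂β := by
        have := integral_map (μ := π) (φ := Prod.snd) measurable_snd.aemeasurable
          (Continuous.aestronglyMeasurable
            (by fun_prop : Continuous fun y : EuclideanSpace ℝ (Fin E) => y j))
        rw [h2] at this
        exact this.symm
      have t2 : ∫ y, y j ∂β = (∫ y, y ∂β) j := by
        have := (EuclideanSpace.proj (𝕜 := ℝ) j).integral_comp_comm intidβ
        simpa using this
      rw [t1, t2, hβcentered]
      rfl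
    have LL := main_L α β π h1 h2 intπ intF1 intF2 mF1 mF2 hαc hβc
    have II := main_I π intπ Γ
    have qs : ∑ i, ∑ j, (Γ i j - ∫ p, p.1 i * p.2 j ∂π) ^ 2
        = ∑ i, ∑ j, (Γ i j) ^ 2
          - 2 * ∑ i, ∑ j, Γ i j * ∫ p, p.1 i * p.2 j ∂π
          + ∑ i, ∑ j, (∫ p, p.1 i * p.2 j ∂π) ^ 2 :=
      quad_sum Γ (fun i j => ∫ p, p.1 i * p.2 j ∂π)
    rw [II, LL, hCr]
    linear_combination (-8) * qs
  -- rewrite the right-hand side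
  have coe_shift : ∀ (a b c : ℝ) (x : EReal),
      (a : EReal) + ((b : EReal) + ((c : EReal) + x)) = (((a + b + c : ℝ)) : EReal) + x := by
    intro a b c x
    simp only [EReal.coe_add, add_assoc]
  have push : ∀ (a : ℝ)
      (f : Measure (EuclideanSpace ℝ (Fin D) × EuclideanSpace ℝ (Fin E)) → EReal),
      (a : EReal) + (⨅ π, ⨅ _ : π ∈ couplings α β, f π)
        = ⨅ π, ⨅ _ : π ∈ couplings α β, ((a : EReal) + f π) := by
    intro a f
    rw [ereal_add_iInf]
    exact iInf_congr fun π => ereal_add_iInf a _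
  have rhs_eq : (Cr : EReal)
        + (⨅ Γ : Matrix (Fin D) (Fin E) ℝ,
            ((8 * ∑ i, ∑ j, (Γ i j) ^ 2 : ℝ) : EReal)
              + ⨅ π, ⨅ _ : π ∈ couplings α β,
                  ((∫ p, (-16 * ∑ i, ∑ j, Γ i j * (p.1 i * p.2 j)
                      - 4 * ‖p.1‖ ^ 2 * ‖p.2‖ ^ 2) ∂π : ℝ) : EReal) + k π)
      = ⨅ Γ : Matrix (Fin D) (Fin E) ℝ, ⨅ π, ⨅ _ : π ∈ couplings α β,
          (((Cr + 8 * ∑ i, ∑ j, (Γ i j) ^ 2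
              + (∫ p, (-16 * ∑ i, ∑ j, Γ i j * (p.1 i * p.2 j)
                  - 4 * ‖p.1‖ ^ 2 * ‖p.2‖ ^ 2) ∂π) : ℝ)) : EReal) + k π := by
    rw [ereal_add_iInf]
    refine iInf_congr fun Γ => ?_
    rw [push, push]
    refine iInf_congr fun π => iInf_congr fun hπ => ?_
    exact coe_shift _ _ _ _
  rw [hCr] at rhs_eq ⊢
  rw [rhs_eq]
  -- now prove the equality of the two infima
  refine le_antisymm ?_ ?_
  · refine le_iInf fun Γ => le_iInf fun π => le_iInf fun hπ => ?_
    have h0 := iInf₂_le (f := fun (π : Measure (EuclideanSpace ℝ (Fin D) × EuclideanSpace ℝ (Fin E)))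
      (_ : π ∈ couplings α β) =>
      ((∫ p, ∫ q, (‖p.1 - q.1‖ ^ 2 - ‖p.2 - q.2‖ ^ 2) ^ 2 ∂π ∂π : ℝ) : EReal) + k π) π hπ
    refine h0.trans (add_le_add_left ?_ _)
    rw [EReal.coe_le_coe_iff]
    have := key π hπ Γ
    have hnn : (0:ℝ) ≤ 8 * ∑ i, ∑ j, (Γ i j - ∫ p, p.1 i * p.2 j ∂π) ^ 2 := by
      have : (0:ℝ) ≤ ∑ i, ∑ j, (Γ i j - ∫ p, p.1 i * p.2 j ∂π) ^ 2 :=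
        Finset.sum_nonneg fun i _ => Finset.sum_nonneg fun j _ => sq_nonneg _
      linarith
    linarith
  · refine le_iInf fun π => le_iInf fun hπ => ?_
    have h0 := iInf_le (f := fun Γ : Matrix (Fin D) (Fin E) ℝ =>
      ⨅ π, ⨅ _ : π ∈ couplings α β,
        (((Cr + 8 * ∑ i, ∑ j, (Γ i j) ^ 2
            + (∫ p, (-16 * ∑ i, ∑ j, Γ i j * (p.1 i * p.2 j)
                - 4 * ‖p.1‖ ^ 2 * ‖p.2‖ ^ 2) ∂π) : ℝ)) : EReal) + k π)
      (fun i j => ∫ p, p.1 i * p.2 j ∂π)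
    rw [hCr] at h0
    refine h0.trans ?_
    have h1 := iInf₂_le (f := fun π' (_ : π' ∈ couplings α β) =>
      (((Cr + 8 * ∑ i, ∑ j, (∫ p, p.1 i * p.2 j ∂π) ^ 2
          + (∫ p', (-16 * ∑ i, ∑ j, (∫ p, p.1 i * p.2 j ∂π) * (p'.1 i * p'.2 j)
              - 4 * ‖p'.1‖ ^ 2 * ‖p'.2‖ ^ 2) ∂π') : ℝ)) : EReal) + k π') π hπ
    rw [hCr] at h1
    refine h1.trans ?_
    have hval : Cr + 8 * ∑ i, ∑ j, (∫ p, p.1 i * p.2 j ∂π) ^ 2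
        + (∫ p', (-16 * ∑ i, ∑ j, (∫ p, p.1 i * p.2 j ∂π) * (p'.1 i * p'.2 j)
            - 4 * ‖p'.1‖ ^ 2 * ‖p'.2‖ ^ 2) ∂π)
        = ∫ p, ∫ q, (‖p.1 - q.1‖ ^ 2 - ‖p.2 - q.2‖ ^ 2) ^ 2 ∂π ∂π := by
      have := key π hπ (fun i j => ∫ p, p.1 i * p.2 j ∂π)
      simpa using this
    exact le_of_eq (by rw [hval])
end

section
/- Let X and Y be compact metric spaces, c : X × Y → ℝ a continuous nonnegative cost, and α, β Borel probability measures on X and Y. Then the entropic optimal-transport cost converges as ε → +∞: lim_{ε→+∞} OT_ε(α,β) = ∫∫ c(x,y) dα(x) dβ(y). -/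
open MeasureTheory Classical Filter

/-- Entropic optimal transport cost for a cost `c`, temperature `ε`. -/
noncomputable def otE {X Y : Type*} [MeasurableSpace X] [MeasurableSpace Y]
    (c : X → Y → ℝ) (ε : ℝ) (α : Measure X) (β : Measure Y) [SFinite β] : EReal :=
  ⨅ π ∈ {π : Measure (X × Y) | π.map Prod.fst = α ∧ π.map Prod.snd = β},
    ((∫ p, c p.1 p.2 ∂π : ℝ) : EReal) + (ε : EReal) * klE π (α.prod β)

/-! ### Auxiliary pointwise inequalities for `φ(t) = t log t - t + 1` -/

private lemma aux_hasDerivAt {s : ℝ} (hs : s ≠ 0) :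
    HasDerivAt (fun t : ℝ => t * Real.log t - t + 1 - (t - 1) ^ 2 / 16)
      (Real.log s - (s - 1) / 8) s := by
  have h1 := (((Real.hasDerivAt_mul_log hs).sub (hasDerivAt_id s)).add_const 1).sub
      (((((hasDerivAt_id s).sub_const 1)).pow 2).div_const 16)
  simp only [id_eq] at h1
  exact h1.congr_deriv (by simp; ring)

private lemma phi_quad {t : ℝ} (h0 : 0 ≤ t) (h8 : t ≤ 8) :
    (t - 1) ^ 2 ≤ 16 * (t * Real.log t - t + 1) := by
  rcases eq_or_lt_of_le h0 with h | h
  · rw [← h]; norm_num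
  set f : ℝ → ℝ := fun t => t * Real.log t - t + 1 - (t - 1) ^ 2 / 16 with hf
  have hf1 : f 1 = 0 := by simp [hf]
  have hkey : 0 ≤ f t := by
    rcases le_total t 1 with ht1 | ht1
    · -- antitone on [t,1]
      have hanti : AntitoneOn f (Set.Icc t 1) := by
        refine antitoneOn_of_deriv_nonpos (convex_Icc t 1) ?_ ?_ ?_
        · intro s hs
          exact (aux_hasDerivAt (ne_of_gt (lt_of_lt_of_le h hs.1))).continuousAt.continuousWithinAt
        · intro s hs
          rw [interior_Icc] at hs
          exact (aux_hasDerivAt (ne_of_gt (lt_trans h hs.1))).differentiableAt.differentiableWithinAt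
        · intro s hs
          rw [interior_Icc] at hs
          have hs0 : 0 < s := lt_trans h hs.1
          rw [(aux_hasDerivAt (ne_of_gt hs0)).deriv]
          have hlog := Real.log_le_sub_one_of_pos hs0
          have : s - 1 ≤ 0 := by linarith [hs.2]
          linarith
      have := hanti ⟨le_refl t, ht1⟩ ⟨ht1, le_refl 1⟩ ht1
      rw [hf1] at this
      exact this
    · -- monotone on [1,8]
      have hmono : MonotoneOn f (Set.Icc 1 8) := by
        refine monotoneOn_of_deriv_nonneg (convex_Icc 1 8) ?_ ?_ ?_
        · intro s hs
          have : (0:ℝ) < s := lt_of_lt_of_le one_pos hs.1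
          exact (aux_hasDerivAt (ne_of_gt this)).continuousAt.continuousWithinAt
        · intro s hs
          rw [interior_Icc] at hs
          have : (0:ℝ) < s := lt_trans one_pos hs.1
          exact (aux_hasDerivAt (ne_of_gt this)).differentiableAt.differentiableWithinAt
        · intro s hs
          rw [interior_Icc] at hs
          have hs0 : (0:ℝ) < s := lt_trans one_pos hs.1
          rw [(aux_hasDerivAt (ne_of_gt hs0)).deriv]
          have hlog := Real.one_sub_inv_le_log_of_pos hs0
          have hinv : s * s⁻¹ = 1 := mul_inv_cancel₀ (ne_of_gt hs0)
          have hs1 : (1:ℝ) ≤ s := le_of_lt hs.1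
          have hs8 : s ≤ 8 := le_of_lt hs.2
          nlinarith
      have := hmono ⟨le_refl 1, by norm_num⟩ ⟨ht1, h8⟩ ht1
      rw [hf1] at this
      exact this
  simp only [hf] at hkey
  linarith

private lemma phi_tail {t : ℝ} (h8 : (8:ℝ) ≤ t) : t - 1 ≤ t * Real.log t - t + 1 := by
  have ht0 : (0:ℝ) < t := by linarith
  have h2 : (2:ℝ) ≤ Real.log 8 := by
    rw [Real.le_log_iff_exp_le (by norm_num)]
    have h := Real.exp_one_lt_d9
    have h2 : Real.exp 2 = Real.exp 1 * Real.exp 1 := by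
      rw [← Real.exp_add]; norm_num
    nlinarith [Real.exp_pos 1]
  have hlog : (2:ℝ) ≤ Real.log t := le_trans h2 (Real.log_le_log (by norm_num) h8)
  nlinarith

private lemma phi_nonneg {t : ℝ} (h0 : 0 ≤ t) : 0 ≤ t * Real.log t - t + 1 := by
  rcases le_total t 8 with h | h
  · nlinarith [phi_quad h0 h, sq_nonneg (t - 1)]
  · linarith [phi_tail h]

private lemma abs_sub_one_le {t η : ℝ} (h0 : 0 ≤ t) (hη : 0 < η) (hη1 : η ≤ 1) :
    |t - 1| ≤ η + 16 / η * (t * Real.log t - t + 1) := by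
  rcases le_total t 8 with h | h
  · have hq := phi_quad h0 h
    have key : η * |t - 1| ≤ η * η + 16 * (t * Real.log t - t + 1) := by
      nlinarith [sq_nonneg (|t - 1| - η), sq_abs (t - 1), abs_nonneg (t - 1),
        mul_nonneg (le_of_lt hη) (abs_nonneg (t - 1))]
    have h2 : η * (η + 16 / η * (t * Real.log t - t + 1))
        = η * η + 16 * (t * Real.log t - t + 1) := by
      field_simp
    rw [← mul_le_mul_iff_right₀ hη, h2]
    exact key
  · have ht := phi_tail h
    have hp := phi_nonneg h0
    have h16 : (1:ℝ) ≤ 16 / η := by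
      rw [le_div_iff₀ hη]; linarith
    have habs : |t - 1| = t - 1 := abs_of_nonneg (by linarith)
    rw [habs]
    nlinarith

/-- as `ε → ∞`, the entropic optimal transport cost converges to the
cost of the independent (product) coupling. -/
theorem otE_tendsto_atTop
    {X Y : Type*} [MetricSpace X] [CompactSpace X] [MeasurableSpace X] [BorelSpace X]
    [MetricSpace Y] [CompactSpace Y] [MeasurableSpace Y] [BorelSpace Y]
    (c : X → Y → ℝ) (hc : Continuous fun p : X × Y => c p.1 p.2)
    (hnonneg : ∀ x y, 0 ≤ c x y)
    (α : Measure X) (β : Measure Y) [IsProbabilityMeasure α] [IsProbabilityMeasure β] :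
    Tendsto (fun ε : ℝ => otE c ε α β) atTop
      (nhds (((∫ x, ∫ y, c x y ∂β ∂α : ℝ)) : EReal)) := by
  set μ := α.prod β with hμdef
  set g : X × Y → ℝ := fun p => c p.1 p.2 with hgdef
  -- nonemptiness
  haveI hXY : Nonempty (X × Y) := by
    by_contra h
    rw [not_nonempty_iff] at h
    have h1 : μ Set.univ = 1 := measure_univ
    rw [Set.univ_eq_empty_iff.mpr h, measure_empty] at h1
    exact zero_ne_one h1
  -- bound on c
  obtain ⟨p₀, -, hp₀⟩ := isCompact_univ.exists_isMaxOn Set.univ_nonempty hc.continuousOn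
  set C : ℝ := g p₀ with hCdef
  have hC0 : 0 ≤ C := hnonneg _ _
  have hCb : ∀ p, g p ≤ C := fun p => hp₀ (Set.mem_univ p)
  have hgm : Measurable g := hc.measurable
  have hint : ∀ (ν : Measure (X × Y)) [IsFiniteMeasure ν], Integrable g ν := by
    intro ν _
    refine (integrable_const C).mono' hgm.aestronglyMeasurable (ae_of_all _ fun p => ?_)
    rw [Real.norm_eq_abs, abs_of_nonneg (hnonneg _ _)]
    exact hCb p
  set I : ℝ := ∫ p, g p ∂μ with hIdef
  have hI : I = ∫ x, ∫ y, c x y ∂β ∂α := integral_prod g (hint μ)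
  -- upper bound
  have hub : ∀ ε : ℝ, otE c ε α β ≤ (I : EReal) := by
    intro ε
    have hmem : μ ∈ {π : Measure (X × Y) | π.map Prod.fst = α ∧ π.map Prod.snd = β} := by
      constructor
      · rw [hμdef, Measure.map_fst_prod, measure_univ, one_smul]
      · rw [hμdef, Measure.map_snd_prod, measure_univ, one_smul]
    have hkl : klE μ μ = 0 := by
      have hll : llr μ μ =ᵐ[μ] 0 := by
        filter_upwards [μ.rnDeriv_self] with x hx
        simp [llr_def, hx]
      have hInt : Integrable (llr μ μ) μ := (integrable_zero _ _ _).congr hll.symm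
      rw [klE, if_pos ⟨Measure.AbsolutelyContinuous.rfl, hInt⟩, integral_congr_ae hll]
      simp
    calc otE c ε α β ≤ ((∫ p, g p ∂μ : ℝ) : EReal) + (ε : EReal) * klE μ μ := by
          rw [otE]
          exact iInf₂_le μ hmem
      _ = (I : EReal) := by rw [hkl, mul_zero, add_zero]
  -- lower bound
  have hlb : ∀ δ : ℝ, 0 < δ → ∃ ε₀ : ℝ, ∀ ε ≥ ε₀,
      ((I - δ : ℝ) : EReal) ≤ otE c ε α β := by
    intro δ hδ
    set η : ℝ := min 1 (δ / (C + 1)) with hηdef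
    have hη0 : 0 < η := lt_min one_pos (div_pos hδ (by linarith))
    have hη1 : η ≤ 1 := min_le_left _ _
    have hηC1 : η * (C + 1) ≤ δ := by
      have h := min_le_right 1 (δ / (C + 1))
      calc η * (C + 1) ≤ δ / (C + 1) * (C + 1) :=
            mul_le_mul_of_nonneg_right h (by linarith)
        _ = δ := div_mul_cancel₀ _ (by linarith)
    have hηδ : C * η ≤ δ := by nlinarith
    refine ⟨max 1 (16 * C / η), fun ε hε => ?_⟩
    have hε1 : (1:ℝ) ≤ ε := le_trans (le_max_left _ _) hε
    have hεC : 16 * C / η ≤ ε := le_trans (le_max_right _ _) hε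
    rw [otE]
    refine le_iInf₂ fun π hπ => ?_
    obtain ⟨hπ1, hπ2⟩ := hπ
    haveI : IsProbabilityMeasure π := by
      constructor
      have h := congrArg (fun m : Measure X => m Set.univ) hπ1
      simpa [Measure.map_apply measurable_fst MeasurableSet.univ] using h
    haveI : π.HaveLebesgueDecomposition μ :=
      @Measure.haveLebesgueDecomposition_of_sigmaFinite _ _ π μ inferInstance (by rw [hμdef]; infer_instance)
    by_cases hkl : π ≪ μ ∧ Integrable (llr π μ) π
    · obtain ⟨hac, hll⟩ := hkl
      rw [klE, if_pos ⟨hac, hll⟩]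
      set K : ℝ := ∫ z, llr π μ z ∂π with hKdef
      rw [← EReal.coe_mul, ← EReal.coe_add, EReal.coe_le_coe_iff]
      set ρ : X × Y → ℝ := fun z => (π.rnDeriv μ z).toReal with hρdef
      have hρ0 : ∀ z, 0 ≤ ρ z := fun z => ENNReal.toReal_nonneg
      have hρint : Integrable ρ μ := Measure.integrable_toReal_rnDeriv
      have hρ1 : ∫ z, ρ z ∂μ = 1 := by
        rw [hρdef, Measure.integral_toReal_rnDeriv hac, probReal_univ]
      have hKtrans : ∫ z, ρ z * llr π μ z ∂μ = K := by
        simpa [smul_eq_mul] using integral_rnDeriv_smul hac (f := llr π μ)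
      have hKint : Integrable (fun z => ρ z * llr π μ z) μ := by
        simpa [smul_eq_mul] using (integrable_rnDeriv_smul_iff hac (f := llr π μ)).mpr hll
      have hφint : Integrable (fun z => ρ z * llr π μ z - ρ z + 1) μ :=
        (hKint.sub hρint).add (integrable_const 1)
      have hφ0 : ∀ z, 0 ≤ ρ z * llr π μ z - ρ z + 1 := fun z => by
        simpa [llr_def] using phi_nonneg (hρ0 z)
      have hsub : Integrable (fun z => ρ z * llr π μ z - ρ z) μ := hKint.sub hρint
      have hφI : ∫ z, (ρ z * llr π μ z - ρ z + 1) ∂μ = K := by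
        rw [integral_add hsub (integrable_const 1),
          integral_sub hKint hρint, hKtrans, hρ1, integral_const, probReal_univ]
        simp
      have hK0 : 0 ≤ K := hφI ▸ integral_nonneg hφ0
      have habs : Integrable (fun z => |ρ z - 1|) μ := (hρint.sub (integrable_const 1)).abs
      have habsI : ∫ z, |ρ z - 1| ∂μ ≤ η + 16 / η * K := by
        have hmono : ∫ z, |ρ z - 1| ∂μ
            ≤ ∫ z, (η + 16 / η * (ρ z * llr π μ z - ρ z + 1)) ∂μ := by
          refine integral_mono habs ((integrable_const η).add (hφint.const_mul _)) fun z => ?_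
          simpa [llr_def] using abs_sub_one_le (hρ0 z) hη0 hη1
        rwa [integral_add (integrable_const η) (hφint.const_mul _), integral_const,
          probReal_univ, smul_eq_mul, one_mul,
          integral_const_mul, hφI] at hmono
      have hgπ : ∫ p, g p ∂π = ∫ z, ρ z * g z ∂μ := by
        simpa [smul_eq_mul] using (integral_rnDeriv_smul hac (f := g)).symm
      have hρg : Integrable (fun z => ρ z * g z) μ := by
        simpa [smul_eq_mul] using (integrable_rnDeriv_smul_iff hac (f := g)).mpr (hint π)
      have hdiff : I - ∫ p, g p ∂π ≤ C * ∫ z, |ρ z - 1| ∂μ := by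
        have h1 : I - ∫ p, g p ∂π = ∫ z, (1 - ρ z) * g z ∂μ := by
          rw [hgπ, hIdef, ← integral_sub (hint μ) hρg]
          congr 1
          ext z
          ring
        rw [h1, ← integral_const_mul]
        have hsub2 : Integrable (fun z => g z - ρ z * g z) μ := (hint μ).sub hρg
        refine integral_mono (hsub2.congr (ae_of_all _ fun z => by ring))
          (habs.const_mul C) fun z => ?_
        rcases le_total (ρ z) 1 with hz | hz
        · have habs1 : |ρ z - 1| = 1 - ρ z := by rw [abs_of_nonpos (by linarith)]; ring
          rw [habs1]
          calc (1 - ρ z) * g z ≤ (1 - ρ z) * C := mul_le_mul_of_nonneg_left (hCb z) (by linarith)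
            _ = C * (1 - ρ z) := mul_comm _ _
        · have h2 : (1 - ρ z) * g z ≤ 0 :=
            mul_nonpos_of_nonpos_of_nonneg (by linarith) (hnonneg _ _)
          have h3 : 0 ≤ C * |ρ z - 1| := mul_nonneg hC0 (abs_nonneg _)
          linarith
      -- combine
      have h3 := mul_le_mul_of_nonneg_left habsI hC0
      have hεK : 16 * C / η * K ≤ ε * K := mul_le_mul_of_nonneg_right hεC hK0
      have hexp : C * (η + 16 / η * K) = C * η + 16 * C / η * K := by ring
      rw [hexp] at h3
      linarith
    · rw [klE, if_neg hkl, EReal.mul_top_of_pos (by exact_mod_cast lt_of_lt_of_le one_pos hε1),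
        EReal.add_top_of_ne_bot (EReal.coe_ne_bot _)]
      exact le_top
  -- conclude
  rw [← hI]
  rw [tendsto_order]
  constructor
  · intro a ha
    obtain ⟨r, har, hrI⟩ := EReal.exists_between_coe_real ha
    have hδ : 0 < I - r := by
      have : r < I := EReal.coe_lt_coe_iff.mp hrI
      linarith
    obtain ⟨ε₀, hε₀⟩ := hlb (I - r) hδ
    filter_upwards [eventually_ge_atTop ε₀] with ε hε
    have h2 := hε₀ ε hε
    rw [sub_sub_cancel] at h2
    exact lt_of_lt_of_le har h2
  · intro a ha
    filter_upwards with ε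
    exact lt_of_le_of_lt (hub ε) ha
end

section
/- Let X and Y be compact metric spaces, c : X × Y → ℝ a continuous nonnegative cost, and α, β Borel probability measures on X and Y. For each ε > 0 let π_ε ∈ Π(α,β) be a coupling attaining the infimum in OT_ε(α,β). Then π_ε converges to the product measure α⊗β in total variation as ε → +∞: ‖π_ε − α⊗β‖_TV → 0. -/
open MeasureTheory Classical Filter

section PinskerAux

-- monotonicity helper
lemma mono_aux {g : ℝ → ℝ} {g' : ℝ → ℝ} (hd : ∀ y : ℝ, 1 ≤ y → HasDerivAt g (g' y) y)
    (hnn : ∀ y : ℝ, 1 ≤ y → 0 ≤ g' y) {x : ℝ} (hx : 1 ≤ x) : g 1 ≤ g x := by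
  have : MonotoneOn g (Set.Ici (1:ℝ)) := by
    refine monotoneOn_of_deriv_nonneg (convex_Ici 1) ?_ ?_ ?_
    · exact fun y hy => ((hd y hy).continuousAt).continuousWithinAt
    · intro y hy
      rw [interior_Ici] at hy
      exact ((hd y hy.le).differentiableAt).differentiableWithinAt
    · intro y hy
      rw [interior_Ici] at hy
      rw [(hd y hy.le).deriv]
      exact hnn y hy.le
  exact this (Set.self_mem_Ici) hx hx

lemma log_ge_pade {x : ℝ} (hx : 1 ≤ x) : 2*(x-1)/(x+1) ≤ Real.log x := by
  have h := mono_aux (g := fun t => Real.log t - 2*(t-1)/(t+1))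
    (g' := fun t => 1/t - 4/(t+1)^2) ?_ ?_ hx
  · simpa using h
  · intro y hy
    have hy0 : y ≠ 0 := by positivity
    have hy1 : y + 1 ≠ 0 := by positivity
    have h1 : HasDerivAt Real.log (1/y) y := by
      simpa [one_div] using Real.hasDerivAt_log hy0
    have h2 : HasDerivAt (fun t : ℝ => 2*(t-1)/(t+1)) (4/(y+1)^2) y := by
      have ha : HasDerivAt (fun t : ℝ => 2*(t-1)) 2 y := by
        simpa using ((hasDerivAt_id y).sub_const 1).const_mul 2
      have hb : HasDerivAt (fun t : ℝ => t+1) 1 y := (hasDerivAt_id y).add_const 1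
      have := ha.fun_div hb hy1
      refine this.congr_deriv ?_
      ring
    exact h1.sub h2
  · intro y hy
    have hy0 : (0:ℝ) < y := by linarith
    rw [sub_nonneg, div_le_div_iff₀ (by positivity) (by positivity)]
    nlinarith [sq_nonneg (y-1)]

lemma log_le_half {t : ℝ} (ht : 1 ≤ t) : 2 * Real.log t ≤ t - 1/t := by
  have h := mono_aux (g := fun y => y - 1/y - 2 * Real.log y)
    (g' := fun y => 1 + 1/y^2 - 2/y) ?_ ?_ ht
  · simp [one_div] at h ⊢; linarith
  · intro y hy
    have hy0 : y ≠ 0 := by positivity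
    have h1 : HasDerivAt (fun y : ℝ => y - 1/y) (1 + 1/y^2) y := by
      have := ((hasDerivAt_id' y).fun_sub ((hasDerivAt_inv hy0)))
      simpa [one_div, sub_neg_eq_add] using this
    have h2 : HasDerivAt (fun y : ℝ => 2 * Real.log y) (2/y) y := by
      simpa [div_eq_mul_inv, mul_comm] using (Real.hasDerivAt_log hy0).const_mul 2
    simpa using h1.fun_sub h2
  · intro y hy
    have hy0 : (0:ℝ) < y := by linarith
    have : 0 ≤ (1 - 1/y)^2 := sq_nonneg _
    have hh : (1 - 1/y)^2 = 1 + 1/y^2 - 2/y := by field_simp; ring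
    linarith [hh ▸ this]

lemma pointwise_pinsker {x : ℝ} (hx : 0 ≤ x) :
    (x-1)^2 ≤ 2 * max 1 x * (x * Real.log x - x + 1) := by
  rcases eq_or_lt_of_le hx with h0 | h0
  · simp [← h0]
  rcases le_total x 1 with hx1 | hx1
  · rw [max_eq_left hx1]
    set s := Real.sqrt x with hs
    have hs0 : 0 ≤ s := Real.sqrt_nonneg x
    have hs1 : s ≤ 1 := by
      rw [hs, show (1:ℝ) = Real.sqrt 1 by simp]
      exact Real.sqrt_le_sqrt hx1
    have hsx : s^2 = x := Real.sq_sqrt hx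
    have hsp : 0 < s := Real.sqrt_pos.mpr h0
    -- log x ≥ (x-1)/s
    have hlog : (x - 1)/s ≤ Real.log x := by
      have ht : 1 ≤ 1/s := by
        rw [le_div_iff₀ hsp]; linarith
      have := log_le_half ht
      have hlog1 : Real.log (1/s) = - Real.log s := by simp
      have hx2 : Real.log x = 2 * Real.log s := by
        rw [← hsx, Real.log_pow]; push_cast; ring
      rw [hlog1] at this
      have : -(2 * Real.log s) ≤ 1/s - s := by
        have h1s : 1/(1/s) = s := by field_simp
        calc -(2 * Real.log s) = 2 * Real.log (1/s) := by rw [hlog1]; ring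
        _ ≤ 1/s - 1/(1/s) := log_le_half ht
        _ = 1/s - s := by rw [h1s]
      rw [hx2]
      rw [div_le_iff₀ hsp]
      have := mul_le_mul_of_nonneg_right this (le_of_lt hsp)
      have hss : (1/s - s) * s = 1 - s^2 := by field_simp
      rw [hss] at this
      nlinarith [hsx]
    have hxlog : s * (x - 1) ≤ x * Real.log x := by
      have := mul_le_mul_of_nonneg_left hlog hx
      calc s * (x-1) = x * ((x-1)/s) := by
            rw [← hsx]; field_simp
      _ ≤ x * Real.log x := this
    nlinarith [mul_nonneg (mul_nonneg (sq_nonneg (s-1)) (by linarith : (0:ℝ) ≤ s+1)) (by linarith : (0:ℝ) ≤ 1 - s), hsx]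
  · rw [max_eq_right hx1]
    have h1 : 2*(x-1)/(x+1) ≤ Real.log x := log_ge_pade hx1
    have h2 : 2*(x-1) ≤ (x+1) * Real.log x := by
      rw [div_le_iff₀ (by linarith : (0:ℝ) < x+1)] at h1
      linarith
    have h3 : 2*x*(x-1) ≤ x*((x+1) * Real.log x) :=
      le_trans (by nlinarith) (mul_le_mul_of_nonneg_left h2 hx)
    nlinarith [sq_nonneg (x-1), mul_le_mul_of_nonneg_left h2 (by linarith : (0:ℝ) ≤ x)]

lemma entropy_term_nonneg {x : ℝ} (hx : 0 ≤ x) : 0 ≤ x * Real.log x - x + 1 := by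
  have h := pointwise_pinsker hx
  have h2 : (0:ℝ) < 2 * max 1 x := by positivity
  nlinarith [sq_nonneg (x-1)]

lemma pinsker_aux {Z : Type*} [MeasurableSpace Z] (π μ : Measure Z)
    [IsProbabilityMeasure π] [IsProbabilityMeasure μ]
    (hπμ : π ≪ μ) (hint : Integrable (llr π μ) π) :
    0 ≤ ∫ z, llr π μ z ∂π ∧
    ∫ z, |(π.rnDeriv μ z).toReal - 1| ∂μ ≤ 2 * Real.sqrt (∫ z, llr π μ z ∂π) := by
  set f : Z → ℝ := fun z => (π.rnDeriv μ z).toReal with hfdef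
  have hf_meas : Measurable f := (Measure.measurable_rnDeriv π μ).ennreal_toReal
  have hf_nn : ∀ z, 0 ≤ f z := fun z => ENNReal.toReal_nonneg
  have hf_int : Integrable f μ := Measure.integrable_toReal_rnDeriv
  have hf_one : ∫ z, f z ∂μ = 1 := by
    rw [Measure.integral_toReal_rnDeriv hπμ]; simp
  have hk_eq : ∫ z, llr π μ z ∂π = ∫ z, f z * Real.log (f z) ∂μ := by
    rw [← integral_rnDeriv_smul hπμ]
    simp_rw [smul_eq_mul, llr_def]
    rfl
  have hL_int : Integrable (fun z => f z * Real.log (f z)) μ := by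
    have := (integrable_rnDeriv_smul_iff hπμ (f := llr π μ)).mpr hint
    simpa [llr_def, smul_eq_mul] using this
  set h : Z → ℝ := fun z => f z * Real.log (f z) - f z + 1 with hhdef
  have hint1 : Integrable (fun z => f z * Real.log (f z) - f z) μ := by
    exact hL_int.sub hf_int
  have hh_int : Integrable h μ := by exact hint1.add (integrable_const 1)
  have hh_nn : ∀ z, 0 ≤ h z := fun z => entropy_term_nonneg (hf_nn z)
  have hk_h : ∫ z, h z ∂μ = ∫ z, llr π μ z ∂π := by
    rw [hk_eq, hhdef]
    rw [integral_add hint1 (integrable_const 1), integral_sub hL_int hf_int, hf_one]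
    simp
  have hk_nn : 0 ≤ ∫ z, llr π μ z ∂π := by
    rw [← hk_h]; exact integral_nonneg hh_nn
  refine ⟨hk_nn, ?_⟩
  set w : Z → ℝ := fun z => 2 * max 1 (f z) with hwdef
  have hw_pos : ∀ z, 0 < w z := fun z => by
    have : (1:ℝ) ≤ max 1 (f z) := le_max_left _ _
    simp only [hwdef]; linarith
  have hw_meas : Measurable w := (measurable_const.max hf_meas).const_mul 2
  have hw_int : Integrable w μ := by
    refine Integrable.mono' ((integrable_const 2).add (hf_int.const_mul 2)) hw_meas.aestronglyMeasurable ?_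
    refine Filter.Eventually.of_forall fun z => ?_
    have h1 : max 1 (f z) ≤ 1 + f z := max_le (by linarith [hf_nn z]) (by linarith)
    rw [Real.norm_of_nonneg (hw_pos z).le]
    simp only [hwdef, Pi.add_apply]
    linarith
  have hw_le : ∫ z, w z ∂μ ≤ 4 := by
    calc ∫ z, w z ∂μ ≤ ∫ z, (2 + 2 * f z) ∂μ := by
          refine integral_mono hw_int ((integrable_const 2).add (hf_int.const_mul 2)) fun z => ?_
          have h1 : max 1 (f z) ≤ 1 + f z := max_le (by linarith [hf_nn z]) (by linarith)
          simp only [hwdef, Pi.add_apply]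
          linarith
    _ = 4 := by
          rw [integral_add (integrable_const 2) (hf_int.const_mul 2), integral_const,
            integral_const_mul, hf_one]
          simp
          norm_num
  set a : Z → ℝ := fun z => Real.sqrt (w z) with hadef
  set b : Z → ℝ := fun z => |f z - 1| / Real.sqrt (w z) with hbdef
  have hsq_pos : ∀ z, 0 < Real.sqrt (w z) := fun z => Real.sqrt_pos.mpr (hw_pos z)
  have hab : ∀ z, a z * b z = |f z - 1| := fun z => by
    rw [hadef, hbdef]
    field_simp
    exact mul_div_cancel_left₀ _ (hsq_pos z).ne'
  have ha2 : ∀ z, a z ^ 2 = w z := fun z => Real.sq_sqrt (hw_pos z).le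
  have hb2 : ∀ z, b z ^ 2 = (f z - 1)^2 / w z := fun z => by
    rw [hbdef, div_pow, sq_abs, Real.sq_sqrt (hw_pos z).le]
  have hb2_le : ∀ z, b z ^ 2 ≤ h z := fun z => by
    rw [hb2 z, div_le_iff₀ (hw_pos z)]
    calc (f z - 1)^2 ≤ 2 * max 1 (f z) * (f z * Real.log (f z) - f z + 1) :=
      pointwise_pinsker (hf_nn z)
    _ = h z * w z := by rw [hhdef, hwdef]; ring
  have ha_meas : Measurable a := hw_meas.sqrt
  have hb_meas : Measurable b := ((hf_meas.sub measurable_const).abs).div ha_meas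
  have ha_mem : MemLp a 2 μ := by
    rw [memLp_two_iff_integrable_sq ha_meas.aestronglyMeasurable]
    exact hw_int.congr (Filter.Eventually.of_forall fun z => (ha2 z).symm)
  have hb2_int : Integrable (fun z => b z ^ 2) μ := by
    refine Integrable.mono' hh_int ((hb_meas.pow_const 2).aestronglyMeasurable) ?_
    refine Filter.Eventually.of_forall fun z => ?_
    rw [Real.norm_of_nonneg (sq_nonneg _)]
    exact hb2_le z
  have hb_mem : MemLp b 2 μ := by
    rw [memLp_two_iff_integrable_sq hb_meas.aestronglyMeasurable]
    exact hb2_int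
  have hconj : Real.HolderConjugate 2 2 := Real.HolderConjugate.two_two
  have hCS := integral_mul_le_Lp_mul_Lq_of_nonneg hconj
    (Filter.Eventually.of_forall fun z => Real.sqrt_nonneg (w z))
    (Filter.Eventually.of_forall fun z => div_nonneg (abs_nonneg _) (Real.sqrt_nonneg _))
    (by simpa using ha_mem) (by simpa using hb_mem)
  have hCS' : ∫ z, |f z - 1| ∂μ ≤ (∫ z, a z ^ (2:ℝ) ∂μ) ^ (1/(2:ℝ)) * (∫ z, b z ^ (2:ℝ) ∂μ) ^ (1/(2:ℝ)) := by
    calc ∫ z, |f z - 1| ∂μ = ∫ z, a z * b z ∂μ := by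
          exact integral_congr_ae (Filter.Eventually.of_forall fun z => (hab z).symm)
    _ ≤ _ := hCS
  simp only [Real.rpow_two] at hCS'
  have h1 : (∫ z, a z ^ 2 ∂μ) ^ (1/(2:ℝ)) ≤ 2 := by
    rw [← Real.sqrt_eq_rpow]
    have : ∫ z, a z ^ 2 ∂μ ≤ 4 := by
      rw [integral_congr_ae (Filter.Eventually.of_forall fun z => ha2 z)]
      exact hw_le
    calc Real.sqrt (∫ z, a z ^ 2 ∂μ) ≤ Real.sqrt 4 := Real.sqrt_le_sqrt this
    _ = 2 := by
      rw [show (4:ℝ) = 2^2 by norm_num, Real.sqrt_sq (by norm_num : (0:ℝ) ≤ 2)]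
  have h2 : (∫ z, b z ^ 2 ∂μ) ^ (1/(2:ℝ)) ≤ Real.sqrt (∫ z, llr π μ z ∂π) := by
    rw [← Real.sqrt_eq_rpow]
    refine Real.sqrt_le_sqrt ?_
    rw [← hk_h]
    exact integral_mono hb2_int hh_int hb2_le
  have hnn1 : 0 ≤ (∫ z, b z ^ 2 ∂μ) ^ (1/(2:ℝ)) := by
    rw [← Real.sqrt_eq_rpow]; exact Real.sqrt_nonneg _
  calc ∫ z, |f z - 1| ∂μ ≤ (∫ z, a z ^ 2 ∂μ) ^ (1/(2:ℝ)) * (∫ z, b z ^ 2 ∂μ) ^ (1/(2:ℝ)) := hCS'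
  _ ≤ 2 * Real.sqrt (∫ z, llr π μ z ∂π) := by
      refine mul_le_mul h1 h2 hnn1 (by norm_num)

lemma tv_le {Z : Type*} [MeasurableSpace Z] (π μ : Measure Z)
    [IsProbabilityMeasure π] [IsProbabilityMeasure μ] (hπμ : π ≪ μ) :
    (π.toSignedMeasure - μ.toSignedMeasure).totalVariation Set.univ
      ≤ ENNReal.ofReal (2 * ∫ z, |(π.rnDeriv μ z).toReal - 1| ∂μ) := by
  set f : Z → ℝ := fun z => (π.rnDeriv μ z).toReal with hfdef
  set I : ℝ := ∫ z, |f z - 1| ∂μ with hIdef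
  have hf_int : Integrable f μ := Measure.integrable_toReal_rnDeriv
  have habs_int : Integrable (fun z => |f z - 1|) μ := (hf_int.sub (integrable_const 1)).abs
  have hI_nn : 0 ≤ I := integral_nonneg fun z => abs_nonneg _
  set s := π.toSignedMeasure - μ.toSignedMeasure with hsdef
  -- key bound
  have key : ∀ A : Set Z, MeasurableSet A → s A ≤ I ∧ -s A ≤ I := by
    intro A hA
    have hsA : s A = ∫ z in A, (f z - 1) ∂μ := by
      rw [hsdef, VectorMeasure.sub_apply, Measure.toSignedMeasure_apply_measurable hA,
        Measure.toSignedMeasure_apply_measurable hA,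
        integral_sub (hf_int.integrableOn) (integrable_const 1).integrableOn,
        Measure.setIntegral_toReal_rnDeriv hπμ A]
      simp
    have habs : |∫ z in A, (f z - 1) ∂μ| ≤ I := by
      calc |∫ z in A, (f z - 1) ∂μ| ≤ ∫ z in A, |f z - 1| ∂μ := by
            calc |∫ z in A, (f z - 1) ∂μ| = ‖∫ z in A, (f z - 1) ∂μ‖ := (Real.norm_eq_abs _).symm
              _ ≤ ∫ z in A, ‖f z - 1‖ ∂μ := norm_integral_le_integral_norm _
              _ = ∫ z in A, |f z - 1| ∂μ := by simp [Real.norm_eq_abs]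
      _ ≤ I := setIntegral_le_integral habs_int (Filter.Eventually.of_forall fun z => abs_nonneg _)
    rw [hsA]
    constructor
    · exact le_trans (le_abs_self _) habs
    · exact le_trans (neg_le_abs _) habs
  obtain ⟨i, hi₁, hi₂, hi₃, hpos, hneg⟩ := s.toJordanDecomposition_spec
  rw [SignedMeasure.totalVariation, Measure.add_apply, hpos, hneg,
    SignedMeasure.toMeasureOfZeroLE_apply _ hi₂ hi₁ MeasurableSet.univ,
    SignedMeasure.toMeasureOfLEZero_apply _ hi₃ hi₁.compl MeasurableSet.univ]
  have h1 := (key (i ∩ Set.univ) (hi₁.inter MeasurableSet.univ)).1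
  have h2 := (key (iᶜ ∩ Set.univ) (hi₁.compl.inter MeasurableSet.univ)).2
  have hcoe : ∀ (r : ℝ) (hr : 0 ≤ r), r ≤ I → (ENNReal.ofNNReal ⟨r, hr⟩) ≤ ENNReal.ofReal I := by
    intro r hr hrI
    rw [ENNReal.ofReal_eq_coe_nnreal hI_nn]
    exact ENNReal.coe_le_coe.mpr hrI
  refine le_trans (add_le_add (hcoe _ _ h1) (hcoe _ _ h2)) ?_
  rw [← ENNReal.ofReal_add hI_nn hI_nn, two_mul]

end PinskerAux

/-- optimal entropic plans converge in total variation to the product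
measure as `ε → ∞`. -/
theorem optimal_plans_tendsto_product_tv
    {X Y : Type*} [MetricSpace X] [CompactSpace X] [MeasurableSpace X] [BorelSpace X]
    [MetricSpace Y] [CompactSpace Y] [MeasurableSpace Y] [BorelSpace Y]
    (c : X → Y → ℝ) (hc : Continuous fun p : X × Y => c p.1 p.2)
    (hnonneg : ∀ x y, 0 ≤ c x y)
    (α : Measure X) (β : Measure Y) [IsProbabilityMeasure α] [IsProbabilityMeasure β]
    (πε : ℝ → Measure (X × Y)) [∀ ε, IsProbabilityMeasure (πε ε)]
    (hmarg1 : ∀ ε : ℝ, 0 < ε → (πε ε).map Prod.fst = α)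
    (hmarg2 : ∀ ε : ℝ, 0 < ε → (πε ε).map Prod.snd = β)
    (hopt : ∀ ε : ℝ, 0 < ε →
      ((∫ p, c p.1 p.2 ∂(πε ε) : ℝ) : EReal) + (ε : EReal) * klE (πε ε) (α.prod β)
        = otE c ε α β) :
    Tendsto (fun ε : ℝ =>
        ((πε ε).toSignedMeasure - (α.prod β).toSignedMeasure).totalVariation Set.univ)
      atTop (nhds 0) := by
  set μ : Measure (X × Y) := α.prod β with hμdef
  set C : ℝ := ∫ p, c p.1 p.2 ∂μ with hCdef
  have hC_nn : 0 ≤ C := integral_nonneg fun p => hnonneg p.1 p.2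
  -- klE μ μ = 0
  have hll : llr μ μ =ᵐ[μ] 0 := by
    filter_upwards [μ.rnDeriv_self] with z hz
    simp [llr_def, hz]
  have hint0 : Integrable (llr μ μ) μ :=
    (integrable_congr hll).mpr (integrable_zero _ _ _)
  have hklself : klE μ μ = ((0:ℝ) : EReal) := by
    rw [klE, if_pos ⟨Measure.AbsolutelyContinuous.rfl, hint0⟩]
    norm_num [integral_congr_ae hll]
  have hot_le : ∀ ε : ℝ, otE c ε α β ≤ ((C : ℝ) : EReal) := by
    intro ε
    have hmem : μ ∈ {π : Measure (X × Y) | π.map Prod.fst = α ∧ π.map Prod.snd = β} := by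
      constructor
      · rw [hμdef, Measure.map_fst_prod]; simp
      · rw [hμdef, Measure.map_snd_prod]; simp
    calc otE c ε α β ≤ ((∫ p, c p.1 p.2 ∂μ : ℝ) : EReal) + (ε : EReal) * klE μ μ :=
          iInf₂_le μ hmem
    _ = ((C : ℝ) : EReal) := by
          rw [hklself]
          simp
          rfl
  have hmain : ∀ ε : ℝ, 0 < ε → (πε ε) ≪ μ ∧ Integrable (llr (πε ε) μ) (πε ε) ∧
      ∫ z, llr (πε ε) μ z ∂(πε ε) ≤ C / ε := by
    intro ε hε
    have hle : ((∫ p, c p.1 p.2 ∂(πε ε) : ℝ) : EReal) + (ε : EReal) * klE (πε ε) μ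
        ≤ ((C : ℝ) : EReal) := (hopt ε hε) ▸ hot_le ε
    have hA_nn : 0 ≤ ∫ p, c p.1 p.2 ∂(πε ε) := integral_nonneg fun p => hnonneg _ _
    by_cases hcond : (πε ε) ≪ μ ∧ Integrable (llr (πε ε) μ) (πε ε)
    · refine ⟨hcond.1, hcond.2, ?_⟩
      rw [klE, if_pos hcond] at hle
      rw [← EReal.coe_mul, ← EReal.coe_add, EReal.coe_le_coe_iff] at hle
      rw [le_div_iff₀ hε]
      linarith
    · exfalso
      rw [klE, if_neg hcond] at hle
      have htop : (ε : EReal) * (⊤ : EReal) = ⊤ := by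
        rw [EReal.mul_top_of_pos]
        exact_mod_cast hε
      rw [htop] at hle
      have : ((∫ p, c p.1 p.2 ∂(πε ε) : ℝ) : EReal) + (⊤ : EReal) = ⊤ := by
        rw [EReal.add_top_iff_ne_bot]
        exact EReal.coe_ne_bot _
      rw [this] at hle
      exact (EReal.coe_lt_top C).not_ge hle
  have hbound : ∀ ε : ℝ, 0 < ε →
      ((πε ε).toSignedMeasure - μ.toSignedMeasure).totalVariation Set.univ
        ≤ ENNReal.ofReal (4 * Real.sqrt (C / ε)) := by
    intro ε hε
    obtain ⟨hac, hintl, hk⟩ := hmain ε hε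
    obtain ⟨hknn, hpk⟩ := pinsker_aux (πε ε) μ hac hintl
    calc ((πε ε).toSignedMeasure - μ.toSignedMeasure).totalVariation Set.univ
        ≤ ENNReal.ofReal (2 * ∫ z, |((πε ε).rnDeriv μ z).toReal - 1| ∂μ) := tv_le _ _ hac
    _ ≤ ENNReal.ofReal (4 * Real.sqrt (C / ε)) := by
        refine ENNReal.ofReal_le_ofReal ?_
        have hs : Real.sqrt (∫ z, llr (πε ε) μ z ∂(πε ε)) ≤ Real.sqrt (C / ε) :=
          Real.sqrt_le_sqrt hk
        nlinarith [Real.sqrt_nonneg (∫ z, llr (πε ε) μ z ∂(πε ε))]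
  have hlim : Tendsto (fun ε : ℝ => ENNReal.ofReal (4 * Real.sqrt (C / ε))) atTop (nhds 0) := by
    have h1 : Tendsto (fun ε : ℝ => C / ε) atTop (nhds 0) :=
      tendsto_const_nhds.div_atTop tendsto_id
    have h2 : Tendsto (fun ε : ℝ => 4 * Real.sqrt (C / ε)) atTop (nhds 0) := by
      have := (Real.continuous_sqrt.tendsto 0).comp h1
      simpa using this.const_mul 4
    have := (ENNReal.continuous_ofReal.tendsto 0).comp h2
    simpa [Function.comp_def] using this
  refine tendsto_of_tendsto_of_tendsto_of_le_of_le' tendsto_const_nhds hlim ?_ ?_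
  · exact Filter.Eventually.of_forall fun ε => zero_le
  · filter_upwards [eventually_gt_atTop 0] with ε hε
    exact hbound ε hε
end

section
/- Let X be a compact metric space, c : X × X → ℝ a continuous, symmetric, nonnegative cost, and α, β Borel probability measures on X. Then the Sinkhorn divergence converges as ε → +∞ to the maximum mean discrepancy associated with −c/2: lim_{ε→+∞} S_ε(α,β) = ∫∫ c dα⊗β − (1/2)·( ∫∫ c dα⊗α + ∫∫ c dβ⊗β ). -/
open MeasureTheory Classical Filter

section
variable {Z : Type*} [MeasurableSpace Z]

lemma fenchel_xlogx {x : ℝ} (s : ℝ) (hx : 0 ≤ x) : x * s - x * Real.log x ≤ Real.exp (s - 1) := by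
  rcases eq_or_lt_of_le hx with h | h
  · simp [← h, Real.exp_pos (s-1) |>.le]
  · have h1 : s - Real.log x ≤ Real.exp (s - Real.log x - 1) := by
      have := Real.add_one_le_exp (s - Real.log x - 1); linarith
    have h2 : x * (s - Real.log x) ≤ x * Real.exp (s - Real.log x - 1) :=
      mul_le_mul_of_nonneg_left h1 hx
    have h3 : x * Real.exp (s - Real.log x - 1) = Real.exp (s - 1) := by
      rw [show s - Real.log x - 1 = (s - 1) + (- Real.log x) by ring, Real.exp_add,
        Real.exp_neg, Real.exp_log h]
      field_simp
    nlinarith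

lemma exp_neg_le_quadratic {t : ℝ} (ht : 0 ≤ t) : Real.exp (-t) ≤ 1 - t + t^2/2 := by
  have h1 : 1 + t + t^2/2 ≤ Real.exp t := Real.quadratic_le_exp_of_nonneg ht
  have h2 : Real.exp (-t) * Real.exp t = 1 := by rw [← Real.exp_add]; simp
  have h3 : (0:ℝ) < 1 + t + t^2/2 := by positivity
  have h4 : Real.exp (-t) * (1 + t + t^2/2) ≤ 1 := by
    calc Real.exp (-t) * (1 + t + t^2/2) ≤ Real.exp (-t) * Real.exp t :=
          mul_le_mul_of_nonneg_left h1 (Real.exp_pos _).le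
      _ = 1 := h2
  nlinarith [sq_nonneg t, sq_nonneg (t^2)]

lemma integrable_of_bound {μ : Measure Z} [IsFiniteMeasure μ]
    {f : Z → ℝ} (hf : Measurable f) (M : ℝ) (h : ∀ z, |f z| ≤ M) : Integrable f μ :=
  (integrable_const M).mono' hf.aestronglyMeasurable (Filter.Eventually.of_forall h)

/-- Main analytic lower bound. -/
lemma lower_aux (μ π : Measure Z) [IsProbabilityMeasure μ] [IsProbabilityMeasure π]
    {g : Z → ℝ} (hg : Measurable g) {C : ℝ} (hC0 : 0 ≤ C) (hgC : ∀ z, g z ≤ C)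
    (hg0 : ∀ z, 0 ≤ g z) (hac : π ≪ μ) (hint : Integrable (llr π μ) π)
    {ε : ℝ} (hε : C < ε) :
    (∫ z, g z ∂μ) - C^2/(2*ε) ≤ (∫ z, g z ∂π) + ε * ∫ z, llr π μ z ∂π := by
  have hε0 : 0 < ε := lt_of_le_of_lt hC0 hε
  have hgabs : ∀ z, |g z| ≤ C := fun z => abs_le.2 ⟨by linarith [hg0 z], hgC z⟩
  have hgint : Integrable g μ := integrable_of_bound hg C hgabs
  have hgintπ : Integrable g π := integrable_of_bound hg C hgabs
  -- Z₀ := ∫ exp (-g/ε) dμ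
  set Z₀ : ℝ := ∫ z, Real.exp (-(g z) / ε) ∂μ with hZ₀
  have hexpmeas : Measurable fun z => Real.exp (-(g z) / ε) := (hg.neg.div_const ε).exp
  have hnegdiv : ∀ z, -(g z) / ε ≤ 0 := fun z =>
    (neg_div ε (g z)) ▸ neg_nonpos.2 (div_nonneg (hg0 z) hε0.le)
  have hexpbd : ∀ z, |Real.exp (-(g z) / ε)| ≤ 1 := by
    intro z
    rw [abs_of_pos (Real.exp_pos _)]
    exact Real.exp_le_one_iff.2 (hnegdiv z)
  have hexpint : Integrable (fun z => Real.exp (-(g z) / ε)) μ :=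
    integrable_of_bound hexpmeas 1 hexpbd
  have hZ₀pos : 0 < Z₀ := by
    have hle : ∀ z, Real.exp (-C / ε) ≤ Real.exp (-(g z) / ε) := by
      intro z
      apply Real.exp_le_exp.2
      gcongr
      exact hgC z
    calc (0:ℝ) < Real.exp (-C/ε) := Real.exp_pos _
      _ = ∫ _, Real.exp (-C/ε) ∂μ := by simp
      _ ≤ Z₀ := integral_mono (integrable_const _) hexpint hle
  -- quadratic bound on Z₀
  have hZ₀le : Z₀ ≤ 1 - (∫ z, g z ∂μ) / ε + C^2/(2*ε^2) := by
    have hpt : ∀ z, Real.exp (-(g z) / ε) ≤ 1 - g z / ε + C^2/(2*ε^2) := by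
      intro z
      have ht : 0 ≤ g z / ε := div_nonneg (hg0 z) hε0.le
      have := exp_neg_le_quadratic ht
      have hsq : (g z / ε)^2 ≤ (C / ε)^2 := by
        apply pow_le_pow_left₀ ht
        gcongr
        exact hgC z
      have : Real.exp (-(g z) / ε) ≤ 1 - g z / ε + (C/ε)^2/2 := by
        rw [neg_div]
        nlinarith
      calc Real.exp (-(g z)/ε) ≤ 1 - g z / ε + (C/ε)^2/2 := this
        _ = 1 - g z / ε + C^2/(2*ε^2) := by field_simp
    have : Z₀ ≤ ∫ z, (1 - g z / ε + C^2/(2*ε^2)) ∂μ := by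
      apply integral_mono hexpint _ hpt
      exact (integrable_const 1).sub (hgint.div_const ε) |>.add (integrable_const _)
    have heq : (fun z => 1 - g z / ε + C^2/(2*ε^2)) =
        fun z => (1 + C^2/(2*ε^2)) - g z / ε := by ext z; ring
    calc Z₀ ≤ ∫ z, (1 - g z / ε + C^2/(2*ε^2)) ∂μ := this
      _ = 1 - (∫ z, g z ∂μ) / ε + C^2/(2*ε^2) := by
          rw [heq, integral_sub (integrable_const _) (hgint.div_const ε), integral_div,
            integral_const]
          simp
          ring
  -- Gibbs: -ε log Z₀ ≤ ∫ g dπ + ε ∫ llr dπ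
  have hgibbs : -ε * Real.log Z₀ ≤ (∫ z, g z ∂π) + ε * ∫ z, llr π μ z ∂π := by
    set t : ℝ := 1 - Real.log Z₀ with ht
    set ρ : Z → ℝ := fun z => (π.rnDeriv μ z).toReal with hρ
    have hρmeas : Measurable ρ := (Measure.measurable_rnDeriv π μ).ennreal_toReal
    have hρnn : ∀ z, 0 ≤ ρ z := fun z => ENNReal.toReal_nonneg
    -- pointwise Fenchel
    have hpt : ∀ z, ε * t * ρ z - ε * Real.exp ((-(g z)/ε + t) - 1)
        ≤ ρ z • (g z + ε * llr π μ z) := by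
      intro z
      have hf := fenchel_xlogx (x := ρ z) (-(g z)/ε + t) (hρnn z)
      have := mul_le_mul_of_nonneg_left hf hε0.le
      have hllr : llr π μ z = Real.log (ρ z) := rfl
      rw [smul_eq_mul, hllr]
      have hexpand : ε * (ρ z * (-(g z)/ε + t)) = -(ρ z * g z) + ε * t * ρ z := by
        field_simp
      nlinarith [this]
    -- integrability
    have hllrint : Integrable (fun z => g z + ε * llr π μ z) π :=
      hgintπ.add (hint.const_mul ε)
    have hrhsint : Integrable (fun z => ρ z • (g z + ε * llr π μ z)) μ :=
      (integrable_rnDeriv_smul_iff hac).2 hllrint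
    have hρint : Integrable ρ μ := Measure.integrable_toReal_rnDeriv
    have hexpint2 : Integrable (fun z => Real.exp ((-(g z)/ε + t) - 1)) μ := by
      apply integrable_of_bound (((hg.neg.div_const ε).add_const t).sub_const 1).exp
        (Real.exp (t - 1))
      intro z
      rw [abs_of_pos (Real.exp_pos _)]
      apply Real.exp_le_exp.2
      have := hnegdiv z
      rw [Pi.neg_apply]
      linarith
    have hmono : ∫ z, (ε * t * ρ z - ε * Real.exp ((-(g z)/ε + t) - 1)) ∂μ
        ≤ ∫ z, ρ z • (g z + ε * llr π μ z) ∂μ :=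
      integral_mono ((hρint.const_mul _).sub (hexpint2.const_mul ε)) hrhsint hpt
    have hI1 : ∫ z, ρ z • (g z + ε * llr π μ z) ∂μ = (∫ z, g z ∂π) + ε * ∫ z, llr π μ z ∂π := by
      rw [integral_rnDeriv_smul hac, integral_add hgintπ (hint.const_mul ε),
        integral_const_mul]
    have hI2 : ∫ z, (ε * t * ρ z - ε * Real.exp ((-(g z)/ε + t) - 1)) ∂μ = -ε * Real.log Z₀ := by
      rw [integral_sub (hρint.const_mul _) (hexpint2.const_mul ε), integral_const_mul,
        integral_const_mul]
      have h1 : ∫ z, ρ z ∂μ = 1 := by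
        rw [hρ, Measure.integral_toReal_rnDeriv hac]; simp
      have h2 : ∫ z, Real.exp ((-(g z)/ε + t) - 1) ∂μ = Real.exp (t-1) * Z₀ := by
        rw [← integral_const_mul]
        congr 1 with z
        rw [← Real.exp_add]
        congr 1; ring
      rw [h1, h2, ht]
      have : Real.exp (1 - Real.log Z₀ - 1) = Z₀⁻¹ := by
        rw [show 1 - Real.log Z₀ - 1 = -Real.log Z₀ by ring, Real.exp_neg, Real.exp_log hZ₀pos]
      rw [this]
      field_simp
      ring
    rw [hI1, hI2] at hmono
    exact hmono
  -- combine
  have hA : (0:ℝ) < 1 - (∫ z, g z ∂μ) / ε + C^2/(2*ε^2) := by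
    have h1 : (∫ z, g z ∂μ) ≤ C := by
      calc (∫ z, g z ∂μ) ≤ ∫ _, C ∂μ := integral_mono hgint (integrable_const C) hgC
        _ = C := by simp
    have h2 : (∫ z, g z ∂μ) / ε ≤ C / ε := by gcongr
    have h3 : C / ε < 1 := (div_lt_one hε0).2 hε
    have h4 : 0 ≤ C^2/(2*ε^2) := by positivity
    linarith
  have hlog1 : Real.log Z₀ ≤ Real.log (1 - (∫ z, g z ∂μ) / ε + C^2/(2*ε^2)) :=
    Real.log_le_log hZ₀pos hZ₀le
  have hlog2 : Real.log (1 - (∫ z, g z ∂μ) / ε + C^2/(2*ε^2))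
      ≤ -((∫ z, g z ∂μ) / ε) + C^2/(2*ε^2) := by
    have := Real.log_le_sub_one_of_pos hA
    linarith
  have : (∫ z, g z ∂μ) - C^2/(2*ε) ≤ -ε * Real.log Z₀ := by
    have h5 : Real.log Z₀ ≤ -((∫ z, g z ∂μ) / ε) + C^2/(2*ε^2) := hlog1.trans hlog2
    have h6 : ε * Real.log Z₀ ≤ ε * (-((∫ z, g z ∂μ) / ε) + C^2/(2*ε^2)) :=
      mul_le_mul_of_nonneg_left h5 hε0.le
    have h7 : ε * (-((∫ z, g z ∂μ) / ε) + C^2/(2*ε^2)) = - (∫ z, g z ∂μ) + C^2/(2*ε) := by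
      field_simp
    linarith
  linarith [this.trans hgibbs]
end


lemma klE_self {Z : Type*} [MeasurableSpace Z] (μ : Measure Z) [SigmaFinite μ] :
    klE μ μ = 0 := by
  have h0 : llr μ μ =ᵐ[μ] fun _ => (0:ℝ) := by
    filter_upwards [Measure.rnDeriv_self μ] with z hz
    simp [llr, hz]
  have hint : Integrable (llr μ μ) μ := by
    rw [integrable_congr h0]; exact integrable_zero _ _ _
  rw [klE, if_pos ⟨Measure.AbsolutelyContinuous.refl μ, hint⟩, integral_congr_ae h0]
  simp

lemma otE_le_prod {X Y : Type*} [MeasurableSpace X] [MeasurableSpace Y]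
    (c : X → Y → ℝ) (ε : ℝ) (α : Measure X) (β : Measure Y)
    [IsProbabilityMeasure α] [IsProbabilityMeasure β] :
    otE c ε α β ≤ ((∫ p, c p.1 p.2 ∂(α.prod β) : ℝ) : EReal) := by
  have hmem : α.prod β ∈ {π : Measure (X × Y) | π.map Prod.fst = α ∧ π.map Prod.snd = β} := by
    constructor <;> simp
  refine (iInf₂_le _ hmem).trans_eq ?_
  rw [klE_self, mul_zero, add_zero]

lemma otE_ge {X Y : Type*} [MeasurableSpace X] [MeasurableSpace Y]
    (c : X → Y → ℝ) (hmeas : Measurable fun p : X × Y => c p.1 p.2)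
    {C : ℝ} (hC0 : 0 ≤ C) (hgC : ∀ x y, c x y ≤ C) (hg0 : ∀ x y, 0 ≤ c x y)
    (α : Measure X) (β : Measure Y) [IsProbabilityMeasure α] [IsProbabilityMeasure β]
    {ε : ℝ} (hε : C < ε) :
    (((∫ p, c p.1 p.2 ∂(α.prod β)) - C^2/(2*ε) : ℝ) : EReal) ≤ otE c ε α β := by
  have hε0 : 0 < ε := lt_of_le_of_lt hC0 hε
  refine le_iInf₂ fun π hπ => ?_
  haveI : IsProbabilityMeasure π := by
    constructor
    have h1 : π.map Prod.fst Set.univ = π Set.univ := by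
      rw [Measure.map_apply measurable_fst MeasurableSet.univ]; rfl
    rw [← h1, hπ.1]
    simp
  by_cases h : π ≪ α.prod β ∧ Integrable (llr π (α.prod β)) π
  · rw [klE, if_pos h, ← EReal.coe_mul, ← EReal.coe_add, EReal.coe_le_coe_iff]
    exact lower_aux (α.prod β) π hmeas hC0 (fun z => hgC z.1 z.2) (fun z => hg0 z.1 z.2)
      h.1 h.2 hε
  · rw [klE, if_neg h, EReal.coe_mul_top_of_pos hε0, EReal.coe_add_top]
    exact le_top

/-- Sinkhorn divergence for a symmetric cost `c` on `X`. -/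
noncomputable def sinkhornE {X : Type*} [MeasurableSpace X]
    (c : X → X → ℝ) (ε : ℝ) (α β : Measure X) [SFinite α] [SFinite β] : EReal :=
  otE c ε α β - (((1 : ℝ) / 2 : ℝ) : EReal) * (otE c ε α α + otE c ε β β)

/-- as `ε → ∞` the Sinkhorn divergence converges to the maximum mean
discrepancy associated with `-c/2`. -/
theorem sinkhorn_tendsto_mmd
    {X : Type*} [MetricSpace X] [CompactSpace X] [MeasurableSpace X] [BorelSpace X]
    (c : X → X → ℝ) (hc : Continuous fun p : X × X => c p.1 p.2)
    (hsymm : ∀ x x', c x x' = c x' x) (hnonneg : ∀ x x', 0 ≤ c x x')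
    (α β : Measure X) [IsProbabilityMeasure α] [IsProbabilityMeasure β] :
    Tendsto (fun ε : ℝ => sinkhornE c ε α β) atTop
      (nhds ((((∫ x, ∫ y, c x y ∂β ∂α)
        - (1 / 2) * ((∫ x, ∫ x', c x x' ∂α ∂α) + (∫ y, ∫ y', c y y' ∂β ∂β)) : ℝ)) : EReal)) := by
  have hmeas : Measurable fun p : X × X => c p.1 p.2 := hc.measurable
  obtain ⟨C₀, hC₀⟩ := (isCompact_range hc).bddAbove
  set C : ℝ := max C₀ 0 with hCdef
  have hC0 : 0 ≤ C := le_max_right _ _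
  have hgC : ∀ x y, c x y ≤ C :=
    fun x y => le_trans (hC₀ ⟨(x, y), rfl⟩) (le_max_left _ _)
  have hgabs : ∀ p : X × X, |c p.1 p.2| ≤ C :=
    fun p => abs_le.2 ⟨by linarith [hnonneg p.1 p.2], hgC p.1 p.2⟩
  -- Fubini for each pair
  have hfub : ∀ (γ δ : Measure X) [IsProbabilityMeasure γ] [IsProbabilityMeasure δ],
      ∫ p : X × X, c p.1 p.2 ∂(γ.prod δ) = ∫ x, ∫ y, c x y ∂δ ∂γ := by
    intro γ δ _ _
    have hint : Integrable (fun p : X × X => c p.1 p.2) (γ.prod δ) :=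
      (integrable_const C).mono' hmeas.aestronglyMeasurable (Eventually.of_forall hgabs)
    exact integral_prod _ hint
  set M1 : ℝ := ∫ x, ∫ y, c x y ∂β ∂α with hM1
  set M2 : ℝ := ∫ x, ∫ x', c x x' ∂α ∂α with hM2
  set M3 : ℝ := ∫ y, ∫ y', c y y' ∂β ∂β with hM3
  set T : ℝ := M1 - (1/2) * (M2 + M3) with hT
  -- eventually, sinkhornE is a real number within δ of T
  have hkey : ∀ ε : ℝ, C < ε → sinkhornE c ε α β = ((sinkhornE c ε α β).toReal : EReal) ∧
      |(sinkhornE c ε α β).toReal - T| ≤ C^2/(2*ε) := by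
    intro ε hε
    have key : ∀ (γ δ : Measure X) [IsProbabilityMeasure γ] [IsProbabilityMeasure δ],
        otE c ε γ δ = ((otE c ε γ δ).toReal : EReal) ∧
        (∫ x, ∫ y, c x y ∂δ ∂γ) - C^2/(2*ε) ≤ (otE c ε γ δ).toReal ∧
        (otE c ε γ δ).toReal ≤ ∫ x, ∫ y, c x y ∂δ ∂γ := by
      intro γ δ _ _
      have hub := otE_le_prod c ε γ δ
      have hlb := otE_ge c hmeas hC0 hgC (fun x y => hnonneg x y) γ δ hε
      rw [hfub γ δ] at hub hlb
      have hne_top : otE c ε γ δ ≠ ⊤ := (hub.trans_lt (EReal.coe_lt_top _)).ne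
      have hne_bot : otE c ε γ δ ≠ ⊥ := ((EReal.bot_lt_coe _).trans_le hlb).ne'
      have hcoe : ((otE c ε γ δ).toReal : EReal) = otE c ε γ δ :=
        EReal.coe_toReal hne_top hne_bot
      refine ⟨hcoe.symm, ?_, ?_⟩
      · rw [← hcoe] at hlb; exact_mod_cast hlb
      · rw [← hcoe] at hub; exact_mod_cast hub
    obtain ⟨e1, l1, u1⟩ := key α β
    obtain ⟨e2, l2, u2⟩ := key α α
    obtain ⟨e3, l3, u3⟩ := key β β
    set r1 := (otE c ε α β).toReal
    set r2 := (otE c ε α α).toReal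
    set r3 := (otE c ε β β).toReal
    have hs : sinkhornE c ε α β = ((r1 - (1/2 : ℝ) * (r2 + r3) : ℝ) : EReal) := by
      rw [sinkhornE, e1, e2, e3]
      norm_cast
    have hε0 : 0 < ε := lt_of_le_of_lt hC0 hε
    have hδ0 : 0 ≤ C^2/(2*ε) := by positivity
    constructor
    · rw [hs, EReal.toReal_coe]
    · rw [hs, EReal.toReal_coe, hT, hM1, hM2, hM3]
      rw [abs_le]
      constructor <;> nlinarith [l1, u1, l2, u2, l3, u3]
  -- conclude
  have hF : Tendsto (fun ε : ℝ => (sinkhornE c ε α β).toReal) atTop (nhds T) := by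
    have hδ : Tendsto (fun ε : ℝ => C^2/(2*ε)) atTop (nhds 0) := by
      have h1 : Tendsto (fun ε : ℝ => (C^2/2) * ε⁻¹) atTop (nhds ((C^2/2) * 0)) :=
        tendsto_inv_atTop_zero.const_mul _
      rw [mul_zero] at h1
      refine h1.congr fun ε => ?_
      field_simp
    have hlow : Tendsto (fun ε : ℝ => T - C^2/(2*ε)) atTop (nhds T) := by
      have h2 := (tendsto_const_nhds (α := ℝ) (f := atTop) (x := T)).sub hδ
      simpa using h2
    have hup : Tendsto (fun ε : ℝ => T + C^2/(2*ε)) atTop (nhds T) := by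
      have h2 := (tendsto_const_nhds (α := ℝ) (f := atTop) (x := T)).add hδ
      simpa using h2
    apply tendsto_of_tendsto_of_tendsto_of_le_of_le' hlow hup
    · filter_upwards [eventually_gt_atTop C] with ε hε
      have := (hkey ε hε).2
      rw [abs_le] at this
      linarith [this.1]
    · filter_upwards [eventually_gt_atTop C] with ε hε
      have := (hkey ε hε).2
      rw [abs_le] at this
      linarith [this.2]
  have htends : Tendsto (fun ε : ℝ => sinkhornE c ε α β) atTop (nhds (T : EReal)) := by
    refine Tendsto.congr' ?_ (EReal.tendsto_coe.2 hF)
    filter_upwards [eventually_gt_atTop C] with ε hε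
    exact ((hkey ε hε).1).symm
  exact htends
end

section
/- Let Γ and Σ be D × D real symmetric matrices such that Γ is positive semidefinite with nontrivial kernel (at least one zero eigenvalue), Σ is positive semidefinite, and eᵀΓe ≤ eᵀΣe for every e ∈ ℝ^D. Then ‖Γ‖_F² ≤ ‖Σ‖_F² − λ_min(Σ)², where ‖·‖_F denotes the Frobenius norm and λ_min(Σ) the smallest eigenvalue of Σ. -/
open Matrix


/-- The smallest eigenvalue of a symmetric matrix, as the infimum of its Rayleigh
quotient over unit vectors. -/
noncomputable def lamMin {D : ℕ} (M : Matrix (Fin D) (Fin D) ℝ) : ℝ :=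
  sInf {r : ℝ | ∃ e : Fin D → ℝ, (∑ i, (e i) ^ 2) = 1 ∧ r = ∑ i, ∑ j, e i * M i j * e j}

lemma quad_eq_dot {D : ℕ} (M : Matrix (Fin D) (Fin D) ℝ) (e : Fin D → ℝ) :
    (∑ i, ∑ j, e i * M i j * e j) = e ⬝ᵥ M.mulVec e := by
  simp [dotProduct, Matrix.mulVec, Finset.mul_sum, mul_assoc]

open scoped MatrixOrder in
/-- trace of product of two real psd matrices is nonneg, entrywise form. -/
lemma trace_prod_nonneg {D : ℕ} (A B : Matrix (Fin D) (Fin D) ℝ)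
    (hA : A.PosSemidef) (hB : B.PosSemidef) :
    0 ≤ ∑ i, ∑ j, A i j * B i j := by
  have hAs : (CFC.sqrt A).PosSemidef := (CFC.sqrt_nonneg A).posSemidef
  have hBs : (CFC.sqrt B).PosSemidef := (CFC.sqrt_nonneg B).posSemidef
  set P := CFC.sqrt A with hP
  set Q := CFC.sqrt B with hQ
  have hPP : P * P = A := CFC.sqrt_mul_sqrt_self A hA.nonneg
  have hQQ : Q * Q = B := CFC.sqrt_mul_sqrt_self B hB.nonneg
  have hPh : Pᵀ = P := by
    have := hAs.1; rwa [Matrix.IsHermitian, Matrix.conjTranspose_eq_transpose_of_trivial] at this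
  have hQh : Qᵀ = Q := by
    have := hBs.1; rwa [Matrix.IsHermitian, Matrix.conjTranspose_eq_transpose_of_trivial] at this
  have hBsymm : Bᵀ = B := by rw [← hQQ, Matrix.transpose_mul, hQh]
  have h1 : ∑ i, ∑ j, A i j * B i j = Matrix.trace (A * B) := by
    rw [Matrix.trace]
    refine Finset.sum_congr rfl fun i _ => ?_
    simp only [Matrix.diag, Matrix.mul_apply]
    refine Finset.sum_congr rfl fun j _ => ?_
    have hB' : B j i = B i j := by
      simpa using congrFun (congrFun hBsymm i) j
    rw [hB']
  rw [h1, ← hPP, ← hQQ]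
  have h2 : P * P * (Q * Q) = P * (P * Q * Q) := by
    simp only [Matrix.mul_assoc]
  rw [h2, Matrix.trace_mul_comm P (P * Q * Q)]
  have h3 : P * Q * Q * P = (P * Q) * (P * Q)ᵀ := by
    rw [Matrix.transpose_mul, hPh, hQh]
    simp only [Matrix.mul_assoc]
  rw [h3, Matrix.trace]
  apply Finset.sum_nonneg
  intro i _
  simp only [Matrix.diag, Matrix.mul_apply, Matrix.transpose_apply]
  exact Finset.sum_nonneg fun j _ => mul_self_nonneg _

/-- if `Γ` is positive semidefinite with a nontrivial kernel, `S` is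
positive semidefinite, and the quadratic form of `Γ` is dominated by that of `S`,
then `‖Γ‖_F² ≤ ‖S‖_F² − λ_min(S)²`. -/
theorem frobenius_bound_of_dominated_psd
    {D : ℕ} (Γ S : Matrix (Fin D) (Fin D) ℝ)
    (hΓsymm : Γ.IsSymm) (hSsymm : S.IsSymm)
    (hΓpsd : Γ.PosSemidef) (hSpsd : S.PosSemidef)
    (hker : ∃ e : Fin D → ℝ, e ≠ 0 ∧ Γ.mulVec e = 0)
    (hdom : ∀ e : Fin D → ℝ,
      (∑ i, ∑ j, e i * Γ i j * e j) ≤ ∑ i, ∑ j, e i * S i j * e j) :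
    (∑ i, ∑ j, (Γ i j) ^ 2) ≤ (∑ i, ∑ j, (S i j) ^ 2) - (lamMin S) ^ 2 := by
  classical
  set Δ : Matrix (Fin D) (Fin D) ℝ := S - Γ with hΔ
  have hΔentry : ∀ i j, S i j = Γ i j + Δ i j := by
    intro i j; simp [hΔ]
  -- Δ is PSD
  have hΔpsd : Δ.PosSemidef := by
    refine .of_dotProduct_mulVec_nonneg ?_ ?_
    · exact hSpsd.1.sub hΓpsd.1
    · intro x
      have h := hdom x
      rw [quad_eq_dot, quad_eq_dot] at h
      simp only [hΔ, Matrix.sub_mulVec, dotProduct_sub, star_trivial]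
      simpa using sub_nonneg.mpr h
  -- a unit vector in the kernel of Γ
  obtain ⟨e, he0, heker⟩ := hker
  have hn2pos : 0 < ∑ i, (e i) ^ 2 := by
    rcases Function.ne_iff.mp he0 with ⟨i, hi⟩
    exact Finset.sum_pos' (fun j _ => sq_nonneg _)
      ⟨i, Finset.mem_univ i, lt_of_le_of_ne (sq_nonneg _) (Ne.symm (pow_ne_zero 2 hi))⟩
  set c : ℝ := Real.sqrt (∑ i, (e i) ^ 2) with hc
  have hcpos : 0 < c := Real.sqrt_pos.mpr hn2pos
  set u : Fin D → ℝ := fun i => e i / c with hu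
  have hu1 : (∑ i, (u i) ^ 2) = 1 := by
    simp only [hu, div_pow, ← Finset.sum_div]
    rw [hc, Real.sq_sqrt hn2pos.le, div_self hn2pos.ne']
  have hΓu : Γ.mulVec u = 0 := by
    have : u = c⁻¹ • e := by
      funext i; simp [hu, div_eq_inv_mul]
    rw [this, Matrix.mulVec_smul, heker, smul_zero]
  have hqΓu : (∑ i, ∑ j, u i * Γ i j * u j) = 0 := by
    rw [quad_eq_dot, hΓu, dotProduct_zero]
  -- membership and bounds for lamMin
  set Rset : Set ℝ :=
    {r : ℝ | ∃ e : Fin D → ℝ, (∑ i, (e i) ^ 2) = 1 ∧ r = ∑ i, ∑ j, e i * S i j * e j}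
    with hRset
  have hmem : (∑ i, ∑ j, u i * S i j * u j) ∈ Rset := ⟨u, hu1, rfl⟩
  have hlb : ∀ r ∈ Rset, (0:ℝ) ≤ r := by
    rintro r ⟨v, -, rfl⟩
    rw [quad_eq_dot]
    simpa using hSpsd.dotProduct_mulVec_nonneg v
  have hbdd : BddBelow Rset := ⟨0, hlb⟩
  have hlamdef : lamMin S = sInf Rset := rfl
  have hlam_nonneg : 0 ≤ lamMin S := hlamdef ▸ le_csInf ⟨_, hmem⟩ hlb
  have hlam_le : lamMin S ≤ ∑ i, ∑ j, u i * S i j * u j := hlamdef ▸ csInf_le hbdd hmem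
  -- the S-quadratic form of u equals the Δ-quadratic form of u
  have hsplit : (∑ i, ∑ j, u i * S i j * u j)
      = (∑ i, ∑ j, u i * Γ i j * u j) + ∑ i, ∑ j, u i * Δ i j * u j := by
    rw [← Finset.sum_add_distrib]
    refine Finset.sum_congr rfl fun i _ => ?_
    rw [← Finset.sum_add_distrib]
    refine Finset.sum_congr rfl fun j _ => ?_
    rw [hΔentry i j]; ring
  have hlam_le' : lamMin S ≤ ∑ i, ∑ j, u i * Δ i j * u j := by
    rw [hsplit, hqΓu, zero_add] at hlam_le; exact hlam_le
  -- Cauchy-Schwarz: (uᵀΔu)² ≤ ‖Δ‖_F²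
  have hCS : (∑ i, ∑ j, u i * Δ i j * u j) ^ 2 ≤ ∑ i, ∑ j, (Δ i j) ^ 2 := by
    have h := Finset.sum_mul_sq_le_sq_mul_sq Finset.univ
      (fun p : Fin D × Fin D => u p.1 * u p.2) (fun p : Fin D × Fin D => Δ p.1 p.2)
    have h1 : (∑ p : Fin D × Fin D, (u p.1 * u p.2) * Δ p.1 p.2)
        = ∑ i, ∑ j, u i * Δ i j * u j := by
      rw [Fintype.sum_prod_type]
      exact Finset.sum_congr rfl fun i _ => Finset.sum_congr rfl fun j _ => by ring
    have h2 : (∑ p : Fin D × Fin D, (u p.1 * u p.2) ^ 2) = 1 := by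
      rw [Fintype.sum_prod_type]
      simp_rw [mul_pow, ← Finset.mul_sum, ← Finset.sum_mul, hu1, mul_one]
    have h3 : (∑ p : Fin D × Fin D, (Δ p.1 p.2) ^ 2) = ∑ i, ∑ j, (Δ i j) ^ 2 := by
      rw [Fintype.sum_prod_type]
    rw [h1, h2, h3, one_mul] at h
    exact h
  have hlam_sq : (lamMin S) ^ 2 ≤ ∑ i, ∑ j, (Δ i j) ^ 2 :=
    le_trans (pow_le_pow_left₀ hlam_nonneg hlam_le' 2) hCS
  -- Frobenius expansion
  have hexp : (∑ i, ∑ j, (S i j) ^ 2)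
      = (∑ i, ∑ j, (Γ i j) ^ 2) + (2 * ∑ i, ∑ j, Γ i j * Δ i j + ∑ i, ∑ j, (Δ i j) ^ 2) := by
    rw [Finset.mul_sum, ← Finset.sum_add_distrib, ← Finset.sum_add_distrib]
    refine Finset.sum_congr rfl fun i _ => ?_
    rw [Finset.mul_sum, ← Finset.sum_add_distrib, ← Finset.sum_add_distrib]
    refine Finset.sum_congr rfl fun j _ => ?_
    rw [hΔentry i j]; ring
  have htr : 0 ≤ ∑ i, ∑ j, Γ i j * Δ i j := trace_prod_nonneg Γ Δ hΓpsd hΔpsd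
  linarith
end

section
/- Let α be a compactly supported centered Borel probability measure on ℝ^D, β a compactly supported centered Borel probability measure on ℝ^E, and π, π̃ ∈ Π(α,β). Define G_{π̃}(x,y) = 2·∫ (‖x−x'‖² − ‖y−y'‖²)² dπ̃(x',y') and, for a coupling σ, the correlation matrix Γ_σ = ∫ x yᵀ dσ(x,y) ∈ ℝ^{D×E} (entrywise integral). Then ∫ G_{π̃}(x,y) dπ(x,y) = 2·C(α,β) − 16·⟨Γ_π, Γ_{π̃}⟩_F − 4·∫ ‖x‖²‖y‖² dπ(x,y) − 4·∫ ‖x‖²‖y‖² dπ̃(x,y), where ⟨·,·⟩_F is the Frobenius inner product. -/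
open MeasureTheory

/-- A continuous function is integrable w.r.t. a finite measure that vanishes outside
a compact set. -/
lemma gw_integ_helper {Z F : Type*} [MeasurableSpace Z] [TopologicalSpace Z] [T2Space Z]
    [OpensMeasurableSpace Z] [SecondCountableTopology Z] [NormedAddCommGroup F]
    {μ : Measure Z} [IsFiniteMeasure μ] {K : Set Z} (hK : IsCompact K) (hμK : μ Kᶜ = 0)
    (f : Z → F) (hf : Continuous f) : Integrable f μ := by
  obtain ⟨C, hC⟩ := hK.exists_bound_of_continuousOn hf.continuousOn
  refine (integrable_const C).mono' hf.aestronglyMeasurable ?_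
  have hae : ∀ᵐ z ∂μ, z ∈ K := by rw [ae_iff]; exact hμK
  filter_upwards [hae] with z hz using hC z hz

/-- Expansion of the squared norm of a difference in Euclidean space. -/
lemma gw_norm_sq_expand {n : ℕ} (x y : EuclideanSpace ℝ (Fin n)) :
    ‖x - y‖ ^ 2 = ‖x‖ ^ 2 + ‖y‖ ^ 2 - 2 * ∑ i, x i * y i := by
  rw [norm_sub_sq_real]
  simp [PiLp.inner_apply, RCLike.inner_apply]
  rw [show (∑ i, y i * x i) = ∑ i, x i * y i from Finset.sum_congr rfl fun i _ => mul_comm _ _]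
  ring

set_option maxHeartbeats 2000000 in
/-- the pairing of the GW-loss gradient at `π̃` against a coupling `π`
decomposes through the marginal constant, the Frobenius pairing of correlation
matrices, and mixed second moments. -/
theorem gw_gradient_pairing_decomposition {D E : ℕ}
    (α : Measure (EuclideanSpace ℝ (Fin D))) (β : Measure (EuclideanSpace ℝ (Fin E)))
    [IsProbabilityMeasure α] [IsProbabilityMeasure β]
    (KX : Set (EuclideanSpace ℝ (Fin D))) (KY : Set (EuclideanSpace ℝ (Fin E)))
    (hKX : IsCompact KX) (hKY : IsCompact KY) (hαK : α KXᶜ = 0) (hβK : β KYᶜ = 0)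
    (hαcentered : ∫ x, x ∂α = 0) (hβcentered : ∫ y, y ∂β = 0)
    (π πt : Measure (EuclideanSpace ℝ (Fin D) × EuclideanSpace ℝ (Fin E)))
    (hπ1 : π.map Prod.fst = α) (hπ2 : π.map Prod.snd = β)
    (hπt1 : πt.map Prod.fst = α) (hπt2 : πt.map Prod.snd = β) :
    ∫ p, (2 * ∫ q, (‖p.1 - q.1‖ ^ 2 - ‖p.2 - q.2‖ ^ 2) ^ 2 ∂πt) ∂π =
      2 * ((∫ x, ∫ x', ‖x - x'‖ ^ 4 ∂α ∂α) + (∫ y, ∫ y', ‖y - y'‖ ^ 4 ∂β ∂β)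
          - 4 * (∫ x, ‖x‖ ^ 2 ∂α) * (∫ y, ‖y‖ ^ 2 ∂β))
        - 16 * (∑ i, ∑ j, (∫ p, p.1 i * p.2 j ∂π) * (∫ q, q.1 i * q.2 j ∂πt))
        - 4 * (∫ p, ‖p.1‖ ^ 2 * ‖p.2‖ ^ 2 ∂π)
        - 4 * (∫ q, ‖q.1‖ ^ 2 * ‖q.2‖ ^ 2 ∂πt) := by
  have hKXm : MeasurableSet KXᶜ := hKX.isClosed.measurableSet.compl
  have hKYm : MeasurableSet KYᶜ := hKY.isClosed.measurableSet.compl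
  -- π and πt are probability measures
  have hprob : ∀ σ : Measure (EuclideanSpace ℝ (Fin D) × EuclideanSpace ℝ (Fin E)),
      σ.map Prod.fst = α → IsProbabilityMeasure σ := by
    intro σ hσ
    constructor
    have h := congrArg (fun μ : Measure (EuclideanSpace ℝ (Fin D)) => μ Set.univ) hσ
    simp only [Measure.map_apply measurable_fst MeasurableSet.univ, Set.preimage_univ,
      measure_univ] at h
    exact h
  haveI hπprob := hprob π hπ1
  haveI hπtprob := hprob πt hπt1
  -- π and πt vanish outside KX ×ˢ KY
  have hnull : ∀ σ : Measure (EuclideanSpace ℝ (Fin D) × EuclideanSpace ℝ (Fin E)),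
      σ.map Prod.fst = α → σ.map Prod.snd = β → σ (KX ×ˢ KY)ᶜ = 0 := by
    intro σ h1 h2
    have hs : (KX ×ˢ KY)ᶜ ⊆ (Prod.fst ⁻¹' KXᶜ) ∪ (Prod.snd ⁻¹' KYᶜ) := by
      intro p hp
      simp only [Set.mem_compl_iff, Set.mem_prod, not_and_or] at hp
      simpa using hp
    refine measure_mono_null hs (le_antisymm ?_ zero_le)
    calc σ ((Prod.fst ⁻¹' KXᶜ) ∪ (Prod.snd ⁻¹' KYᶜ))
        ≤ σ (Prod.fst ⁻¹' KXᶜ) + σ (Prod.snd ⁻¹' KYᶜ) := measure_union_le _ _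
      _ = 0 := by
          rw [← Measure.map_apply measurable_fst hKXm, ← Measure.map_apply measurable_snd hKYm,
            h1, h2, hαK, hβK, add_zero]
  have hπnull := hnull π hπ1 hπ2
  have hπtnull := hnull πt hπt1 hπt2
  -- integrability helpers
  have hintπ : ∀ f : EuclideanSpace ℝ (Fin D) × EuclideanSpace ℝ (Fin E) → ℝ,
      Continuous f → Integrable f π := fun f hf => gw_integ_helper (hKX.prod hKY) hπnull f hf
  have hintπt : ∀ f : EuclideanSpace ℝ (Fin D) × EuclideanSpace ℝ (Fin E) → ℝ,
      Continuous f → Integrable f πt := fun f hf => gw_integ_helper (hKX.prod hKY) hπtnull f hf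
  -- pushing integrals to the marginals
  have hmap1 : ∀ (σ : Measure (EuclideanSpace ℝ (Fin D) × EuclideanSpace ℝ (Fin E)))
      (h1 : σ.map Prod.fst = α) (g : EuclideanSpace ℝ (Fin D) → ℝ),
      AEStronglyMeasurable g α → ∫ p, g p.1 ∂σ = ∫ x, g x ∂α := by
    intro σ h1 g hg
    rw [← h1, integral_map measurable_fst.aemeasurable (by rwa [h1])]
  have hmap2 : ∀ (σ : Measure (EuclideanSpace ℝ (Fin D) × EuclideanSpace ℝ (Fin E)))
      (h2 : σ.map Prod.snd = β) (g : EuclideanSpace ℝ (Fin E) → ℝ),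
      AEStronglyMeasurable g β → ∫ p, g p.2 ∂σ = ∫ y, g y ∂β := by
    intro σ h2 g hg
    rw [← h2, integral_map measurable_snd.aemeasurable (by rwa [h2])]
  -- coordinate means vanish
  have hmα : ∀ i, ∫ x, x i ∂α = 0 := by
    intro i
    have hInt : Integrable (fun x : EuclideanSpace ℝ (Fin D) => x) α :=
      gw_integ_helper hKX hαK _ continuous_id
    have h := (EuclideanSpace.proj (𝕜 := ℝ) i).integral_comp_comm hInt
    simpa [hαcentered] using h
  have hmβ : ∀ j, ∫ y, y j ∂β = 0 := by
    intro j
    have hInt : Integrable (fun y : EuclideanSpace ℝ (Fin E) => y) β :=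
      gw_integ_helper hKY hβK _ continuous_id
    have h := (EuclideanSpace.proj (𝕜 := ℝ) j).integral_comp_comm hInt
    simpa [hβcentered] using h
  -- continuity of coordinate projections
  have hc1 : ∀ i, Continuous fun p : EuclideanSpace ℝ (Fin D) × EuclideanSpace ℝ (Fin E) =>
      p.1 i := fun i => by fun_prop
  have hc2 : ∀ j, Continuous fun p : EuclideanSpace ℝ (Fin D) × EuclideanSpace ℝ (Fin E) =>
      p.2 j := fun j => by fun_prop
  -- the inner integral, computed for every p
  have hinner : ∀ p : EuclideanSpace ℝ (Fin D) × EuclideanSpace ℝ (Fin E),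
      (∫ q, (‖p.1 - q.1‖ ^ 2 - ‖p.2 - q.2‖ ^ 2) ^ 2 ∂πt) =
        (∫ x', ‖p.1 - x'‖ ^ 4 ∂α) + (∫ y', ‖p.2 - y'‖ ^ 4 ∂β)
        - 2 * (‖p.1‖ ^ 2 * ‖p.2‖ ^ 2 + ‖p.1‖ ^ 2 * (∫ y, ‖y‖ ^ 2 ∂β)
            + ‖p.2‖ ^ 2 * (∫ x, ‖x‖ ^ 2 ∂α) + (∫ q, ‖q.1‖ ^ 2 * ‖q.2‖ ^ 2 ∂πt)
            - 2 * (∑ j, p.2 j * (∫ q, ‖q.1‖ ^ 2 * q.2 j ∂πt))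
            - 2 * (∑ i, p.1 i * (∫ q, ‖q.2‖ ^ 2 * q.1 i ∂πt))
            + 4 * (∑ i, ∑ j, (p.1 i * p.2 j) * (∫ q, q.1 i * q.2 j ∂πt))) := by
    intro p
    have i1 : Integrable (fun q : EuclideanSpace ℝ (Fin D) × EuclideanSpace ℝ (Fin E) =>
        ‖p.1 - q.1‖ ^ 4) πt := hintπt _ (by fun_prop)
    have i2 : Integrable (fun q : EuclideanSpace ℝ (Fin D) × EuclideanSpace ℝ (Fin E) =>
        ‖p.2 - q.2‖ ^ 4) πt := hintπt _ (by fun_prop)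
    have i3 : Integrable (fun q : EuclideanSpace ℝ (Fin D) × EuclideanSpace ℝ (Fin E) =>
        ‖p.1 - q.1‖ ^ 2 * ‖p.2 - q.2‖ ^ 2) πt := hintπt _ (by fun_prop)
    have hcross : (∫ q, ‖p.1 - q.1‖ ^ 2 * ‖p.2 - q.2‖ ^ 2 ∂πt) =
        ‖p.1‖ ^ 2 * ‖p.2‖ ^ 2 + ‖p.1‖ ^ 2 * (∫ y, ‖y‖ ^ 2 ∂β)
        + ‖p.2‖ ^ 2 * (∫ x, ‖x‖ ^ 2 ∂α) + (∫ q, ‖q.1‖ ^ 2 * ‖q.2‖ ^ 2 ∂πt)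
        - 2 * (∑ j, p.2 j * (∫ q, ‖q.1‖ ^ 2 * q.2 j ∂πt))
        - 2 * (∑ i, p.1 i * (∫ q, ‖q.2‖ ^ 2 * q.1 i ∂πt))
        + 4 * (∑ i, ∑ j, (p.1 i * p.2 j) * (∫ q, q.1 i * q.2 j ∂πt)) := by
      -- integrability of each elementary piece
      have a1 : Integrable (fun _ : EuclideanSpace ℝ (Fin D) × EuclideanSpace ℝ (Fin E) =>
          ‖p.1‖ ^ 2 * ‖p.2‖ ^ 2) πt := integrable_const _
      have a2 : Integrable (fun q : EuclideanSpace ℝ (Fin D) × EuclideanSpace ℝ (Fin E) =>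
          ‖p.1‖ ^ 2 * ‖q.2‖ ^ 2) πt := hintπt _ (by fun_prop)
      have a3 : Integrable (fun q : EuclideanSpace ℝ (Fin D) × EuclideanSpace ℝ (Fin E) =>
          ‖p.2‖ ^ 2 * ‖q.1‖ ^ 2) πt := hintπt _ (by fun_prop)
      have a4 : Integrable (fun q : EuclideanSpace ℝ (Fin D) × EuclideanSpace ℝ (Fin E) =>
          ‖q.1‖ ^ 2 * ‖q.2‖ ^ 2) πt := hintπt _ (by fun_prop)
      have a5 : Integrable (fun q : EuclideanSpace ℝ (Fin D) × EuclideanSpace ℝ (Fin E) =>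
          ∑ j, (‖p.1‖ ^ 2 * p.2 j) * q.2 j) πt :=
        hintπt _ (continuous_finset_sum _ fun j _ => (continuous_const.mul (hc2 j)))
      have a6 : Integrable (fun q : EuclideanSpace ℝ (Fin D) × EuclideanSpace ℝ (Fin E) =>
          ∑ j, p.2 j * (‖q.1‖ ^ 2 * q.2 j)) πt :=
        hintπt _ (continuous_finset_sum _ fun j _ =>
          (continuous_const.mul ((by fun_prop : Continuous fun q :
            EuclideanSpace ℝ (Fin D) × EuclideanSpace ℝ (Fin E) => ‖q.1‖ ^ 2).mul (hc2 j))))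
      have a7 : Integrable (fun q : EuclideanSpace ℝ (Fin D) × EuclideanSpace ℝ (Fin E) =>
          ∑ i, (‖p.2‖ ^ 2 * p.1 i) * q.1 i) πt :=
        hintπt _ (continuous_finset_sum _ fun i _ => (continuous_const.mul (hc1 i)))
      have a8 : Integrable (fun q : EuclideanSpace ℝ (Fin D) × EuclideanSpace ℝ (Fin E) =>
          ∑ i, p.1 i * (‖q.2‖ ^ 2 * q.1 i)) πt :=
        hintπt _ (continuous_finset_sum _ fun i _ =>
          (continuous_const.mul ((by fun_prop : Continuous fun q :
            EuclideanSpace ℝ (Fin D) × EuclideanSpace ℝ (Fin E) => ‖q.2‖ ^ 2).mul (hc1 i))))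
      have a9 : Integrable (fun q : EuclideanSpace ℝ (Fin D) × EuclideanSpace ℝ (Fin E) =>
          ∑ i, ∑ j, (p.1 i * p.2 j) * (q.1 i * q.2 j)) πt :=
        hintπt _ (continuous_finset_sum _ fun i _ => continuous_finset_sum _ fun j _ =>
          (continuous_const.mul ((hc1 i).mul (hc2 j))))
      have m5 : Integrable (fun q : EuclideanSpace ℝ (Fin D) × EuclideanSpace ℝ (Fin E) =>
          2 * ∑ j, (‖p.1‖ ^ 2 * p.2 j) * q.2 j) πt := a5.const_mul 2
      have m6 : Integrable (fun q : EuclideanSpace ℝ (Fin D) × EuclideanSpace ℝ (Fin E) =>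
          2 * ∑ j, p.2 j * (‖q.1‖ ^ 2 * q.2 j)) πt := a6.const_mul 2
      have m7 : Integrable (fun q : EuclideanSpace ℝ (Fin D) × EuclideanSpace ℝ (Fin E) =>
          2 * ∑ i, (‖p.2‖ ^ 2 * p.1 i) * q.1 i) πt := a7.const_mul 2
      have m8 : Integrable (fun q : EuclideanSpace ℝ (Fin D) × EuclideanSpace ℝ (Fin E) =>
          2 * ∑ i, p.1 i * (‖q.2‖ ^ 2 * q.1 i)) πt := a8.const_mul 2
      have m9 : Integrable (fun q : EuclideanSpace ℝ (Fin D) × EuclideanSpace ℝ (Fin E) =>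
          4 * ∑ i, ∑ j, (p.1 i * p.2 j) * (q.1 i * q.2 j)) πt := a9.const_mul 4
      have L2 : Integrable (fun q : EuclideanSpace ℝ (Fin D) × EuclideanSpace ℝ (Fin E) =>
          ‖p.1‖ ^ 2 * ‖p.2‖ ^ 2 + ‖p.1‖ ^ 2 * ‖q.2‖ ^ 2) πt := a1.add a2
      have L3 : Integrable (fun q : EuclideanSpace ℝ (Fin D) × EuclideanSpace ℝ (Fin E) =>
          ‖p.1‖ ^ 2 * ‖p.2‖ ^ 2 + ‖p.1‖ ^ 2 * ‖q.2‖ ^ 2 + ‖p.2‖ ^ 2 * ‖q.1‖ ^ 2) πt := L2.add a3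
      have L4 : Integrable (fun q : EuclideanSpace ℝ (Fin D) × EuclideanSpace ℝ (Fin E) =>
          ‖p.1‖ ^ 2 * ‖p.2‖ ^ 2 + ‖p.1‖ ^ 2 * ‖q.2‖ ^ 2 + ‖p.2‖ ^ 2 * ‖q.1‖ ^ 2
          + ‖q.1‖ ^ 2 * ‖q.2‖ ^ 2) πt := L3.add a4
      have L5 : Integrable (fun q : EuclideanSpace ℝ (Fin D) × EuclideanSpace ℝ (Fin E) =>
          ‖p.1‖ ^ 2 * ‖p.2‖ ^ 2 + ‖p.1‖ ^ 2 * ‖q.2‖ ^ 2 + ‖p.2‖ ^ 2 * ‖q.1‖ ^ 2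
          + ‖q.1‖ ^ 2 * ‖q.2‖ ^ 2 - 2 * ∑ j, (‖p.1‖ ^ 2 * p.2 j) * q.2 j) πt := L4.sub m5
      have L6 : Integrable (fun q : EuclideanSpace ℝ (Fin D) × EuclideanSpace ℝ (Fin E) =>
          ‖p.1‖ ^ 2 * ‖p.2‖ ^ 2 + ‖p.1‖ ^ 2 * ‖q.2‖ ^ 2 + ‖p.2‖ ^ 2 * ‖q.1‖ ^ 2
          + ‖q.1‖ ^ 2 * ‖q.2‖ ^ 2 - 2 * ∑ j, (‖p.1‖ ^ 2 * p.2 j) * q.2 j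
          - 2 * ∑ j, p.2 j * (‖q.1‖ ^ 2 * q.2 j)) πt := L5.sub m6
      have L7 : Integrable (fun q : EuclideanSpace ℝ (Fin D) × EuclideanSpace ℝ (Fin E) =>
          ‖p.1‖ ^ 2 * ‖p.2‖ ^ 2 + ‖p.1‖ ^ 2 * ‖q.2‖ ^ 2 + ‖p.2‖ ^ 2 * ‖q.1‖ ^ 2
          + ‖q.1‖ ^ 2 * ‖q.2‖ ^ 2 - 2 * ∑ j, (‖p.1‖ ^ 2 * p.2 j) * q.2 j
          - 2 * ∑ j, p.2 j * (‖q.1‖ ^ 2 * q.2 j)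
          - 2 * ∑ i, (‖p.2‖ ^ 2 * p.1 i) * q.1 i) πt := L6.sub m7
      have L8 : Integrable (fun q : EuclideanSpace ℝ (Fin D) × EuclideanSpace ℝ (Fin E) =>
          ‖p.1‖ ^ 2 * ‖p.2‖ ^ 2 + ‖p.1‖ ^ 2 * ‖q.2‖ ^ 2 + ‖p.2‖ ^ 2 * ‖q.1‖ ^ 2
          + ‖q.1‖ ^ 2 * ‖q.2‖ ^ 2 - 2 * ∑ j, (‖p.1‖ ^ 2 * p.2 j) * q.2 j
          - 2 * ∑ j, p.2 j * (‖q.1‖ ^ 2 * q.2 j)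
          - 2 * ∑ i, (‖p.2‖ ^ 2 * p.1 i) * q.1 i
          - 2 * ∑ i, p.1 i * (‖q.2‖ ^ 2 * q.1 i)) πt := L7.sub m8
      calc (∫ q, ‖p.1 - q.1‖ ^ 2 * ‖p.2 - q.2‖ ^ 2 ∂πt)
          = ∫ q, (‖p.1‖ ^ 2 * ‖p.2‖ ^ 2 + ‖p.1‖ ^ 2 * ‖q.2‖ ^ 2 + ‖p.2‖ ^ 2 * ‖q.1‖ ^ 2
              + ‖q.1‖ ^ 2 * ‖q.2‖ ^ 2
              - 2 * (∑ j, (‖p.1‖ ^ 2 * p.2 j) * q.2 j)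
              - 2 * (∑ j, p.2 j * (‖q.1‖ ^ 2 * q.2 j))
              - 2 * (∑ i, (‖p.2‖ ^ 2 * p.1 i) * q.1 i)
              - 2 * (∑ i, p.1 i * (‖q.2‖ ^ 2 * q.1 i))
              + 4 * (∑ i, ∑ j, (p.1 i * p.2 j) * (q.1 i * q.2 j))) ∂πt := by
            apply integral_congr_ae
            filter_upwards with q
            rw [gw_norm_sq_expand p.1 q.1, gw_norm_sq_expand p.2 q.2]
            have e5 : ∑ j, (‖p.1‖ ^ 2 * p.2 j) * q.2 j
                = ‖p.1‖ ^ 2 * ∑ j, p.2 j * q.2 j := by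
              rw [Finset.mul_sum]; exact Finset.sum_congr rfl fun j _ => by ring
            have e6 : ∑ j, p.2 j * (‖q.1‖ ^ 2 * q.2 j)
                = ‖q.1‖ ^ 2 * ∑ j, p.2 j * q.2 j := by
              rw [Finset.mul_sum]; exact Finset.sum_congr rfl fun j _ => by ring
            have e7 : ∑ i, (‖p.2‖ ^ 2 * p.1 i) * q.1 i
                = ‖p.2‖ ^ 2 * ∑ i, p.1 i * q.1 i := by
              rw [Finset.mul_sum]; exact Finset.sum_congr rfl fun i _ => by ring
            have e8 : ∑ i, p.1 i * (‖q.2‖ ^ 2 * q.1 i)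
                = ‖q.2‖ ^ 2 * ∑ i, p.1 i * q.1 i := by
              rw [Finset.mul_sum]; exact Finset.sum_congr rfl fun i _ => by ring
            have e9 : ∑ i, ∑ j, (p.1 i * p.2 j) * (q.1 i * q.2 j)
                = (∑ i, p.1 i * q.1 i) * (∑ j, p.2 j * q.2 j) := by
              rw [Finset.sum_mul_sum]
              exact Finset.sum_congr rfl fun i _ => Finset.sum_congr rfl fun j _ => by ring
            rw [e5, e6, e7, e8, e9]
            ring
        _ = ‖p.1‖ ^ 2 * ‖p.2‖ ^ 2 + ‖p.1‖ ^ 2 * (∫ y, ‖y‖ ^ 2 ∂β)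
              + ‖p.2‖ ^ 2 * (∫ x, ‖x‖ ^ 2 ∂α) + (∫ q, ‖q.1‖ ^ 2 * ‖q.2‖ ^ 2 ∂πt)
              - 2 * (∑ j, p.2 j * (∫ q, ‖q.1‖ ^ 2 * q.2 j ∂πt))
              - 2 * (∑ i, p.1 i * (∫ q, ‖q.2‖ ^ 2 * q.1 i ∂πt))
              + 4 * (∑ i, ∑ j, (p.1 i * p.2 j) * (∫ q, q.1 i * q.2 j ∂πt)) := by
            rw [integral_add L8 m9, integral_sub L7 m8,
              integral_sub L6 m7, integral_sub L5 m6,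
              integral_sub L4 m5, integral_add L3 a4, integral_add L2 a3,
              integral_add a1 a2]
            have h1 : ∫ _q : EuclideanSpace ℝ (Fin D) × EuclideanSpace ℝ (Fin E),
                ‖p.1‖ ^ 2 * ‖p.2‖ ^ 2 ∂πt = ‖p.1‖ ^ 2 * ‖p.2‖ ^ 2 := by
              simp
            have h2 : ∫ q, ‖p.1‖ ^ 2 * ‖q.2‖ ^ 2 ∂πt = ‖p.1‖ ^ 2 * (∫ y, ‖y‖ ^ 2 ∂β) := by
              rw [integral_const_mul, hmap2 πt hπt2 (fun y => ‖y‖ ^ 2)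
                (Continuous.aestronglyMeasurable (by fun_prop))]
            have h3 : ∫ q, ‖p.2‖ ^ 2 * ‖q.1‖ ^ 2 ∂πt = ‖p.2‖ ^ 2 * (∫ x, ‖x‖ ^ 2 ∂α) := by
              rw [integral_const_mul, hmap1 πt hπt1 (fun x => ‖x‖ ^ 2)
                (Continuous.aestronglyMeasurable (by fun_prop))]
            have h5 : ∫ q, (∑ j, (‖p.1‖ ^ 2 * p.2 j) * q.2 j) ∂πt = 0 := by
              rw [integral_finset_sum _ (fun j _ => hintπt _ (continuous_const.fun_mul (hc2 j)))]
              refine Finset.sum_eq_zero fun j _ => ?_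
              rw [integral_const_mul, hmap2 πt hπt2 (fun y => y j)
                (Continuous.aestronglyMeasurable (by fun_prop)), hmβ j, mul_zero]
            have h6 : ∫ q, (∑ j, p.2 j * (‖q.1‖ ^ 2 * q.2 j)) ∂πt
                = ∑ j, p.2 j * (∫ q, ‖q.1‖ ^ 2 * q.2 j ∂πt) := by
              rw [integral_finset_sum _ (fun j _ => hintπt _ (continuous_const.fun_mul
                ((by fun_prop : Continuous fun q : EuclideanSpace ℝ (Fin D) ×
                  EuclideanSpace ℝ (Fin E) => ‖q.1‖ ^ 2).fun_mul (hc2 j))))]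
              exact Finset.sum_congr rfl fun j _ => integral_const_mul _ _
            have h7 : ∫ q, (∑ i, (‖p.2‖ ^ 2 * p.1 i) * q.1 i) ∂πt = 0 := by
              rw [integral_finset_sum _ (fun i _ => hintπt _ (continuous_const.fun_mul (hc1 i)))]
              refine Finset.sum_eq_zero fun i _ => ?_
              rw [integral_const_mul, hmap1 πt hπt1 (fun x => x i)
                (Continuous.aestronglyMeasurable (by fun_prop)), hmα i, mul_zero]
            have h8 : ∫ q, (∑ i, p.1 i * (‖q.2‖ ^ 2 * q.1 i)) ∂πt
                = ∑ i, p.1 i * (∫ q, ‖q.2‖ ^ 2 * q.1 i ∂πt) := by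
              rw [integral_finset_sum _ (fun i _ => hintπt _ (continuous_const.fun_mul
                ((by fun_prop : Continuous fun q : EuclideanSpace ℝ (Fin D) ×
                  EuclideanSpace ℝ (Fin E) => ‖q.2‖ ^ 2).fun_mul (hc1 i))))]
              exact Finset.sum_congr rfl fun i _ => integral_const_mul _ _
            have h9 : ∫ q, (∑ i, ∑ j, (p.1 i * p.2 j) * (q.1 i * q.2 j)) ∂πt
                = ∑ i, ∑ j, (p.1 i * p.2 j) * (∫ q, q.1 i * q.2 j ∂πt) := by
              rw [integral_finset_sum _ (fun i _ => hintπt _ (continuous_finset_sum _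
                fun j _ => continuous_const.fun_mul ((hc1 i).fun_mul (hc2 j))))]
              refine Finset.sum_congr rfl fun i _ => ?_
              rw [integral_finset_sum _ (fun j _ => hintπt _
                (continuous_const.fun_mul ((hc1 i).fun_mul (hc2 j))))]
              exact Finset.sum_congr rfl fun j _ => integral_const_mul _ _
            rw [h1, h2, h3, integral_const_mul, integral_const_mul, integral_const_mul,
              integral_const_mul, integral_const_mul, h5, h6, h7, h8, h9]
            ring
    calc (∫ q, (‖p.1 - q.1‖ ^ 2 - ‖p.2 - q.2‖ ^ 2) ^ 2 ∂πt)
        = ∫ q, (‖p.1 - q.1‖ ^ 4 + ‖p.2 - q.2‖ ^ 4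
            - 2 * (‖p.1 - q.1‖ ^ 2 * ‖p.2 - q.2‖ ^ 2)) ∂πt := by
          apply integral_congr_ae
          filter_upwards with q
          ring
      _ = (∫ q, ‖p.1 - q.1‖ ^ 4 ∂πt) + (∫ q, ‖p.2 - q.2‖ ^ 4 ∂πt)
          - 2 * ∫ q, ‖p.1 - q.1‖ ^ 2 * ‖p.2 - q.2‖ ^ 2 ∂πt := by
          have i12 : Integrable (fun q : EuclideanSpace ℝ (Fin D) × EuclideanSpace ℝ (Fin E) =>
              ‖p.1 - q.1‖ ^ 4 + ‖p.2 - q.2‖ ^ 4) πt := i1.add i2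
          have i3' : Integrable (fun q : EuclideanSpace ℝ (Fin D) × EuclideanSpace ℝ (Fin E) =>
              2 * (‖p.1 - q.1‖ ^ 2 * ‖p.2 - q.2‖ ^ 2)) πt := i3.const_mul 2
          rw [integral_sub i12 i3', integral_add i1 i2, integral_const_mul]
      _ = (∫ x', ‖p.1 - x'‖ ^ 4 ∂α) + (∫ y', ‖p.2 - y'‖ ^ 4 ∂β)
          - 2 * (‖p.1‖ ^ 2 * ‖p.2‖ ^ 2 + ‖p.1‖ ^ 2 * (∫ y, ‖y‖ ^ 2 ∂β)
            + ‖p.2‖ ^ 2 * (∫ x, ‖x‖ ^ 2 ∂α) + (∫ q, ‖q.1‖ ^ 2 * ‖q.2‖ ^ 2 ∂πt)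
            - 2 * (∑ j, p.2 j * (∫ q, ‖q.1‖ ^ 2 * q.2 j ∂πt))
            - 2 * (∑ i, p.1 i * (∫ q, ‖q.2‖ ^ 2 * q.1 i ∂πt))
            + 4 * (∑ i, ∑ j, (p.1 i * p.2 j) * (∫ q, q.1 i * q.2 j ∂πt))) := by
          rw [hcross, hmap1 πt hπt1 (fun x' => ‖p.1 - x'‖ ^ 4)
            (Continuous.aestronglyMeasurable (by fun_prop)),
            hmap2 πt hπt2 (fun y' => ‖p.2 - y'‖ ^ 4)
            (Continuous.aestronglyMeasurable (by fun_prop))]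
  -- measurability and boundedness of the parametric quartic integrals
  have g1_sm : StronglyMeasurable fun x : EuclideanSpace ℝ (Fin D) =>
      ∫ x', ‖x - x'‖ ^ 4 ∂α := by
    apply StronglyMeasurable.integral_prod_right'
      (f := fun z : EuclideanSpace ℝ (Fin D) × EuclideanSpace ℝ (Fin D) => ‖z.1 - z.2‖ ^ 4)
    exact Continuous.stronglyMeasurable (by fun_prop)
  have g2_sm : StronglyMeasurable fun y : EuclideanSpace ℝ (Fin E) =>
      ∫ y', ‖y - y'‖ ^ 4 ∂β := by
    apply StronglyMeasurable.integral_prod_right'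
      (f := fun z : EuclideanSpace ℝ (Fin E) × EuclideanSpace ℝ (Fin E) => ‖z.1 - z.2‖ ^ 4)
    exact Continuous.stronglyMeasurable (by fun_prop)
  have hαae : ∀ᵐ x ∂α, x ∈ KX := by rw [ae_iff]; exact hαK
  have hβae : ∀ᵐ y ∂β, y ∈ KY := by rw [ae_iff]; exact hβK
  have hπae : ∀ᵐ p ∂π, p ∈ KX ×ˢ KY := by rw [ae_iff]; exact hπnull
  obtain ⟨C1, hC1⟩ := (hKX.prod hKX).exists_bound_of_continuousOn
    (Continuous.continuousOn (by fun_prop :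
      Continuous fun z : EuclideanSpace ℝ (Fin D) × EuclideanSpace ℝ (Fin D) => ‖z.1 - z.2‖ ^ 4))
  obtain ⟨C2, hC2⟩ := (hKY.prod hKY).exists_bound_of_continuousOn
    (Continuous.continuousOn (by fun_prop :
      Continuous fun z : EuclideanSpace ℝ (Fin E) × EuclideanSpace ℝ (Fin E) => ‖z.1 - z.2‖ ^ 4))
  have ig1 : Integrable (fun p : EuclideanSpace ℝ (Fin D) × EuclideanSpace ℝ (Fin E) =>
      ∫ x', ‖p.1 - x'‖ ^ 4 ∂α) π := by
    refine (integrable_const C1).mono'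
      ((g1_sm.comp_measurable measurable_fst).aestronglyMeasurable) ?_
    filter_upwards [hπae] with p hp
    have hb : ∀ᵐ x' ∂α, ‖‖p.1 - x'‖ ^ 4‖ ≤ C1 := by
      filter_upwards [hαae] with x' hx' using hC1 (p.1, x') ⟨hp.1, hx'⟩
    have := norm_integral_le_of_norm_le_const hb
    simpa using this
  have ig2 : Integrable (fun p : EuclideanSpace ℝ (Fin D) × EuclideanSpace ℝ (Fin E) =>
      ∫ y', ‖p.2 - y'‖ ^ 4 ∂β) π := by
    refine (integrable_const C2).mono'
      ((g2_sm.comp_measurable measurable_snd).aestronglyMeasurable) ?_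
    filter_upwards [hπae] with p hp
    have hb : ∀ᵐ y' ∂β, ‖‖p.2 - y'‖ ^ 4‖ ≤ C2 := by
      filter_upwards [hβae] with y' hy' using hC2 (p.2, y') ⟨hp.2, hy'⟩
    have := norm_integral_le_of_norm_le_const hb
    simpa using this
  -- integrability of the pieces of the outer integrand
  have b1 : Integrable (fun p : EuclideanSpace ℝ (Fin D) × EuclideanSpace ℝ (Fin E) =>
      ‖p.1‖ ^ 2 * ‖p.2‖ ^ 2) π := hintπ _ (by fun_prop)
  have b2 : Integrable (fun p : EuclideanSpace ℝ (Fin D) × EuclideanSpace ℝ (Fin E) =>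
      ‖p.1‖ ^ 2 * (∫ y, ‖y‖ ^ 2 ∂β)) π := hintπ _ (by fun_prop)
  have b3 : Integrable (fun p : EuclideanSpace ℝ (Fin D) × EuclideanSpace ℝ (Fin E) =>
      ‖p.2‖ ^ 2 * (∫ x, ‖x‖ ^ 2 ∂α)) π := hintπ _ (by fun_prop)
  have b4 : Integrable (fun _ : EuclideanSpace ℝ (Fin D) × EuclideanSpace ℝ (Fin E) =>
      ∫ q, ‖q.1‖ ^ 2 * ‖q.2‖ ^ 2 ∂πt) π := integrable_const _
  have b6 : Integrable (fun p : EuclideanSpace ℝ (Fin D) × EuclideanSpace ℝ (Fin E) =>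
      ∑ j, p.2 j * (∫ q, ‖q.1‖ ^ 2 * q.2 j ∂πt)) π :=
    hintπ _ (continuous_finset_sum _ fun j _ => (hc2 j).mul continuous_const)
  have b8 : Integrable (fun p : EuclideanSpace ℝ (Fin D) × EuclideanSpace ℝ (Fin E) =>
      ∑ i, p.1 i * (∫ q, ‖q.2‖ ^ 2 * q.1 i ∂πt)) π :=
    hintπ _ (continuous_finset_sum _ fun i _ => (hc1 i).mul continuous_const)
  have b9 : Integrable (fun p : EuclideanSpace ℝ (Fin D) × EuclideanSpace ℝ (Fin E) =>
      ∑ i, ∑ j, (p.1 i * p.2 j) * (∫ q, q.1 i * q.2 j ∂πt)) π :=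
    hintπ _ (continuous_finset_sum _ fun i _ => continuous_finset_sum _ fun j _ =>
      ((hc1 i).mul (hc2 j)).mul continuous_const)
  have n6 : Integrable (fun p : EuclideanSpace ℝ (Fin D) × EuclideanSpace ℝ (Fin E) =>
      2 * ∑ j, p.2 j * (∫ q, ‖q.1‖ ^ 2 * q.2 j ∂πt)) π := b6.const_mul 2
  have n8 : Integrable (fun p : EuclideanSpace ℝ (Fin D) × EuclideanSpace ℝ (Fin E) =>
      2 * ∑ i, p.1 i * (∫ q, ‖q.2‖ ^ 2 * q.1 i ∂πt)) π := b8.const_mul 2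
  have n9 : Integrable (fun p : EuclideanSpace ℝ (Fin D) × EuclideanSpace ℝ (Fin E) =>
      4 * ∑ i, ∑ j, (p.1 i * p.2 j) * (∫ q, q.1 i * q.2 j ∂πt)) π := b9.const_mul 4
  have M2 : Integrable (fun p : EuclideanSpace ℝ (Fin D) × EuclideanSpace ℝ (Fin E) =>
      ‖p.1‖ ^ 2 * ‖p.2‖ ^ 2 + ‖p.1‖ ^ 2 * (∫ y, ‖y‖ ^ 2 ∂β)) π := b1.add b2
  have M3 : Integrable (fun p : EuclideanSpace ℝ (Fin D) × EuclideanSpace ℝ (Fin E) =>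
      ‖p.1‖ ^ 2 * ‖p.2‖ ^ 2 + ‖p.1‖ ^ 2 * (∫ y, ‖y‖ ^ 2 ∂β)
      + ‖p.2‖ ^ 2 * (∫ x, ‖x‖ ^ 2 ∂α)) π := M2.add b3
  have M4 : Integrable (fun p : EuclideanSpace ℝ (Fin D) × EuclideanSpace ℝ (Fin E) =>
      ‖p.1‖ ^ 2 * ‖p.2‖ ^ 2 + ‖p.1‖ ^ 2 * (∫ y, ‖y‖ ^ 2 ∂β)
      + ‖p.2‖ ^ 2 * (∫ x, ‖x‖ ^ 2 ∂α) + (∫ q, ‖q.1‖ ^ 2 * ‖q.2‖ ^ 2 ∂πt)) π := M3.add b4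
  have M6 : Integrable (fun p : EuclideanSpace ℝ (Fin D) × EuclideanSpace ℝ (Fin E) =>
      ‖p.1‖ ^ 2 * ‖p.2‖ ^ 2 + ‖p.1‖ ^ 2 * (∫ y, ‖y‖ ^ 2 ∂β)
      + ‖p.2‖ ^ 2 * (∫ x, ‖x‖ ^ 2 ∂α) + (∫ q, ‖q.1‖ ^ 2 * ‖q.2‖ ^ 2 ∂πt)
      - 2 * ∑ j, p.2 j * (∫ q, ‖q.1‖ ^ 2 * q.2 j ∂πt)) π := M4.sub n6
  have M8 : Integrable (fun p : EuclideanSpace ℝ (Fin D) × EuclideanSpace ℝ (Fin E) =>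
      ‖p.1‖ ^ 2 * ‖p.2‖ ^ 2 + ‖p.1‖ ^ 2 * (∫ y, ‖y‖ ^ 2 ∂β)
      + ‖p.2‖ ^ 2 * (∫ x, ‖x‖ ^ 2 ∂α) + (∫ q, ‖q.1‖ ^ 2 * ‖q.2‖ ^ 2 ∂πt)
      - 2 * ∑ j, p.2 j * (∫ q, ‖q.1‖ ^ 2 * q.2 j ∂πt)
      - 2 * ∑ i, p.1 i * (∫ q, ‖q.2‖ ^ 2 * q.1 i ∂πt)) π := M6.sub n8
  have MR : Integrable (fun p : EuclideanSpace ℝ (Fin D) × EuclideanSpace ℝ (Fin E) =>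
      ‖p.1‖ ^ 2 * ‖p.2‖ ^ 2 + ‖p.1‖ ^ 2 * (∫ y, ‖y‖ ^ 2 ∂β)
      + ‖p.2‖ ^ 2 * (∫ x, ‖x‖ ^ 2 ∂α) + (∫ q, ‖q.1‖ ^ 2 * ‖q.2‖ ^ 2 ∂πt)
      - 2 * ∑ j, p.2 j * (∫ q, ‖q.1‖ ^ 2 * q.2 j ∂πt)
      - 2 * ∑ i, p.1 i * (∫ q, ‖q.2‖ ^ 2 * q.1 i ∂πt)
      + 4 * ∑ i, ∑ j, (p.1 i * p.2 j) * (∫ q, q.1 i * q.2 j ∂πt)) π := M8.add n9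
  have MR2 : Integrable (fun p : EuclideanSpace ℝ (Fin D) × EuclideanSpace ℝ (Fin E) =>
      2 * (‖p.1‖ ^ 2 * ‖p.2‖ ^ 2 + ‖p.1‖ ^ 2 * (∫ y, ‖y‖ ^ 2 ∂β)
      + ‖p.2‖ ^ 2 * (∫ x, ‖x‖ ^ 2 ∂α) + (∫ q, ‖q.1‖ ^ 2 * ‖q.2‖ ^ 2 ∂πt)
      - 2 * ∑ j, p.2 j * (∫ q, ‖q.1‖ ^ 2 * q.2 j ∂πt)
      - 2 * ∑ i, p.1 i * (∫ q, ‖q.2‖ ^ 2 * q.1 i ∂πt)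
      + 4 * ∑ i, ∑ j, (p.1 i * p.2 j) * (∫ q, q.1 i * q.2 j ∂πt))) π := MR.const_mul 2
  have ig12 : Integrable (fun p : EuclideanSpace ℝ (Fin D) × EuclideanSpace ℝ (Fin E) =>
      (∫ x', ‖p.1 - x'‖ ^ 4 ∂α) + (∫ y', ‖p.2 - y'‖ ^ 4 ∂β)) π := ig1.add ig2
  -- computing the integral of the bracket
  have hR : ∫ p, (‖p.1‖ ^ 2 * ‖p.2‖ ^ 2 + ‖p.1‖ ^ 2 * (∫ y, ‖y‖ ^ 2 ∂β)
      + ‖p.2‖ ^ 2 * (∫ x, ‖x‖ ^ 2 ∂α) + (∫ q, ‖q.1‖ ^ 2 * ‖q.2‖ ^ 2 ∂πt)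
      - 2 * ∑ j, p.2 j * (∫ q, ‖q.1‖ ^ 2 * q.2 j ∂πt)
      - 2 * ∑ i, p.1 i * (∫ q, ‖q.2‖ ^ 2 * q.1 i ∂πt)
      + 4 * ∑ i, ∑ j, (p.1 i * p.2 j) * (∫ q, q.1 i * q.2 j ∂πt)) ∂π =
      (∫ p, ‖p.1‖ ^ 2 * ‖p.2‖ ^ 2 ∂π) + 2 * (∫ x, ‖x‖ ^ 2 ∂α) * (∫ y, ‖y‖ ^ 2 ∂β)
      + (∫ q, ‖q.1‖ ^ 2 * ‖q.2‖ ^ 2 ∂πt)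
      + 4 * ∑ i, ∑ j, (∫ p, p.1 i * p.2 j ∂π) * (∫ q, q.1 i * q.2 j ∂πt) := by
    have k2 : ∫ p, ‖p.1‖ ^ 2 * (∫ y, ‖y‖ ^ 2 ∂β) ∂π
        = (∫ x, ‖x‖ ^ 2 ∂α) * (∫ y, ‖y‖ ^ 2 ∂β) := by
      rw [integral_mul_const, hmap1 π hπ1 (fun x => ‖x‖ ^ 2)
        (Continuous.aestronglyMeasurable (by fun_prop))]
    have k3 : ∫ p, ‖p.2‖ ^ 2 * (∫ x, ‖x‖ ^ 2 ∂α) ∂π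
        = (∫ y, ‖y‖ ^ 2 ∂β) * (∫ x, ‖x‖ ^ 2 ∂α) := by
      rw [integral_mul_const, hmap2 π hπ2 (fun y => ‖y‖ ^ 2)
        (Continuous.aestronglyMeasurable (by fun_prop))]
    have k4 : ∫ _p : EuclideanSpace ℝ (Fin D) × EuclideanSpace ℝ (Fin E),
        (∫ q, ‖q.1‖ ^ 2 * ‖q.2‖ ^ 2 ∂πt) ∂π = ∫ q, ‖q.1‖ ^ 2 * ‖q.2‖ ^ 2 ∂πt := by simp
    have k6 : ∫ p, (∑ j, p.2 j * (∫ q, ‖q.1‖ ^ 2 * q.2 j ∂πt)) ∂π = 0 := by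
      rw [integral_finset_sum _ (fun j _ => hintπ _ ((hc2 j).fun_mul continuous_const))]
      refine Finset.sum_eq_zero fun j _ => ?_
      rw [integral_mul_const, hmap2 π hπ2 (fun y => y j)
        (Continuous.aestronglyMeasurable (by fun_prop)), hmβ j, zero_mul]
    have k8 : ∫ p, (∑ i, p.1 i * (∫ q, ‖q.2‖ ^ 2 * q.1 i ∂πt)) ∂π = 0 := by
      rw [integral_finset_sum _ (fun i _ => hintπ _ ((hc1 i).fun_mul continuous_const))]
      refine Finset.sum_eq_zero fun i _ => ?_
      rw [integral_mul_const, hmap1 π hπ1 (fun x => x i)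
        (Continuous.aestronglyMeasurable (by fun_prop)), hmα i, zero_mul]
    have k9 : ∫ p, (∑ i, ∑ j, (p.1 i * p.2 j) * (∫ q, q.1 i * q.2 j ∂πt)) ∂π
        = ∑ i, ∑ j, (∫ p, p.1 i * p.2 j ∂π) * (∫ q, q.1 i * q.2 j ∂πt) := by
      rw [integral_finset_sum _ (fun i _ => hintπ _ (continuous_finset_sum _ fun j _ =>
        ((hc1 i).fun_mul (hc2 j)).fun_mul continuous_const))]
      refine Finset.sum_congr rfl fun i _ => ?_
      rw [integral_finset_sum _ (fun j _ => hintπ _ (((hc1 i).fun_mul (hc2 j)).fun_mul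
        continuous_const))]
      exact Finset.sum_congr rfl fun j _ => integral_mul_const _ _
    rw [integral_add M8 n9, integral_sub M6 n8, integral_sub M4 n6, integral_add M3 b4,
      integral_add M2 b3, integral_add b1 b2, k2, k3, k4, integral_const_mul,
      integral_const_mul, integral_const_mul, k6, k8, k9]
    ring
  calc ∫ p, (2 * ∫ q, (‖p.1 - q.1‖ ^ 2 - ‖p.2 - q.2‖ ^ 2) ^ 2 ∂πt) ∂π
      = 2 * ∫ p, (∫ q, (‖p.1 - q.1‖ ^ 2 - ‖p.2 - q.2‖ ^ 2) ^ 2 ∂πt) ∂π :=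
        integral_const_mul 2 _
    _ = 2 * ∫ p, ((∫ x', ‖p.1 - x'‖ ^ 4 ∂α) + (∫ y', ‖p.2 - y'‖ ^ 4 ∂β)
          - 2 * (‖p.1‖ ^ 2 * ‖p.2‖ ^ 2 + ‖p.1‖ ^ 2 * (∫ y, ‖y‖ ^ 2 ∂β)
            + ‖p.2‖ ^ 2 * (∫ x, ‖x‖ ^ 2 ∂α) + (∫ q, ‖q.1‖ ^ 2 * ‖q.2‖ ^ 2 ∂πt)
            - 2 * (∑ j, p.2 j * (∫ q, ‖q.1‖ ^ 2 * q.2 j ∂πt))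
            - 2 * (∑ i, p.1 i * (∫ q, ‖q.2‖ ^ 2 * q.1 i ∂πt))
            + 4 * (∑ i, ∑ j, (p.1 i * p.2 j) * (∫ q, q.1 i * q.2 j ∂πt)))) ∂π :=
        congrArg (fun t => 2 * t)
          (integral_congr_ae (Filter.Eventually.of_forall hinner))
    _ = 2 * ((∫ p, ((∫ x', ‖p.1 - x'‖ ^ 4 ∂α) + (∫ y', ‖p.2 - y'‖ ^ 4 ∂β)) ∂π)
          - 2 * ∫ p, (‖p.1‖ ^ 2 * ‖p.2‖ ^ 2 + ‖p.1‖ ^ 2 * (∫ y, ‖y‖ ^ 2 ∂β)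
            + ‖p.2‖ ^ 2 * (∫ x, ‖x‖ ^ 2 ∂α) + (∫ q, ‖q.1‖ ^ 2 * ‖q.2‖ ^ 2 ∂πt)
            - 2 * (∑ j, p.2 j * (∫ q, ‖q.1‖ ^ 2 * q.2 j ∂πt))
            - 2 * (∑ i, p.1 i * (∫ q, ‖q.2‖ ^ 2 * q.1 i ∂πt))
            + 4 * (∑ i, ∑ j, (p.1 i * p.2 j) * (∫ q, q.1 i * q.2 j ∂πt))) ∂π) := by
        rw [integral_sub ig12 MR2, integral_const_mul]
    _ = 2 * (((∫ x, ∫ x', ‖x - x'‖ ^ 4 ∂α ∂α) + (∫ y, ∫ y', ‖y - y'‖ ^ 4 ∂β ∂β))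
          - 2 * ((∫ p, ‖p.1‖ ^ 2 * ‖p.2‖ ^ 2 ∂π)
            + 2 * (∫ x, ‖x‖ ^ 2 ∂α) * (∫ y, ‖y‖ ^ 2 ∂β)
            + (∫ q, ‖q.1‖ ^ 2 * ‖q.2‖ ^ 2 ∂πt)
            + 4 * ∑ i, ∑ j, (∫ p, p.1 i * p.2 j ∂π) * (∫ q, q.1 i * q.2 j ∂πt))) := by
        rw [integral_add ig1 ig2, hR,
          hmap1 π hπ1 (fun x => ∫ x', ‖x - x'‖ ^ 4 ∂α) g1_sm.aestronglyMeasurable,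
          hmap2 π hπ2 (fun y => ∫ y', ‖y - y'‖ ^ 4 ∂β) g2_sm.aestronglyMeasurable]
    _ = 2 * ((∫ x, ∫ x', ‖x - x'‖ ^ 4 ∂α ∂α) + (∫ y, ∫ y', ‖y - y'‖ ^ 4 ∂β ∂β)
          - 4 * (∫ x, ‖x‖ ^ 2 ∂α) * (∫ y, ‖y‖ ^ 2 ∂β))
        - 16 * (∑ i, ∑ j, (∫ p, p.1 i * p.2 j ∂π) * (∫ q, q.1 i * q.2 j ∂πt))
        - 4 * (∫ p, ‖p.1‖ ^ 2 * ‖p.2‖ ^ 2 ∂π)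
        - 4 * (∫ q, ‖q.1‖ ^ 2 * ‖q.2‖ ^ 2 ∂πt) := by ring
end
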